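/- arXiv:1108.4662 — 6 statements merged into one kernel-verified Lean document; each statement's English description precedes it below -/
import Mathlib

section
/- Let Q = {q_k}_{k=0}^∞ be any simple set of real polynomials (i.e., deg q_k = k for all k ≥ 0). If a sequence (γ_k)_{k=0}^∞ of real numbers is a Q-multiplier sequence, then it is also a classical multiplier sequence (a multiplier sequence for the standard basis {x^k}). -/
open Polynomial

/-- A real polynomial is *hyperbolic* if all of its complex roots are real
(the zero polynomial and nonzero constants are vacuously hyperbolic). -/
def Hyperbolic (p : Polynomial ℝ) : Prop :=
  ∀ z ∈ (p.map (algebraMap ℝ ℂ)).roots, z.im = 0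

/-- `γ` is a multiplier sequence for the simple set `q`: the linear operator
sending `q k` to `γ k • q k` maps hyperbolic polynomials to hyperbolic
polynomials.  (Since `q` is a simple set, every real polynomial has a unique
expansion `∑ a k • q k`, so this quantification over coefficient families
expresses exactly that property.) -/
def IsMultiplierSeqFor (q : ℕ → Polynomial ℝ) (γ : ℕ → ℝ) : Prop :=
  ∀ (n : ℕ) (a : ℕ → ℝ),
    Hyperbolic (∑ k ∈ Finset.range n, C (a k) * q k) →
    Hyperbolic (∑ k ∈ Finset.range n, C (γ k * a k) * q k)

open Filter


-- basic: hyperbolic of constants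
lemma hyp_C (c : ℝ) : Hyperbolic (C c) := by
  intro z hz
  rw [Polynomial.map_C, roots_C] at hz
  simp at hz

lemma hyp_zero : Hyperbolic 0 := by
  simpa using hyp_C 0

-- scaling lemma
lemma hyp_comp_scale {g : Polynomial ℝ} {t : ℝ} (ht : t ≠ 0) (hg : Hyperbolic g) :
    Hyperbolic (g.comp (C t * X)) := by
  intro z hz
  rw [mem_roots', Polynomial.map_comp] at hz
  obtain ⟨hne, hroot⟩ := hz
  have hgne : g.map (algebraMap ℝ ℂ) ≠ 0 := by
    intro h0
    apply hne
    rw [h0, zero_comp]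
  have : ((t : ℂ) * z) ∈ (g.map (algebraMap ℝ ℂ)).roots := by
    rw [mem_roots']
    refine ⟨hgne, ?_⟩
    have := hroot
    rw [IsRoot, eval_comp] at this
    simpa [IsRoot] using this
  have him := hg _ this
  have : (t : ℂ).im = 0 := by simp
  have : ((t:ℂ) * z).im = t * z.im := by simp
  rw [this] at him
  rcases mul_eq_zero.mp him with h | h
  · exact absurd h ht
  · exact h

-- key induction over multiset of real roots
lemma key_ineq (S : Multiset ℝ) (b : ℝ) :
    ∀ d : ℕ, b ^ (2 * d) * ((S.map fun s => X - C s).prod.coeff d) ^ 2 ≤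
      2 ^ Multiset.card S * (S.map fun s => s ^ 2 + b ^ 2).prod := by
  induction S using Multiset.induction with
  | empty =>
    intro d
    rcases d with _ | d <;> simp [coeff_one]
  | cons s S ih =>
    intro d
    have hprodnn : (0:ℝ) ≤ (S.map fun s => s ^ 2 + b ^ 2).prod := by
      apply Multiset.prod_nonneg
      intro x hx
      obtain ⟨y, _, rfl⟩ := Multiset.mem_map.mp hx
      positivity
    rw [Multiset.map_cons, Multiset.prod_cons, Multiset.map_cons, Multiset.prod_cons,
      Multiset.card_cons]
    have hco : ∀ k : ℕ, ((X - C s) * (S.map fun s => X - C s).prod).coeff k =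
        (X * (S.map fun s => X - C s).prod).coeff k
          - s * ((S.map fun s => X - C s).prod).coeff k := by
      intro k
      rw [sub_mul, coeff_sub, coeff_C_mul]
    set P := (S.map fun s => X - C s).prod with hP
    rcases d with _ | d
    · rw [hco 0]
      have h0 : (X * P).coeff 0 = 0 := by
        rw [mul_coeff_zero, coeff_X_zero, zero_mul]
      rw [h0, zero_sub]
      have := ih 0
      rw [mul_zero, pow_zero, one_mul] at this ⊢
      have h2 : (-(s * P.coeff 0)) ^ 2 = s^2 * (P.coeff 0)^2 := by ring
      rw [h2]
      have hXnn : (0:ℝ) ≤ 2 ^ Multiset.card S * (S.map fun s => s ^ 2 + b ^ 2).prod :=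
        mul_nonneg (by positivity) hprodnn
      calc s^2 * (P.coeff 0)^2 ≤ s^2 * (2 ^ Multiset.card S * (S.map fun s => s ^ 2 + b ^ 2).prod) := by
            apply mul_le_mul_of_nonneg_left this (sq_nonneg s)
        _ ≤ (2*(s^2+b^2)) * (2 ^ Multiset.card S * (S.map fun s => s ^ 2 + b ^ 2).prod) := by
            apply mul_le_mul_of_nonneg_right _ hXnn
            nlinarith [sq_nonneg b]
        _ = 2 ^ (Multiset.card S + 1) * ((s ^ 2 + b ^ 2) * (S.map fun s => s ^ 2 + b ^ 2).prod) := by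
            rw [pow_succ]; ring
    · rw [hco (d+1), coeff_X_mul]
      have h1 := ih d
      have h2 := ih (d+1)
      have hb : b ^ (2 * (d+1)) = b^2 * b^(2*d) := by ring
      have key : (P.coeff d - s * P.coeff (d+1))^2 ≤ 2 * (P.coeff d)^2 + 2 * s^2 * (P.coeff (d+1))^2 := by
        nlinarith [sq_nonneg (P.coeff d + s * P.coeff (d+1))]
      calc b ^ (2*(d+1)) * (P.coeff d - s * P.coeff (d+1))^2
          ≤ b ^ (2*(d+1)) * (2 * (P.coeff d)^2 + 2 * s^2 * (P.coeff (d+1))^2) := by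
            apply mul_le_mul_of_nonneg_left key (by rw [pow_mul]; positivity)
        _ = 2 * b^2 * (b^(2*d) * (P.coeff d)^2) + 2 * s^2 * (b^(2*(d+1)) * (P.coeff (d+1))^2) := by ring
        _ ≤ 2 * b^2 * (2 ^ Multiset.card S * (S.map fun s => s ^ 2 + b ^ 2).prod)
            + 2 * s^2 * (2 ^ Multiset.card S * (S.map fun s => s ^ 2 + b ^ 2).prod) := by
            gcongr <;> first | positivity | exact hprodnn | exact h1 | exact h2
        _ = 2 ^ (Multiset.card S + 1) * ((s ^ 2 + b ^ 2) * (S.map fun s => s ^ 2 + b ^ 2).prod) := by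
            rw [pow_succ]; ring

-- real factorization of a nonzero hyperbolic polynomial
lemma hyp_factor {p : Polynomial ℝ} (hp : p ≠ 0) (hyp : Hyperbolic p) :
    ∃ M : Multiset ℝ, Multiset.card M = p.natDegree ∧
      p = C p.leadingCoeff * (M.map fun s => X - C s).prod := by
  have hsplit : Splits (p.map (algebraMap ℝ ℂ)) := IsAlgClosed.splits _
  have hmapne : p.map (algebraMap ℝ ℂ) ≠ 0 := by
    simpa using hp
  set pc := p.map (algebraMap ℝ ℂ) with hpc
  have heq : pc = C pc.leadingCoeff * (pc.roots.map fun w => X - C w).prod :=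
    hsplit.eq_prod_roots
  refine ⟨pc.roots.map Complex.re, ?_, ?_⟩
  · rw [Multiset.card_map, ← hsplit.natDegree_eq_card_roots, hpc, natDegree_map]
  · apply Polynomial.map_injective (algebraMap ℝ ℂ) (RingHom.injective _)
    rw [Polynomial.map_mul, Polynomial.map_C]
    have hlead : (algebraMap ℝ ℂ) p.leadingCoeff = pc.leadingCoeff := by
      rw [hpc, leadingCoeff, leadingCoeff, natDegree_map, coeff_map]
    rw [hlead]
    have hprod : ((pc.roots.map Complex.re).map fun s => (X:Polynomial ℝ) - C s).prod.map (algebraMap ℝ ℂ)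
        = (pc.roots.map fun w => X - C w).prod := by
      rw [← coe_mapRingHom, ← Multiset.prod_hom _ (mapRingHom (algebraMap ℝ ℂ))]
      rw [Multiset.map_map, Multiset.map_map]
      congr 1
      apply Multiset.map_congr rfl
      intro w hw
      have him : w.im = 0 := hyp w hw
      have : ((w.re : ℝ) : ℂ) = w := by
        apply Complex.ext <;> simp [him]
      simp only [Function.comp_apply, coe_mapRingHom, Polynomial.map_sub, map_X, Polynomial.map_C]
      rw [show (algebraMap ℝ ℂ) w.re = ((w.re : ℝ) : ℂ) from rfl, this]
    rw [hprod, ← heq]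

lemma key_ineq' {f : Polynomial ℝ} (hf : Hyperbolic f) (z : ℂ) (d : ℕ) :
    z.im ^ (2 * d) * ((f.comp (X + C z.re)).coeff d) ^ 2 ≤
      2 ^ f.natDegree * Complex.normSq ((f.map (algebraMap ℝ ℂ)).eval z) := by
  rcases eq_or_ne f 0 with rfl | hf0
  · simp
  obtain ⟨M, hcard, hfac⟩ := hyp_factor hf0 hf
  set a := z.re
  set b := z.im
  set c := f.leadingCoeff with hc
  set S : Multiset ℝ := M.map (fun s => s - a) with hS
  -- the composition
  have hcomp : f.comp (X + C a) = C c * (S.map fun t => X - C t).prod := by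
    conv_lhs => rw [hfac]
    rw [mul_comp, C_comp]
    congr 1
    have : ((M.map fun s => X - C s).prod).comp (X + C a)
        = ((M.map fun s => X - C s).map (eval₂RingHom C (X + C a))).prod := by
      rw [Multiset.prod_hom]
      rfl
    rw [this, hS, Multiset.map_map, Multiset.map_map]
    congr 1
    apply Multiset.map_congr rfl
    intro s _
    simp only [Function.comp_apply, coe_eval₂RingHom]
    show (X - C s).comp (X + C a) = X - C (s - a)
    rw [sub_comp, X_comp, C_comp, C_sub]
    ring
  -- the evaluation
  have hmap : f.map (algebraMap ℝ ℂ) =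
      C ((algebraMap ℝ ℂ) c) * (M.map fun s => X - C ((algebraMap ℝ ℂ) s)).prod := by
    conv_lhs => rw [hfac]
    rw [Polynomial.map_mul, Polynomial.map_C, ← coe_mapRingHom,
      ← Multiset.prod_hom _ (mapRingHom (algebraMap ℝ ℂ)), Multiset.map_map]
    congr 1
    apply congrArg Multiset.prod
    apply Multiset.map_congr rfl
    intro s _
    simp
  have heval : Complex.normSq ((f.map (algebraMap ℝ ℂ)).eval z)
      = c ^ 2 * (S.map fun t => t ^ 2 + b ^ 2).prod := by
    rw [hmap]
    have h1 : ((M.map fun s => X - C ((algebraMap ℝ ℂ) s)).prod).eval z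
        = (M.map fun s => z - (algebraMap ℝ ℂ) s).prod := by
      rw [← coe_evalRingHom, ← Multiset.prod_hom _ (evalRingHom z), Multiset.map_map]
      apply congrArg
      apply Multiset.map_congr rfl
      intro s _
      simp
    have h2 : Complex.normSq ((M.map fun s => z - (algebraMap ℝ ℂ) s).prod)
        = (M.map fun s => Complex.normSq (z - (algebraMap ℝ ℂ) s)).prod := by
      simpa [Multiset.map_map] using
        (Multiset.prod_hom (M.map fun s => z - (algebraMap ℝ ℂ) s) Complex.normSq.toMonoidHom).symm
    rw [eval_mul, eval_C, h1, map_mul, h2, hS, Multiset.map_map]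
    congr 1
    · rw [show (algebraMap ℝ ℂ) c = (c : ℂ) from rfl, Complex.normSq_ofReal]; ring
    · apply congrArg Multiset.prod
      apply Multiset.map_congr rfl
      intro s _
      simp only [Function.comp_apply]
      rw [Complex.normSq_apply]
      simp only [Complex.sub_re, Complex.sub_im]
      rw [show ((algebraMap ℝ ℂ) s).re = s from rfl, show ((algebraMap ℝ ℂ) s).im = 0 from rfl]
      simp only [sub_zero]
      ring
  have hcardS : Multiset.card S = f.natDegree := by rw [hS, Multiset.card_map, hcard]
  have key := key_ineq S b d
  rw [hcardS] at key
  rw [hcomp, coeff_C_mul, heval, mul_pow]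
  calc b ^ (2*d) * (c ^ 2 * ((S.map fun t => X - C t).prod.coeff d) ^ 2)
      = c ^ 2 * (b ^ (2*d) * ((S.map fun t => X - C t).prod.coeff d) ^ 2) := by ring
    _ ≤ c ^ 2 * (2 ^ f.natDegree * (S.map fun t => t ^ 2 + b ^ 2).prod) :=
        mul_le_mul_of_nonneg_left key (sq_nonneg c)
    _ = 2 ^ f.natDegree * (c ^ 2 * (S.map fun t => t ^ 2 + b ^ 2).prod) := by ring

-- coefficient of a composition as a finite sum
lemma comp_coeff_sum {g : Polynomial ℝ} {N : ℕ} (hg : g.natDegree ≤ N) (t : Polynomial ℝ) (d : ℕ) :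
    (g.comp t).coeff d = ∑ k ∈ Finset.range (N+1), g.coeff k * (t ^ k).coeff d := by
  have : g.comp t = ∑ k ∈ Finset.range (N+1), C (g.coeff k) * t ^ k := by
    rw [comp, eval₂_eq_sum_range' C (Nat.lt_succ_of_le hg) t]
  rw [this, finset_sum_coeff]
  apply Finset.sum_congr rfl
  intro k _
  rw [coeff_C_mul]

-- evaluation over ℂ as a finite sum
lemma eval_map_sum {g : Polynomial ℝ} {N : ℕ} (hg : g.natDegree ≤ N) (z : ℂ) :
    (g.map (algebraMap ℝ ℂ)).eval z = ∑ k ∈ Finset.range (N+1), (g.coeff k : ℂ) * z ^ k := by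
  have hdeg : (g.map (algebraMap ℝ ℂ)).natDegree < N + 1 :=
    Nat.lt_succ_of_le (le_trans natDegree_map_le hg)
  rw [eval_eq_sum_range' hdeg]
  apply Finset.sum_congr rfl
  intro k _
  rw [coeff_map]
  rfl

lemma hyp_limit {α : Type*} {l : Filter α} [l.NeBot] {G : α → Polynomial ℝ} {p : Polynomial ℝ}
    {N : ℕ} (hdeg : ∀ᶠ r in l, (G r).natDegree ≤ N) (hpdeg : p.natDegree ≤ N)
    (hhyp : ∀ᶠ r in l, Hyperbolic (G r))
    (hcoeff : ∀ k, Tendsto (fun r => (G r).coeff k) l (nhds (p.coeff k))) :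
    Hyperbolic p := by
  intro z hz
  by_contra him
  rw [mem_roots'] at hz
  obtain ⟨hpm0, hroot⟩ := hz
  have hp0 : p ≠ 0 := fun h => hpm0 (by simp [h])
  set a := z.re
  set b := z.im
  set d := p.natDegree with hd
  -- the limit of the "coefficient" side
  have hA : Tendsto (fun r => ((G r).comp (X + C a)).coeff d) l (nhds p.leadingCoeff) := by
    have hlim : Tendsto (fun r => ∑ k ∈ Finset.range (N+1), (G r).coeff k * ((X + C a) ^ k).coeff d)
        l (nhds (∑ k ∈ Finset.range (N+1), p.coeff k * ((X + C a) ^ k).coeff d)) := by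
      apply tendsto_finset_sum
      intro k _
      exact (hcoeff k).mul_const _
    have heq : (∑ k ∈ Finset.range (N+1), p.coeff k * ((X + C a) ^ k).coeff d)
        = p.leadingCoeff := by
      rw [← comp_coeff_sum hpdeg]
      have h1 : (X + C a).natDegree = 1 := natDegree_X_add_C a
      have hlc : (p.comp (X + C a)).coeff ((p.comp (X + C a)).natDegree) = (p.comp (X + C a)).leadingCoeff := rfl
      have h2 : (p.comp (X + C a)).natDegree = d := by
        rw [natDegree_comp, h1, mul_one]
      rw [h2] at hlc
      rw [hlc, leadingCoeff_comp (by rw [h1]; norm_num)]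
      rw [(monic_X_add_C a).leadingCoeff, one_pow, mul_one]
    rw [← heq]
    apply hlim.congr'
    filter_upwards [hdeg] with r hr
    rw [comp_coeff_sum hr]
  -- the limit of the evaluation side
  have hB : Tendsto (fun r => Complex.normSq (((G r).map (algebraMap ℝ ℂ)).eval z)) l (nhds 0) := by
    have hlim : Tendsto (fun r => ∑ k ∈ Finset.range (N+1), ((G r).coeff k : ℂ) * z ^ k)
        l (nhds (∑ k ∈ Finset.range (N+1), (p.coeff k : ℂ) * z ^ k)) := by
      apply tendsto_finset_sum
      intro k _
      exact ((Complex.continuous_ofReal.tendsto _).comp (hcoeff k)).mul_const _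
    have heq : (∑ k ∈ Finset.range (N+1), (p.coeff k : ℂ) * z ^ k) = 0 := by
      rw [← eval_map_sum hpdeg]
      exact hroot
    rw [heq] at hlim
    have : Tendsto (fun r => (((G r).map (algebraMap ℝ ℂ)).eval z)) l (nhds 0) := by
      apply hlim.congr'
      filter_upwards [hdeg] with r hr
      rw [eval_map_sum hr]
    simpa [Function.comp_def] using (Complex.continuous_normSq.tendsto 0).comp this
  -- combine
  have hineq : ∀ᶠ r in l, b ^ (2 * d) * (((G r).comp (X + C a)).coeff d) ^ 2 ≤
      2 ^ N * Complex.normSq (((G r).map (algebraMap ℝ ℂ)).eval z) := by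
    filter_upwards [hdeg, hhyp] with r hr hyp
    calc b ^ (2 * d) * (((G r).comp (X + C a)).coeff d) ^ 2
        ≤ 2 ^ (G r).natDegree * Complex.normSq (((G r).map (algebraMap ℝ ℂ)).eval z) :=
          key_ineq' hyp z d
      _ ≤ 2 ^ N * Complex.normSq (((G r).map (algebraMap ℝ ℂ)).eval z) := by
          apply mul_le_mul_of_nonneg_right _ (Complex.normSq_nonneg _)
          exact pow_le_pow_right₀ (by norm_num) hr
  have hlhs : Tendsto (fun r => b ^ (2 * d) * (((G r).comp (X + C a)).coeff d) ^ 2) l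
      (nhds (b ^ (2 * d) * p.leadingCoeff ^ 2)) := by
    exact ((hA.pow 2).const_mul _)
  have hrhs : Tendsto (fun r => 2 ^ N * Complex.normSq (((G r).map (algebraMap ℝ ℂ)).eval z)) l
      (nhds 0) := by
    simpa using hB.const_mul ((2:ℝ) ^ N)
  have hfinal : b ^ (2 * d) * p.leadingCoeff ^ 2 ≤ 0 :=
    le_of_tendsto_of_tendsto hlhs hrhs hineq
  have hb2 : 0 < b ^ (2 * d) := by
    rw [pow_mul]
    exact pow_pos (by positivity) d
  have hl2 : 0 < p.leadingCoeff ^ 2 := by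
    have := leadingCoeff_ne_zero.mpr hp0
    positivity
  nlinarith

-- a polynomial of degree ≤ m with m distinct real roots is hyperbolic
lemma hyp_of_roots {g : Polynomial ℝ} {m : ℕ} (hg0 : g ≠ 0) (hdeg : g.natDegree ≤ m)
    (t : Fin m → ℝ) (ht : Function.Injective t) (hroot : ∀ i, g.eval (t i) = 0) :
    Hyperbolic g := by
  have hgm0 : g.map (algebraMap ℝ ℂ) ≠ 0 := by simpa using hg0
  set R := (g.map (algebraMap ℝ ℂ)).roots with hR
  have hcardR : Multiset.card R ≤ m := by
    calc Multiset.card R ≤ (g.map (algebraMap ℝ ℂ)).natDegree := card_roots' _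
      _ ≤ g.natDegree := natDegree_map_le
      _ ≤ m := hdeg
  set S : Multiset ℂ := Multiset.map (fun i => ((t i : ℝ) : ℂ)) Finset.univ.val with hS
  have hSnodup : S.Nodup := by
    apply Multiset.Nodup.map
    · intro i j hij
      exact ht (Complex.ofReal_injective hij)
    · exact Finset.univ.nodup
  have hSsub : S ≤ R := by
    rw [Multiset.le_iff_count]
    intro w
    rcases Nat.eq_zero_or_pos (S.count w) with h0 | hpos
    · simp [h0]
    · have hwS : w ∈ S := Multiset.count_pos.mp hpos
      have h1 : S.count w = 1 := le_antisymm (Multiset.nodup_iff_count_le_one.mp hSnodup w) hpos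
      rw [h1]
      apply Multiset.one_le_count_iff_mem.mpr
      show w ∈ (g.map (algebraMap ℝ ℂ)).roots
      rw [mem_roots hgm0]
      obtain ⟨i, _, rfl⟩ := Multiset.mem_map.mp hwS
      rw [IsRoot, eval_map,
        show ((t i : ℝ) : ℂ) = algebraMap ℝ ℂ (t i) from rfl, eval₂_at_apply, hroot i, map_zero]
  have hScard : Multiset.card S = m := by simp [hS]
  have hSR : S = R := Multiset.eq_of_le_of_card_le hSsub (by omega)
  intro z hz
  have hzS : z ∈ S := by rw [hSR, hR]; exact hz
  obtain ⟨i, _, rfl⟩ := Multiset.mem_map.mp hzS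
  simp

lemma coeff_comp_C_mul_X (p : Polynomial ℝ) (t : ℝ) (j : ℕ) :
    (p.comp (C t * X)).coeff j = p.coeff j * t ^ j := by
  induction p using Polynomial.induction_on' with
  | add p q hp hq => simp [add_comp, coeff_add, hp, hq, add_mul]
  | monomial k a =>
    rw [monomial_comp, mul_pow, ← C_pow, ← mul_assoc, ← C_mul, C_mul_X_pow_eq_monomial]
    simp only [coeff_monomial]
    by_cases hkj : k = j
    · subst hkj; simp
    · simp [hkj]

lemma coeff_G_tendsto (q : ℕ → Polynomial ℝ) (hq : ∀ k, (q k).degree = k) (n : ℕ) (b : ℕ → ℝ)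
    (j : ℕ) :
    Tendsto (fun r : ℝ =>
        ((∑ k ∈ Finset.range n, C (b k * r ^ k / (q k).leadingCoeff) * q k).comp
          (C r⁻¹ * X)).coeff j)
      (nhdsWithin 0 (Set.Ioi 0))
      (nhds ((∑ k ∈ Finset.range n, C (b k) * X ^ k).coeff j)) := by
  have hqnd : ∀ k, (q k).natDegree = k := fun k => natDegree_eq_of_degree_eq_some (hq k)
  have hq0 : ∀ k, q k ≠ 0 := by
    intro k h0
    have := hq k
    rw [h0, degree_zero] at this
    exact absurd this (by simp)
  have hlc : ∀ k, (q k).leadingCoeff ≠ 0 := fun k => leadingCoeff_ne_zero.mpr (hq0 k)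
  have hfun : ∀ r : ℝ, ((∑ k ∈ Finset.range n, C (b k * r ^ k / (q k).leadingCoeff) * q k).comp
      (C r⁻¹ * X)).coeff j
      = ∑ k ∈ Finset.range n, (b k * r ^ k / (q k).leadingCoeff) * (q k).coeff j * (r⁻¹) ^ j := by
    intro r
    rw [coeff_comp_C_mul_X, finset_sum_coeff, Finset.sum_mul]
    apply Finset.sum_congr rfl
    intro k _
    rw [coeff_C_mul]
  simp only [hfun]
  rw [finset_sum_coeff]
  apply tendsto_finset_sum
  intro k _
  rcases lt_trichotomy k j with hkj | rfl | hkj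
  · -- k < j : the coefficient vanishes
    have hcz : (q k).coeff j = 0 := coeff_eq_zero_of_natDegree_lt (by rw [hqnd]; exact hkj)
    have : (C (b k) * X ^ k : Polynomial ℝ).coeff j = 0 := by
      rw [coeff_C_mul, coeff_X_pow, if_neg (by omega), mul_zero]
    rw [this]
    simp only [hcz, mul_zero, zero_mul]
    exact tendsto_const_nhds
  · -- k = j : the constant term
    have hval : (C (b k) * X ^ k : Polynomial ℝ).coeff k = b k := by
      rw [coeff_C_mul, coeff_X_pow, if_pos rfl, mul_one]
    rw [hval]
    have hck : (q k).coeff k = (q k).leadingCoeff := by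
      rw [leadingCoeff, hqnd]
    apply Tendsto.congr' _ tendsto_const_nhds
    filter_upwards [self_mem_nhdsWithin] with r hr
    have hrne : r ≠ 0 := ne_of_gt hr
    rw [hck, inv_pow]
    have hL := hlc k
    have hrk : r ^ k ≠ 0 := pow_ne_zero _ hrne
    field_simp
  · -- k > j : tends to zero
    have : (C (b k) * X ^ k : Polynomial ℝ).coeff j = 0 := by
      rw [coeff_C_mul, coeff_X_pow, if_neg (by omega), mul_zero]
    rw [this]
    have hlim : Tendsto (fun r : ℝ => (b k * (q k).coeff j / (q k).leadingCoeff) * r ^ (k - j))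
        (nhdsWithin 0 (Set.Ioi 0)) (nhds 0) := by
      have h1 : Tendsto (fun r : ℝ => r ^ (k - j)) (nhdsWithin 0 (Set.Ioi 0)) (nhds 0) := by
        have := (continuous_pow (k - j)).tendsto (0:ℝ)
        rw [zero_pow (by omega : k - j ≠ 0)] at this
        exact this.mono_left nhdsWithin_le_nhds
      simpa using h1.const_mul (b k * (q k).coeff j / (q k).leadingCoeff)
    apply Tendsto.congr' _ hlim
    filter_upwards [self_mem_nhdsWithin] with r hr
    have hrne : r ≠ 0 := ne_of_gt hr
    rw [show (r:ℝ)⁻¹ ^ j = (r ^ j)⁻¹ from inv_pow r j, pow_sub₀ r hrne (le_of_lt hkj)]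
    field_simp

lemma natDegree_sum_le' {ι : Type*} (s : Finset ι) (f : ι → Polynomial ℝ) {N : ℕ}
    (h : ∀ i ∈ s, (f i).natDegree ≤ N) : (∑ i ∈ s, f i).natDegree ≤ N := by
  classical
  induction s using Finset.induction with
  | empty => simp
  | insert _ _ hx ih =>
    rw [Finset.sum_insert hx]
    exact le_trans (natDegree_add_le _ _)
      (max_le (h _ (Finset.mem_insert_self _ _)) (ih fun i hi => h i (Finset.mem_insert_of_mem hi)))

lemma exists_interlace {m : ℕ} (ρ : Fin m → ℝ) (hρ : StrictMono ρ) :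
    ∃ u : ℕ → ℝ, (∀ (i : ℕ) (j : Fin m), (j : ℕ) < i → ρ j < u i) ∧
      (∀ (i : ℕ) (j : Fin m), i ≤ (j : ℕ) → u i < ρ j) := by
  refine ⟨fun i => if hi : i < m then
      (if i = 0 then ρ ⟨0, by omega⟩ - 1 else (ρ ⟨i - 1, by omega⟩ + ρ ⟨i, hi⟩) / 2)
    else (if hm : 0 < m then ρ ⟨m - 1, by omega⟩ + 1 else 0),
    ?_, ?_⟩
  · intro i j hji
    dsimp only
    by_cases hi : i < m
    · rw [dif_pos hi]
      have hi0 : i ≠ 0 := by omega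
      rw [if_neg hi0]
      have h1 : ρ j ≤ ρ ⟨i - 1, by omega⟩ := by
        rcases eq_or_lt_of_le (show (j:ℕ) ≤ i - 1 by omega) with he | hl
        · exact le_of_eq (congrArg ρ (Fin.ext he))
        · exact le_of_lt (hρ hl)
      have h2 : ρ (⟨i - 1, by omega⟩ : Fin m) < ρ ⟨i, hi⟩ := hρ (by simp [Fin.lt_def]; omega)
      have := h1.trans_lt h2
      nlinarith [h1, h2]
    · rw [dif_neg hi]
      have hm : 0 < m := by omega
      rw [dif_pos hm]
      have h1 : ρ j ≤ ρ ⟨m - 1, by omega⟩ := by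
        rcases eq_or_lt_of_le (show (j:ℕ) ≤ m - 1 by omega) with he | hl
        · exact le_of_eq (congrArg ρ (Fin.ext he))
        · exact le_of_lt (hρ hl)
      linarith
  · intro i j hij
    dsimp only
    have hi : i < m := lt_of_le_of_lt hij j.isLt
    rw [dif_pos hi]
    by_cases hi0 : i = 0
    · rw [if_pos hi0]
      have : ρ ⟨0, by omega⟩ ≤ ρ j := by
        rcases Nat.eq_zero_or_pos (j : ℕ) with he | hl
        · exact le_of_eq (congrArg ρ (Fin.ext (by simpa using he.symm)))
        · exact le_of_lt (hρ (by simp [Fin.lt_def]; omega))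
      subst hi0
      linarith
    · rw [if_neg hi0]
      have h2 : ρ (⟨i - 1, by omega⟩ : Fin m) < ρ ⟨i, hi⟩ := hρ (by simp [Fin.lt_def]; omega)
      have h3 : ρ (⟨i, hi⟩ : Fin m) ≤ ρ j := by
        rcases eq_or_lt_of_le hij with he | hl
        · exact le_of_eq (congrArg ρ (Fin.ext he))
        · exact le_of_lt (hρ (by simp [Fin.lt_def]; omega))
      nlinarith [h2, h3]

lemma sign_alt {m : ℕ} {ρ : Fin m → ℝ} {c : ℝ} (hc : c ≠ 0) {u : ℕ → ℝ}
    (hu1 : ∀ (i : ℕ) (j : Fin m), (j : ℕ) < i → ρ j < u i)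
    (hu2 : ∀ (i : ℕ) (j : Fin m), i ≤ (j : ℕ) → u i < ρ j) (i : Fin m) :
    eval (u i) (C c * ∏ j, (X - C (ρ j))) * eval (u ((i : ℕ) + 1)) (C c * ∏ j, (X - C (ρ j))) < 0 := by
  rw [eval_mul, eval_C, eval_prod, eval_mul, eval_C, eval_prod]
  simp only [eval_sub, eval_X, eval_C]
  have hre : (c * ∏ j, (u i - ρ j)) * (c * ∏ j, (u ((i:ℕ)+1) - ρ j))
      = c ^ 2 * ∏ j, ((u i - ρ j) * (u ((i:ℕ)+1) - ρ j)) := by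
    rw [Finset.prod_mul_distrib]; ring
  rw [hre]
  have hneg : ∏ j, ((u i - ρ j) * (u ((i:ℕ)+1) - ρ j)) < 0 := by
    rw [← Finset.mul_prod_erase Finset.univ _ (Finset.mem_univ i)]
    apply mul_neg_of_neg_of_pos
    · apply mul_neg_of_neg_of_pos
      · have := hu2 i i (le_refl _); linarith
      · have := hu1 ((i:ℕ)+1) i (by omega); linarith
    · apply Finset.prod_pos
      intro j hj
      have hji : j ≠ i := Finset.ne_of_mem_erase hj
      rcases Nat.lt_or_ge (j : ℕ) (i : ℕ) with hlt | hge
      · have h1 := hu1 i j hlt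
        have h2 := hu1 ((i:ℕ)+1) j (by omega)
        exact mul_pos (by linarith) (by linarith)
      · have hij : (i : ℕ) < (j : ℕ) := by
          rcases Nat.eq_or_lt_of_le hge with he | hl
          · exact absurd (Fin.ext he.symm) hji
          · exact hl
        have h1 := hu2 i j (le_of_lt hij)
        have h2 := hu2 ((i:ℕ)+1) j (by omega)
        exact mul_pos_of_neg_of_neg (by linarith) (by linarith)
  have hc2 : 0 < c ^ 2 := by positivity
  exact mul_neg_of_pos_of_neg hc2 hneg

-- evaluation tendsto from coefficientwise convergence with bounded degree
lemma eval_tendsto {α : Type*} {l : Filter α} {G : α → Polynomial ℝ} {p : Polynomial ℝ} {N : ℕ}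
    (hdeg : ∀ᶠ r in l, (G r).natDegree ≤ N)
    (hpdeg : p.natDegree ≤ N)
    (hcoeff : ∀ k, Tendsto (fun r => (G r).coeff k) l (nhds (p.coeff k))) (x : ℝ) :
    Tendsto (fun r => eval x (G r)) l (nhds (eval x p)) := by
  have hsum : ∀ (g : Polynomial ℝ), g.natDegree ≤ N →
      eval x g = ∑ k ∈ Finset.range (N+1), g.coeff k * x ^ k := by
    intro g hg
    rw [eval_eq_sum_range' (Nat.lt_succ_of_le hg)]
  have hlim : Tendsto (fun r => ∑ k ∈ Finset.range (N+1), (G r).coeff k * x ^ k) l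
      (nhds (∑ k ∈ Finset.range (N+1), p.coeff k * x ^ k)) :=
    tendsto_finset_sum _ fun k _ => (hcoeff k).mul_const _
  rw [← hsum p hpdeg] at hlim
  apply hlim.congr'
  filter_upwards [hdeg] with r hr
  rw [hsum _ hr]

lemma step1 (q : ℕ → Polynomial ℝ) (hq : ∀ k, (q k).degree = k) (γ : ℕ → ℝ)
    (h : IsMultiplierSeqFor q γ) {n m : ℕ} (hmn : m < n) {c : ℝ} (hc : c ≠ 0)
    (ρ : Fin m → ℝ) (hρ : StrictMono ρ) :
    Hyperbolic (∑ k ∈ Finset.range n,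
      C (γ k * (C c * ∏ i, (X - C (ρ i))).coeff k) * X ^ k) := by
  classical
  set p : Polynomial ℝ := C c * ∏ i, (X - C (ρ i)) with hp
  have hmonic : (∏ i : Fin m, (X - C (ρ i))).Monic :=
    monic_prod_of_monic _ _ fun i _ => monic_X_sub_C _
  have hpne : p ≠ 0 := mul_ne_zero (by simpa using hc) hmonic.ne_zero
  have hprodnd : (∏ i : Fin m, (X - C (ρ i))).natDegree = m := by
    rw [natDegree_prod _ _ fun i _ => X_sub_C_ne_zero (ρ i)]
    simp [natDegree_X_sub_C]
  have hpdeg : p.natDegree = m := by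
    rw [hp, natDegree_C_mul hc, hprodnd]
  set a : ℕ → ℝ := fun k => p.coeff k with ha
  have ha0 : ∀ k, m < k → a k = 0 := by
    intro k hk
    exact coeff_eq_zero_of_natDegree_lt (by omega)
  have hpsum : ∑ k ∈ Finset.range n, C (a k) * X ^ k = p := by
    conv_rhs => rw [p.as_sum_range' n (by omega)]
    exact Finset.sum_congr rfl fun k _ => C_mul_X_pow_eq_monomial
  set lc : ℕ → ℝ := fun k => (q k).leadingCoeff with hlc
  set F : ℝ → Polynomial ℝ :=
    fun r => ∑ k ∈ Finset.range n, C (a k * r ^ k / lc k) * q k with hF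
  set G : ℝ → Polynomial ℝ := fun r => (F r).comp (C r⁻¹ * X) with hG
  set l : Filter ℝ := nhdsWithin 0 (Set.Ioi 0) with hl
  have hqnd : ∀ k, (q k).natDegree = k := fun k => natDegree_eq_of_degree_eq_some (hq k)
  have hGdegm : ∀ r, (G r).natDegree ≤ m := by
    intro r
    have hFdeg : (F r).natDegree ≤ m := by
      apply natDegree_sum_le'
      intro k _
      by_cases hkm : k ≤ m
      · exact le_trans (natDegree_C_mul_le _ _) (by rw [hqnd]; exact hkm)
      · rw [ha0 k (by omega)]
        simp
    calc (G r).natDegree = (F r).natDegree * (C r⁻¹ * X).natDegree := natDegree_comp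
      _ ≤ m * 1 := by
          apply Nat.mul_le_mul hFdeg
          exact le_trans (natDegree_C_mul_le _ _) (le_of_eq natDegree_X)
      _ = m := mul_one m
  have hGcoeff : ∀ j, Tendsto (fun r => (G r).coeff j) l (nhds (p.coeff j)) := by
    intro j
    have := coeff_G_tendsto q hq n a j
    rw [hpsum] at this
    exact this
  obtain ⟨u, hu1, hu2⟩ := exists_interlace ρ hρ
  have hGne : ∀ᶠ r in l, (G r).coeff m ≠ 0 := by
    apply (hGcoeff m).eventually_ne
    rw [show p.coeff m = p.leadingCoeff by rw [leadingCoeff, hpdeg]]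
    exact leadingCoeff_ne_zero.mpr hpne
  have hGsign : ∀ᶠ r in l, ∀ i : Fin m,
      eval (u i) (G r) * eval (u ((i : ℕ) + 1)) (G r) < 0 := by
    rw [eventually_all]
    intro i
    have h1 : Tendsto (fun r => eval (u i) (G r) * eval (u ((i : ℕ) + 1)) (G r)) l
        (nhds (eval (u i) p * eval (u ((i : ℕ) + 1)) p)) :=
      (eval_tendsto (Eventually.of_forall hGdegm) (le_of_eq hpdeg) hGcoeff (u i)).mul
        (eval_tendsto (Eventually.of_forall hGdegm) (le_of_eq hpdeg) hGcoeff (u ((i : ℕ) + 1)))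
    have h2 : eval (u i) p * eval (u ((i : ℕ) + 1)) p < 0 := sign_alt hc hu1 hu2 i
    exact h1.eventually (eventually_iff.mpr (Iio_mem_nhds h2))
  have hGhyp : ∀ᶠ r in l, Hyperbolic (G r) := by
    filter_upwards [hGne, hGsign] with r hne hsign
    have hroots : ∀ i : Fin m, ∃ t ∈ Set.Ioo (u i) (u ((i : ℕ) + 1)), eval t (G r) = 0 := by
      intro i
      have hlt : u i ≤ u ((i : ℕ) + 1) :=
        le_of_lt (lt_trans (hu2 i i le_rfl) (hu1 _ i (by omega)))
      have hcont : ContinuousOn (fun x => eval x (G r)) (Set.Icc (u i) (u ((i : ℕ) + 1))) :=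
        (Polynomial.continuous (G r)).continuousOn
      rcases mul_neg_iff.mp (hsign i) with ⟨hpos, hneg⟩ | ⟨hneg, hpos⟩
      · obtain ⟨t, htIoo, hteq⟩ := intermediate_value_Ioo' hlt hcont ⟨hneg, hpos⟩
        exact ⟨t, htIoo, hteq⟩
      · obtain ⟨t, htIoo, hteq⟩ := intermediate_value_Ioo hlt hcont ⟨hneg, hpos⟩
        exact ⟨t, htIoo, hteq⟩
    choose t ht hteval using hroots
    have hGr0 : G r ≠ 0 := by
      intro h0
      rw [h0] at hne
      simp at hne
    have htmono : StrictMono t := by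
      intro i i' hii'
      have hstep : u ((i : ℕ) + 1) ≤ u (i' : ℕ) := by
        rcases Nat.eq_or_lt_of_le (show (i : ℕ) + 1 ≤ (i' : ℕ) from hii') with he | hl
        · rw [he]
        · have hi1m : (i : ℕ) + 1 < m := lt_of_lt_of_le hl (Nat.le_of_lt_succ (Nat.lt_succ_of_lt i'.isLt))
          have h1 : u ((i : ℕ) + 1) < ρ ⟨(i : ℕ) + 1, hi1m⟩ := hu2 _ _ (le_refl _)
          have h2 : ρ (⟨(i : ℕ) + 1, hi1m⟩ : Fin m) < u (i' : ℕ) := hu1 _ _ hl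
          linarith
      calc t i < u ((i : ℕ) + 1) := (ht i).2
        _ ≤ u (i' : ℕ) := hstep
        _ < t i' := (ht i').1
    exact hyp_of_roots hGr0 (hGdegm r) t htmono.injective hteval
  -- transfer hyperbolicity back to F r
  have hFhyp : ∀ᶠ r in l, Hyperbolic (F r) := by
    filter_upwards [hGhyp, self_mem_nhdsWithin] with r hGh hr
    have hrne : (r : ℝ) ≠ 0 := ne_of_gt hr
    have hid : (G r).comp (C r * X) = F r := by
      rw [hG]
      show ((F r).comp (C r⁻¹ * X)).comp (C r * X) = F r
      rw [comp_assoc, mul_comp, C_comp, X_comp, ← mul_assoc, ← C_mul,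
        inv_mul_cancel₀ hrne, C_1, one_mul, comp_X]
    rw [← hid]
    exact hyp_comp_scale hrne hGh
  -- apply the multiplier hypothesis
  have hHhyp : ∀ᶠ r in l,
      Hyperbolic (∑ k ∈ Finset.range n, C ((γ k * a k) * r ^ k / lc k) * q k) := by
    filter_upwards [hFhyp] with r hFh
    have := h n (fun k => a k * r ^ k / lc k) hFh
    have heqc : ∀ k, (γ k * a k) * r ^ k / lc k = γ k * (a k * r ^ k / lc k) := fun k => by ring
    simp_rw [heqc]
    exact this
  have hHscaled : ∀ᶠ r in l, Hyperbolic
      ((∑ k ∈ Finset.range n, C ((γ k * a k) * r ^ k / lc k) * q k).comp (C r⁻¹ * X)) := by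
    filter_upwards [hHhyp, self_mem_nhdsWithin] with r h1 hr
    exact hyp_comp_scale (inv_ne_zero (ne_of_gt hr)) h1
  -- pass to the limit
  show Hyperbolic (∑ k ∈ Finset.range n, C (γ k * a k) * X ^ k)
  apply hyp_limit (l := l) (N := n)
    (G := fun r => (∑ k ∈ Finset.range n, C ((γ k * a k) * r ^ k / lc k) * q k).comp (C r⁻¹ * X))
  · apply Eventually.of_forall
    intro r
    have hFdeg : (∑ k ∈ Finset.range n, C ((γ k * a k) * r ^ k / lc k) * q k).natDegree ≤ n := by
      apply natDegree_sum_le'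
      intro k hk
      exact le_trans (natDegree_C_mul_le _ _)
        (by rw [hqnd]; exact le_of_lt (Finset.mem_range.mp hk))
    calc ((∑ k ∈ Finset.range n, C ((γ k * a k) * r ^ k / lc k) * q k).comp
          (C r⁻¹ * X)).natDegree
        = _ * (C r⁻¹ * X).natDegree := natDegree_comp
      _ ≤ n * 1 := Nat.mul_le_mul hFdeg
          (le_trans (natDegree_C_mul_le _ _) (le_of_eq natDegree_X))
      _ = n := mul_one n
  · apply natDegree_sum_le'
    intro k hk
    exact le_trans (natDegree_C_mul_le _ _)
      (by rw [natDegree_X_pow]; exact le_of_lt (Finset.mem_range.mp hk))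
  · exact hHscaled
  · exact fun j => coeff_G_tendsto q hq n (fun k => γ k * a k) j

lemma coeff_prod_tendsto_aux {ι : Type*} [DecidableEq ι] {α : Type*} {l : Filter α}
    (v : ι → α → ℝ) (w : ι → ℝ) (hv : ∀ i, Tendsto (v i) l (nhds (w i))) (s : Finset ι) :
    ∀ j, Tendsto (fun t => (∏ i ∈ s, (X - C (v i t))).coeff j) l
      (nhds ((∏ i ∈ s, (X - C (w i))).coeff j)) := by
  induction s using Finset.induction with
  | empty => intro j; simpa using tendsto_const_nhds
  | @insert x s hx ih =>
    intro j
    have hco : ∀ (b : ℝ) (P : Polynomial ℝ) (k : ℕ),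
        ((X - C b) * P).coeff k = (X * P).coeff k - b * P.coeff k := by
      intro b P k
      rw [sub_mul, coeff_sub, coeff_C_mul]
    simp only [Finset.prod_insert hx, hco]
    rcases j with _ | j
    · have hz : ∀ (P : Polynomial ℝ), (X * P).coeff 0 = 0 := by
        intro P
        rw [mul_coeff_zero, coeff_X_zero, zero_mul]
      simp only [hz, zero_sub]
      exact ((hv x).mul (ih 0)).neg
    · have hs : ∀ (P : Polynomial ℝ), (X * P).coeff (j+1) = P.coeff j := fun P => coeff_X_mul P j
      simp only [hs]
      exact (ih j).sub ((hv x).mul (ih (j+1)))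

lemma coeff_prod_tendsto {ι : Type*} [DecidableEq ι] [Fintype ι] {α : Type*} {l : Filter α}
    (v : ι → α → ℝ) (w : ι → ℝ) (hv : ∀ i, Tendsto (v i) l (nhds (w i))) (c : ℝ) (j : ℕ) :
    Tendsto (fun t => (C c * ∏ i, (X - C (v i t))).coeff j) l
      (nhds ((C c * ∏ i, (X - C (w i))).coeff j)) := by
  simp only [coeff_C_mul]
  exact (coeff_prod_tendsto_aux v w hv Finset.univ j).const_mul c

lemma coeff_sum_C_X (b : ℕ → ℝ) (n k : ℕ) (hk : k < n) :
    (∑ j ∈ Finset.range n, C (b j) * X ^ j).coeff k = b k := by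
  rw [finset_sum_coeff]
  rw [Finset.sum_eq_single k]
  · rw [coeff_C_mul, coeff_X_pow, if_pos rfl, mul_one]
  · intro j _ hjk
    rw [coeff_C_mul, coeff_X_pow, if_neg (fun hh => hjk hh.symm), mul_zero]
  · intro hkk
    exact absurd (Finset.mem_range.mpr hk) hkk

theorem stmt_0 (q : ℕ → Polynomial ℝ) (hq : ∀ k, (q k).degree = k)
    (γ : ℕ → ℝ) (h : IsMultiplierSeqFor q γ) :
    IsMultiplierSeqFor (fun k => X ^ k) γ := by
  intro n a hyp
  have hyp' : Hyperbolic (∑ k ∈ Finset.range n, C (a k) * X ^ k) := hyp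
  set p : Polynomial ℝ := ∑ k ∈ Finset.range n, C (a k) * X ^ k with hp
  show Hyperbolic (∑ k ∈ Finset.range n, C (γ k * a k) * X ^ k)
  have hsumdeg : ∀ b : ℕ → ℝ, (∑ k ∈ Finset.range n, C (b k) * X ^ k).natDegree ≤ n := by
    intro b
    apply natDegree_sum_le'
    intro k hk
    exact le_trans (natDegree_C_mul_le _ _)
      (by rw [natDegree_X_pow]; exact le_of_lt (Finset.mem_range.mp hk))
  by_cases hp0 : p = 0
  · have hak : ∀ k ∈ Finset.range n, C (γ k * a k) * (X : Polynomial ℝ) ^ k = 0 := by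
      intro k hk
      have hak0 : a k = 0 := by
        have h1 : p.coeff k = a k := coeff_sum_C_X a n k (Finset.mem_range.mp hk)
        rw [hp0] at h1
        simpa using h1.symm
      rw [hak0, mul_zero, C_0, zero_mul]
    rw [Finset.sum_congr rfl hak]
    simpa using hyp_zero
  · have hn0 : 0 < n := by
      rcases Nat.eq_zero_or_pos n with rfl | hn
      · exact absurd (by simp [hp]) hp0
      · exact hn
    have hpdegn : p.natDegree < n := by
      have : p.natDegree ≤ n - 1 := by
        apply natDegree_sum_le'
        intro k hk
        have hkn := Finset.mem_range.mp hk
        exact le_trans (natDegree_C_mul_le _ _) (by rw [natDegree_X_pow]; omega)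
      omega
    obtain ⟨M, hMcard, hfac⟩ := hyp_factor hp0 hyp'
    set c := p.leadingCoeff with hc
    have hcne : c ≠ 0 := leadingCoeff_ne_zero.mpr hp0
    set L : List ℝ := Multiset.sort M (· ≤ ·) with hL
    have hLlen : L.length = p.natDegree := by rw [hL, Multiset.length_sort, hMcard]
    set m := L.length with hm
    have hmn : m < n := by omega
    set w : Fin m → ℝ := fun i => L.get i with hw
    have hwmono : Monotone w := by
      intro i j hij
      rcases eq_or_lt_of_le hij with rfl | hlt
      · exact le_refl _
      · exact (Multiset.pairwise_sort M (· ≤ ·)).rel_get_of_lt hlt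
    have hprod : p = C c * ∏ i : Fin m, (X - C (w i)) := by
      rw [hfac]
      congr 1
      rw [show M = (L : Multiset ℝ) from (Multiset.sort_eq _ _).symm]
      rw [Multiset.map_coe, Multiset.prod_coe]
      rw [← List.ofFn_get L, List.map_ofFn, List.prod_ofFn]
      rfl
    apply hyp_limit (l := nhdsWithin (0:ℝ) (Set.Ioi 0)) (N := n)
      (G := fun ε => ∑ k ∈ Finset.range n,
        C (γ k * (C c * ∏ i : Fin m, (X - C (w i + (i : ℕ) * ε))).coeff k) * X ^ k)
    · exact Eventually.of_forall fun ε => hsumdeg _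
    · exact hsumdeg _
    · filter_upwards [self_mem_nhdsWithin] with ε hε
      apply step1 q hq γ h hmn hcne
      intro i j hij
      have h1 : w i ≤ w j := hwmono (le_of_lt hij)
      have h2 : ((i : ℕ) : ℝ) * ε < ((j : ℕ) : ℝ) * ε := by
        apply mul_lt_mul_of_pos_right _ hε
        exact_mod_cast hij
      show w i + (i : ℕ) * ε < w j + (j : ℕ) * ε
      linarith
    · intro j
      by_cases hjn : j < n
      · have hfe : ∀ ε : ℝ, (∑ k ∈ Finset.range n,
            C (γ k * (C c * ∏ i : Fin m, (X - C (w i + (i : ℕ) * ε))).coeff k)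
              * X ^ k).coeff j
            = γ j * (C c * ∏ i : Fin m, (X - C (w i + (i : ℕ) * ε))).coeff j := by
          intro ε
          exact coeff_sum_C_X _ n j hjn
        have htarget : (∑ k ∈ Finset.range n, C (γ k * a k) * X ^ k).coeff j = γ j * a j :=
          coeff_sum_C_X _ n j hjn
        simp only [hfe, htarget]
        have haj : a j = (C c * ∏ i : Fin m, (X - C (w i))).coeff j := by
          rw [← hprod]
          exact (coeff_sum_C_X a n j hjn).symm
        rw [haj]
        apply Tendsto.const_mul
        apply coeff_prod_tendsto (v := fun i ε => w i + (i : ℕ) * ε) w _ c j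
        intro i
        have : Tendsto (fun ε : ℝ => w i + (i : ℕ) * ε) (nhds 0) (nhds (w i)) := by
          have hcont : Continuous (fun ε : ℝ => w i + (i : ℕ) * ε) :=
            continuous_const.add (continuous_const.mul continuous_id)
          have := hcont.tendsto 0
          simpa using this
        exact this.mono_left nhdsWithin_le_nhds
      · have hz : ∀ b : ℕ → ℝ, (∑ k ∈ Finset.range n, C (b k) * X ^ k).coeff j = 0 := by
          intro b
          apply coeff_eq_zero_of_natDegree_lt
          have hb : (∑ k ∈ Finset.range n, C (b k) * X ^ k).natDegree ≤ n - 1 := by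
            apply natDegree_sum_le'
            intro k hk
            have hkn := Finset.mem_range.mp hk
            exact le_trans (natDegree_C_mul_le _ _) (by rw [natDegree_X_pow]; omega)
          omega
        simp only [hz]
        exact tendsto_const_nhds
end

section
/- Let (γ_k)_{k=0}^∞ be a Legendre multiplier sequence. If there exist integers n > m ≥ 0 with γ_m ≠ 0 and γ_n = 0, then γ_k = 0 for all k ≥ n. -/
open Polynomial

/-- The Legendre polynomials, via Rodrigues' formula
`Le n = (1/(2^n n!)) Dⁿ[(x²-1)ⁿ]`. -/
noncomputable def legendre (n : ℕ) : Polynomial ℝ :=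
  C (1 / (2 ^ n * n.factorial : ℝ)) * derivative^[n] ((X ^ 2 - 1) ^ n)

/-- A Legendre multiplier sequence. -/
def IsLegendreMS (γ : ℕ → ℝ) : Prop := IsMultiplierSeqFor legendre γ

namespace HypAux


lemma hyp_zero : Hyperbolic 0 := by
  intro z hz
  simp [Polynomial.map_zero] at hz

lemma hyp_of_card_roots {p : ℝ[X]} (h : Multiset.card p.roots = p.natDegree) :
    Hyperbolic p := by
  have hsp : p.Splits := (splits_iff_card_roots).2 h
  intro z hz
  rw [hsp.roots_map (algebraMap ℝ ℂ)] at hz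
  obtain ⟨x, _, rfl⟩ := Multiset.mem_map.1 hz
  simp [Complex.ofReal_im]

/-- factorization of a hyperbolic polynomial over ℝ -/
lemma hyp_card_roots {p : ℝ[X]} (hp : p ≠ 0) (h : Hyperbolic p) :
    Multiset.card p.roots = p.natDegree := by
  set P := p.map (algebraMap ℝ ℂ) with hP
  have hP0 : P ≠ 0 := map_ne_zero hp
  have hsplit : P.Splits := IsAlgClosed.splits P
  -- p equals the map-back of the factorization
  set s : Multiset ℝ := P.roots.map Complex.re with hs
  have hre : P.roots.map (fun z : ℂ => ((z.re : ℝ) : ℂ)) = P.roots.map id := by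
    apply Multiset.map_congr rfl
    intro z hz
    exact Complex.ext rfl (by simpa using (h z hz).symm)
  have hqmap : (C p.leadingCoeff * (s.map (fun a => X - C a)).prod).map (algebraMap ℝ ℂ) = P := by
    rw [Polynomial.map_mul, Polynomial.map_multiset_prod, map_C]
    have : (s.map (fun a => X - C a)).map (Polynomial.map (algebraMap ℝ ℂ))
        = P.roots.map (fun z => X - C z) := by
      rw [hs, Multiset.map_map, Multiset.map_map]
      have := hre
      calc P.roots.map (fun z => Polynomial.map (algebraMap ℝ ℂ) (X - C z.re))
          = P.roots.map (fun z => X - C ((z.re : ℝ) : ℂ)) := by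
            apply Multiset.map_congr rfl; intro z _; simp
        _ = P.roots.map (fun z => X - C z) := by
            apply Multiset.map_congr rfl; intro z hz
            have : ((z.re : ℝ) : ℂ) = z := Complex.ext rfl (by simpa using (h z hz).symm)
            rw [this]
    rw [this]
    have hlc : algebraMap ℝ ℂ p.leadingCoeff = P.leadingCoeff := by
      rw [hP, leadingCoeff_map_of_leadingCoeff_ne_zero]
      simpa using leadingCoeff_ne_zero.2 hp
    rw [hlc]
    exact hsplit.eq_prod_roots.symm
  have hinj : Function.Injective (algebraMap ℝ ℂ) := (algebraMap ℝ ℂ).injective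
  have hpfac : p = C p.leadingCoeff * (s.map (fun a => X - C a)).prod := by
    apply Polynomial.map_injective _ hinj
    rw [hqmap]
  have hroots : p.roots = s := by
    rw [hpfac, roots_C_mul _ (leadingCoeff_ne_zero.2 hp), roots_multiset_prod_X_sub_C]
  rw [hroots, hs, Multiset.card_map]
  exact (hsplit.natDegree_eq_card_roots.symm).trans (natDegree_map _)

lemma hyp_factor {p : ℝ[X]} (hp : p ≠ 0) (h : Hyperbolic p) :
    ∃ s : Multiset ℝ, Multiset.card s = p.natDegree ∧
      p = C p.leadingCoeff * (s.map (fun a => X - C a)).prod := by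
  refine ⟨p.roots, hyp_card_roots hp h, ?_⟩
  exact (C_leadingCoeff_mul_prod_multiset_X_sub_C (hyp_card_roots hp h)).symm

lemma hyp_derivative {p : ℝ[X]} (h : Hyperbolic p) : Hyperbolic (derivative p) := by
  by_cases hp : p = 0
  · simpa [hp] using hyp_zero
  by_cases hd : p.natDegree = 0
  · obtain ⟨c, rfl⟩ := natDegree_eq_zero.1 hd
    simpa using hyp_zero
  apply hyp_of_card_roots
  have h1 : Multiset.card p.roots = p.natDegree := hyp_card_roots hp h
  have h2 : Multiset.card p.roots ≤ Multiset.card (derivative p).roots + 1 :=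
    p.card_roots_le_derivative
  have h3 : (derivative p).natDegree < p.natDegree := natDegree_derivative_lt hd
  have h4 : Multiset.card (derivative p).roots ≤ (derivative p).natDegree :=
    (derivative p).card_roots'
  omega

lemma hyp_iterate {p : ℝ[X]} (h : Hyperbolic p) (k : ℕ) :
    Hyperbolic (derivative^[k] p) := by
  induction k with
  | zero => simpa using h
  | succ n ih => rw [Function.iterate_succ_apply']; exact hyp_derivative ih




lemma eval_reverse {K : Type*} [Field K] (P : K[X]) {x : K} (hx : x ≠ 0) :
    eval x P.reverse = x ^ P.natDegree * eval x⁻¹ P := by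
  set N := P.natDegree with hN
  have h1 : eval x P.reverse = ∑ i ∈ Finset.range (N + 1), P.reverse.coeff i * x ^ i := by
    apply eval_eq_sum_range'
    exact Nat.lt_succ_of_le P.reverse_natDegree_le
  have h2 : ∀ i ∈ Finset.range (N + 1), P.reverse.coeff i * x ^ i = P.coeff (N - i) * x ^ i := by
    intro i hi
    rw [coeff_reverse, revAt_le (Nat.lt_succ_iff.1 (Finset.mem_range.1 hi))]
  rw [h1, Finset.sum_congr rfl h2]
  have h3 : ∑ i ∈ Finset.range (N + 1), P.coeff (N - i) * x ^ i
      = ∑ i ∈ Finset.range (N + 1), P.coeff i * x ^ (N - i) := by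
    have := Finset.sum_range_reflect (fun j => P.coeff j * x ^ (N - j)) (N + 1)
    rw [← this]
    apply Finset.sum_congr rfl
    intro i hi
    have hi' : i ≤ N := Nat.lt_succ_iff.1 (Finset.mem_range.1 hi)
    have e1 : N + 1 - 1 - i = N - i := by omega
    have e2 : N - (N - i) = i := by omega
    rw [e1, e2]
  rw [h3]
  have h4 : eval x⁻¹ P = ∑ i ∈ Finset.range (N + 1), P.coeff i * (x⁻¹) ^ i := by
    apply eval_eq_sum_range'
    exact Nat.lt_succ_of_le le_rfl
  rw [h4, Finset.mul_sum]
  apply Finset.sum_congr rfl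
  intro i hi
  have hi' : i ≤ N := Nat.lt_succ_iff.1 (Finset.mem_range.1 hi)
  rw [pow_sub₀ x hx hi', inv_pow]
  field_simp

lemma hyp_reverse {p : ℝ[X]} (h : Hyperbolic p) : Hyperbolic p.reverse := by
  by_cases hp : p = 0
  · intro z hz; subst hp; simp at hz
  have hinj : Function.Injective (algebraMap ℝ ℂ) := (algebraMap ℝ ℂ).injective
  set P := p.map (algebraMap ℝ ℂ) with hP
  have hP0 : P ≠ 0 := map_ne_zero hp
  have hmaprev : p.reverse.map (algebraMap ℝ ℂ) = P.reverse := by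
    rw [Polynomial.reverse, Polynomial.reverse, ← reflect_map,
      natDegree_map_eq_of_injective hinj]
  intro z hz
  rw [hmaprev] at hz
  rcases eq_or_ne z 0 with rfl | hz0
  · simp
  have hroot : eval z P.reverse = 0 := ((mem_roots'.1 hz).2 : IsRoot _ z)
  rw [eval_reverse P hz0] at hroot
  have : eval z⁻¹ P = 0 := by
    rcases mul_eq_zero.1 hroot with h1 | h1
    · exact absurd h1 (pow_ne_zero _ hz0)
    · exact h1
  have hmem : z⁻¹ ∈ P.roots := (mem_roots hP0).2 this
  have him : (z⁻¹).im = 0 := h _ hmem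
  have := congrArg Complex.im (inv_inv z)
  rw [← this, Complex.inv_im, him]
  simp

lemma hyp_of_roots_list (p : ℝ[X]) (hp : p ≠ 0) (l : List ℝ) (hnd : l.Nodup)
    (hr : ∀ x ∈ l, eval x p = 0) (hdeg : p.natDegree ≤ l.length + 1) : Hyperbolic p := by
  intro z hz
  by_contra him
  set P := p.map (algebraMap ℝ ℂ) with hP
  have hP0 : P ≠ 0 := map_ne_zero hp
  have hmemreal : ∀ x ∈ l, ((x : ℝ) : ℂ) ∈ P.roots := by
    intro x hx
    refine (mem_roots hP0).2 ?_
    show eval ((x : ℝ) : ℂ) P = 0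
    have : ((x : ℝ) : ℂ) = algebraMap ℝ ℂ x := rfl
    rw [this, hP, eval_map, eval₂_at_apply, hr x hx]
    simp
  have hconj : (starRingEnd ℂ) z ∈ P.roots := by
    refine (mem_roots hP0).2 ?_
    show eval _ P = 0
    have h1 : ∀ w : ℂ, eval w P = aeval w p := by
      intro w; rw [aeval_def, eval_map]
    rw [h1, Polynomial.aeval_conj]
    have : aeval z p = 0 := by
      rw [← h1]; exact (mem_roots'.1 hz).2
    rw [this]; simp
  set base : Finset ℂ := (l.map (fun x : ℝ => (x : ℂ))).toFinset with hbase
  have hbnd : (l.map (fun x : ℝ => (x : ℂ))).Nodup :=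
    hnd.map (fun a b hab => by exact_mod_cast hab)
  have hbcard : base.card = l.length := by
    rw [hbase, List.toFinset_card_of_nodup hbnd, List.length_map]
  have hbim : ∀ w ∈ base, w.im = 0 := by
    intro w hw
    rw [hbase, List.mem_toFinset] at hw
    obtain ⟨x, _, rfl⟩ := List.mem_map.1 hw
    simp
  have hconjim : ((starRingEnd ℂ) z).im = -z.im := by simp
  have hzne : z ≠ (starRingEnd ℂ) z := by
    intro hc
    have := congrArg Complex.im hc
    rw [hconjim] at this
    apply him; linarith
  have hznb : z ∉ base := fun hc => him (hbim z hc)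
  have hcnb : (starRingEnd ℂ) z ∉ base := by
    intro hc
    have := hbim _ hc
    rw [hconjim] at this
    exact him (by linarith)
  set F : Finset ℂ := insert z (insert ((starRingEnd ℂ) z) base) with hF
  have hFcard : F.card = l.length + 2 := by
    rw [hF, Finset.card_insert_of_notMem, Finset.card_insert_of_notMem hcnb, hbcard]
    simp only [Finset.mem_insert]
    push_neg
    exact ⟨hzne, hznb⟩
  have hFsub : F ⊆ P.roots.toFinset := by
    intro w hw
    rw [hF, Finset.mem_insert, Finset.mem_insert] at hw
    apply Multiset.mem_toFinset.2
    rcases hw with rfl | rfl | hw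
    · exact hz
    · exact hconj
    · rw [hbase, List.mem_toFinset] at hw
      obtain ⟨x, hx, rfl⟩ := List.mem_map.1 hw
      exact hmemreal x hx
  have h1 : F.card ≤ P.roots.toFinset.card := Finset.card_le_card hFsub
  have h2 : P.roots.toFinset.card ≤ Multiset.card P.roots := P.roots.toFinset_card_le
  have h3 : Multiset.card P.roots ≤ P.natDegree := P.card_roots'
  have h4 : P.natDegree = p.natDegree :=
    natDegree_map_eq_of_injective (algebraMap ℝ ℂ).injective p
  omega




lemma esymm_zero' (s : Multiset ℝ) : s.esymm 0 = 1 := by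
  simp [Multiset.esymm, Multiset.powersetCard_zero_left]

lemma esymm_one' (s : Multiset ℝ) : s.esymm 1 = s.sum := by
  rw [Multiset.esymm, Multiset.powersetCard_one, Multiset.map_map]
  simp [Function.comp_def]

lemma esymm_cons (a : ℝ) (s : Multiset ℝ) (k : ℕ) :
    (a ::ₘ s).esymm (k + 1) = s.esymm (k + 1) + a * s.esymm k := by
  rw [Multiset.esymm, Multiset.powersetCard_cons, Multiset.map_add, Multiset.sum_add,
    Multiset.map_map]
  congr 1
  rw [Multiset.esymm]
  have : ∀ t : Multiset ℝ, (Multiset.prod ∘ Multiset.cons a) t = a * t.prod := by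
    intro t; simp
  rw [Multiset.map_congr rfl (fun t _ => this t)]
  rw [← Multiset.sum_map_mul_left]

lemma esymm_sq_identity (s : Multiset ℝ) :
    (s.esymm 1) ^ 2 - 2 * s.esymm 2 = (s.map (fun x => x ^ 2)).sum := by
  induction s using Multiset.induction with
  | empty => simp [Multiset.esymm, Multiset.powersetCard_zero_right]
  | cons a s ih =>
    rw [show (2 : ℕ) = 1 + 1 from rfl, esymm_cons, esymm_cons, esymm_zero',
      Multiset.map_cons, Multiset.sum_cons, ← ih]
    ring

lemma sq_le_of_mem {s : Multiset ℝ} {x : ℝ} (hx : x ∈ s) :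
    x ^ 2 ≤ (s.esymm 1) ^ 2 - 2 * s.esymm 2 := by
  rw [esymm_sq_identity]
  apply Multiset.single_le_sum
  · intro y hy
    obtain ⟨b, _, rfl⟩ := Multiset.mem_map.1 hy
    positivity
  · exact Multiset.mem_map.2 ⟨x, hx, rfl⟩

lemma abs_esymm_three_le {s : Multiset ℝ} {M : ℝ} (hM : 0 ≤ M)
    (h : ∀ x ∈ s, |x| ≤ M) :
    |s.esymm 3| ≤ ((Multiset.card s).choose 3 : ℝ) * M ^ 3 := by
  rw [Multiset.esymm]
  calc |((s.powersetCard 3).map Multiset.prod).sum|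
      ≤ (((s.powersetCard 3).map Multiset.prod).map abs).sum :=
        Multiset.abs_sum_le_sum_abs
    _ ≤ Multiset.card (((s.powersetCard 3).map Multiset.prod).map abs) • (M ^ 3) := by
        apply Multiset.sum_le_card_nsmul
        intro x hx
        rw [Multiset.mem_map] at hx
        obtain ⟨y, hy, rfl⟩ := hx
        rw [Multiset.mem_map] at hy
        obtain ⟨u, hu, rfl⟩ := hy
        rw [Multiset.mem_powersetCard] at hu
        obtain ⟨hus, huc⟩ := hu
        obtain ⟨a, b, c, rfl⟩ := Multiset.card_eq_three.1 huc
        have hmem : ∀ x ∈ ({a, b, c} : Multiset ℝ), |x| ≤ M := by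
          intro x hx
          exact h x (Multiset.mem_of_le hus hx)
        have ha := hmem a (by simp)
        have hb := hmem b (by simp)
        have hc := hmem c (by simp)
        have hprod : ({a, b, c} : Multiset ℝ).prod = a * b * c := by
          simp [Multiset.prod_cons, mul_assoc]
        rw [hprod, abs_mul, abs_mul]
        have h1 : |a| * |b| ≤ M * M :=
          mul_le_mul ha hb (abs_nonneg b) hM
        calc |a| * |b| * |c| ≤ M * M * M := by
              apply mul_le_mul h1 hc (abs_nonneg c)
              positivity
          _ = M ^ 3 := by ring
    _ ≤ ((Multiset.card s).choose 3 : ℝ) * M ^ 3 := by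
        rw [Multiset.card_map, Multiset.card_map, Multiset.card_powersetCard]
        rw [nsmul_eq_mul]




lemma chain'_of_forall {Q : ℝ → Prop} :
    ∀ (l : List ℝ), (∀ x ∈ l, Q x) → l.Chain' (fun a b => Q a ∧ Q b)
  | [], _ => List.isChain_nil
  | [a], _ => List.isChain_singleton a
  | a :: b :: rest, h => by
    simp only [List.Chain', List.isChain_cons_cons]
    exact ⟨⟨h a (by simp), h b (by simp)⟩,
      chain'_of_forall (b :: rest) (fun x hx => h x (by simp [hx]))⟩

lemma chain'_imp_mem {R S : ℝ → ℝ → Prop} :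
    ∀ (l : List ℝ), l.Chain' R → (∀ x ∈ l, ∀ y ∈ l, R x y → S x y) → l.Chain' S
  | [], _, _ => List.isChain_nil
  | [a], _, _ => List.isChain_singleton a
  | a :: b :: rest, h, himp => by
    simp only [List.Chain', List.isChain_cons_cons] at h ⊢
    exact ⟨himp a (by simp) b (by simp) h.1,
      chain'_imp_mem (b :: rest) h.2 (fun x hx y hy => himp x (by simp [hx]) y (by simp [hy]))⟩

lemma between_list {Rel : ℝ → ℝ → Prop} {P : ℝ → Prop}
    (h : ∀ a b, a < b → Rel a b → ∃ c, a < c ∧ c < b ∧ P c) :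
    ∀ l : List ℝ, l.Pairwise (· < ·) → l.Chain' Rel →
    ∃ l' : List ℝ, l'.Pairwise (· < ·) ∧ l'.length + 1 = l.length + (if l = [] then 1 else 0) ∧
      (∀ y ∈ l', P y) ∧ (∀ y ∈ l', ∃ a ∈ l, ∃ b ∈ l, a < y ∧ y < b)
  | [], _, _ => ⟨[], by simp⟩
  | [a], _, _ => ⟨[], by simp⟩
  | a :: b :: rest, hpw, hch => by
    have hab : a < b := (List.pairwise_cons.1 hpw).1 b (by simp)
    simp only [List.Chain', List.isChain_cons_cons] at hch
    obtain ⟨c, hac, hcb, hPc⟩ := h a b hab hch.1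
    obtain ⟨l'', hpw'', hlen'', hP'', hbtw''⟩ :=
      between_list h (b :: rest) (List.pairwise_cons.1 hpw).2 hch.2
    have hne : (b :: rest) ≠ [] := by simp
    rw [if_neg hne] at hlen''
    refine ⟨c :: l'', ?_, by simp at hlen'' ⊢; omega, ?_, ?_⟩
    · rw [List.pairwise_cons]
      refine ⟨?_, hpw''⟩
      intro y hy
      obtain ⟨a', ha', b', _, ha'y, _⟩ := hbtw'' y hy
      have hba' : b ≤ a' := by
        rcases List.mem_cons.1 ha' with rfl | ha'
        · exact le_rfl
        · exact le_of_lt ((List.pairwise_cons.1 (List.pairwise_cons.1 hpw).2).1 a' ha')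
      calc c < b := hcb
        _ ≤ a' := hba'
        _ < y := ha'y
    · intro y hy
      rcases List.mem_cons.1 hy with rfl | hy
      · exact hPc
      · exact hP'' y hy
    · intro y hy
      rcases List.mem_cons.1 hy with rfl | hy
      · exact ⟨a, by simp, b, by simp, hac, hcb⟩
      · obtain ⟨a', ha', b', hb', h1, h2⟩ := hbtw'' y hy
        exact ⟨a', by simp [ha'], b', by simp [hb'], h1, h2⟩

lemma exists_lt_list (l : List ℝ) : ∃ u : ℝ, ∀ a ∈ l, u < a := by
  induction l with
  | nil => exact ⟨0, by simp⟩
  | cons a l ih =>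
    obtain ⟨u, hu⟩ := ih
    refine ⟨min u a - 1, ?_⟩
    intro b hb
    rcases List.mem_cons.1 hb with heq | hb
    · rw [heq]
      have : min u a ≤ a := min_le_right _ _
      linarith
    · have h1 : min u a ≤ u := min_le_left _ _
      have := hu b hb
      linarith

lemma exists_ub_list (f : ℝ → ℝ) (l : List ℝ) : ∃ K : ℝ, 0 ≤ K ∧ ∀ a ∈ l, f a ≤ K := by
  induction l with
  | nil => exact ⟨0, le_rfl, by simp⟩
  | cons a l ih =>
    obtain ⟨K, hK0, hK⟩ := ih
    refine ⟨max K (f a), le_trans hK0 (le_max_left _ _), ?_⟩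
    intro b hb
    rcases List.mem_cons.1 hb with rfl | hb
    · exact le_max_right _ _
    · exact le_trans (hK b hb) (le_max_left _ _)

lemma exists_pos_lb_list (f : ℝ → ℝ) (l : List ℝ) (h : ∀ x ∈ l, 0 < f x) :
    ∃ δ : ℝ, 0 < δ ∧ ∀ x ∈ l, δ ≤ f x := by
  induction l with
  | nil => exact ⟨1, one_pos, by simp⟩
  | cons a l ih =>
    obtain ⟨δ, hδ, hδl⟩ := ih (fun x hx => h x (by simp [hx]))
    refine ⟨min δ (f a), lt_min hδ (h a (by simp)), ?_⟩
    intro x hx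
    rcases List.mem_cons.1 hx with rfl | hx
    · exact min_le_right _ _
    · exact le_trans (min_le_left _ _) (hδl x hx)

/-- interleaving test points -/
lemma inter_pts :
    ∀ (l : List ℝ) (u : ℝ), l.Pairwise (· < ·) → (∀ a ∈ l, u < a) →
    ∃ pts : List ℝ, pts.Pairwise (· < ·) ∧ pts.length = l.length + 1 ∧
      (∀ x ∈ pts, u ≤ x) ∧ (∀ x ∈ pts, ∀ a ∈ l, x ≠ a) ∧
      pts.head? = some u ∧
      pts.Chain' (fun x y => l.countP (fun a => decide (x < a)) =
        l.countP (fun a => decide (y < a)) + 1)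
  | [], u, _, _ => ⟨[u], by simp [List.Chain']⟩
  | a :: rest, u, hpw, hu => by
    have hrest := (List.pairwise_cons.1 hpw).2
    have harest : ∀ b ∈ rest, a < b := (List.pairwise_cons.1 hpw).1
    -- choose v strictly between a and all of rest
    obtain ⟨v, hav, hvrest⟩ : ∃ v, a < v ∧ ∀ b ∈ rest, v < b := by
      cases rest with
      | nil => exact ⟨a + 1, by linarith, by simp⟩
      | cons b rest' =>
        have hab : a < b := harest b (by simp)
        refine ⟨(a + b) / 2, by linarith, ?_⟩
        intro c hc
        rcases List.mem_cons.1 hc with rfl | hc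
        · linarith
        · have := (List.pairwise_cons.1 hrest).1 c hc
          linarith
    obtain ⟨pts', hpw', hlen', hub', havoid', hhead', hch'⟩ := inter_pts rest v hrest hvrest
    have hvpts' : ∀ x ∈ pts', v ≤ x := hub'
    refine ⟨u :: pts', ?_, by simp [hlen'], ?_, ?_, by simp, ?_⟩
    · rw [List.pairwise_cons]
      refine ⟨?_, hpw'⟩
      intro y hy
      have := hvpts' y hy
      have hua : u < a := hu a (by simp)
      linarith
    · intro x hx
      rcases List.mem_cons.1 hx with rfl | hx
      · exact le_rfl
      · have := hvpts' x hx
        have hua : u < a := hu a (by simp)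
        linarith
    · intro x hx b hb
      rcases List.mem_cons.1 hx with rfl | hx
      · exact ne_of_lt (hu b hb)
      · rcases List.mem_cons.1 hb with rfl | hb
        · have := hvpts' x hx
          intro hc; subst hc; linarith
        · exact havoid' x hx b hb
    · -- chain'
      cases pts' with
      | nil => exact List.isChain_singleton _
      | cons w tl =>
        have hw : v = w := by simpa using hhead'.symm
        subst hw
        simp only [List.Chain', List.isChain_cons_cons]
        constructor
        · -- count for u = count for v + 1 over (a :: rest)
          have hcu : (a :: rest).countP (fun x => decide (u < x)) = rest.length + 1 := by
            rw [List.countP_cons]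
            have h1 : rest.countP (fun x => decide (u < x)) = rest.length := by
              rw [List.countP_eq_length]
              intro b hb
              simp [hu b (by simp [hb])]
            rw [h1]
            simp [hu a (by simp)]
          have hcv : (a :: rest).countP (fun x => decide (v < x)) = rest.length := by
            rw [List.countP_cons]
            have h1 : rest.countP (fun x => decide (v < x)) = rest.length := by
              rw [List.countP_eq_length]
              intro b hb
              simp [hvrest b hb]
            rw [h1]
            simp [not_lt.2 (le_of_lt hav)]
          rw [hcu, hcv]
        · -- transfer chain from rest-counts to (a::rest)-counts
          apply chain'_imp_mem (v :: tl) hch'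
          intro x hx y hy hr
          have hxa : a < x := by
            rcases List.mem_cons.1 hx with rfl | hx
            · exact hav
            · have := hvpts' x (by simp [hx]); linarith
          have hya : a < y := by
            rcases List.mem_cons.1 hy with rfl | hy
            · exact hav
            · have := hvpts' y (by simp [hy]); linarith
          rw [List.countP_cons, List.countP_cons]
          have hdx : decide (x < a) = false := decide_eq_false (not_lt.2 hxa.le)
          have hdy : decide (y < a) = false := decide_eq_false (not_lt.2 hya.le)
          rw [hdx, hdy]
          simp only [if_false, Bool.false_eq_true, add_zero]
          omega

lemma sign_list_prod :
    ∀ (l : List ℝ) (x : ℝ), (∀ a ∈ l, x ≠ a) →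
    0 < (-1 : ℝ) ^ (l.countP (fun a => decide (x < a))) * (l.map (fun a => x - a)).prod
  | [], x, _ => by simp
  | a :: l, x, h => by
    have ih := sign_list_prod l x (fun b hb => h b (by simp [hb]))
    rw [List.countP_cons, List.map_cons, List.prod_cons]
    rcases lt_or_gt_of_ne (h a (by simp)) with hlt | hgt
    · have hd : decide (x < a) = true := decide_eq_true hlt
      rw [hd]
      simp only [if_true, pow_succ]
      nlinarith
    · have hd : decide (x < a) = false := decide_eq_false (not_lt.2 hgt.le)
      rw [hd]
      simp only [if_false, Bool.false_eq_true, add_zero]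
      nlinarith [sub_pos.2 hgt]




lemma fpoly_expand (n : ℕ) : ((X:ℝ[X])^2 - 1)^n
    = ∑ k ∈ Finset.range (n+1), C ((-1:ℝ)^(n-k) * (n.choose k : ℝ)) * X^(2*k) := by
  have h1 : ((X:ℝ[X])^2 - 1)^n = ((X:ℝ[X])^2 + (-1))^n := by ring
  rw [h1, add_pow]
  apply Finset.sum_congr rfl
  intro k hk
  have h2 : ((-1 : ℝ[X])) = C (-1 : ℝ) := by simp
  have h3 : ((n.choose k : ℝ[X])) = C ((n.choose k : ℝ)) := by
    rw [Polynomial.C_eq_natCast]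
  rw [h2, ← map_pow, h3, map_mul, ← pow_mul]
  ring

lemma coeff_fpoly_even (n i : ℕ) (hi : i ≤ n) :
    (((X:ℝ[X])^2 - 1)^n).coeff (2*i) = (-1:ℝ)^(n-i) * (n.choose i : ℝ) := by
  rw [fpoly_expand, finset_sum_coeff]
  rw [Finset.sum_eq_single i]
  · rw [coeff_C_mul, coeff_X_pow, if_pos rfl, mul_one]
  · intro k _ hk
    rw [coeff_C_mul, coeff_X_pow, if_neg (by omega), mul_zero]
  · intro h
    exact absurd (Finset.mem_range.2 (by omega)) h

lemma coeff_fpoly_odd (n j : ℕ) (hj : ¬ 2 ∣ j) :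
    (((X:ℝ[X])^2 - 1)^n).coeff j = 0 := by
  rw [fpoly_expand, finset_sum_coeff]
  apply Finset.sum_eq_zero
  intro k _
  rw [coeff_C_mul, coeff_X_pow, if_neg (by omega), mul_zero]

lemma legendre_coeff (t j : ℕ) : (legendre t).coeff j =
    (1 / (2 ^ t * t.factorial : ℝ)) * (((j+t).descFactorial t : ℝ) *
      (((X:ℝ[X])^2 - 1)^t).coeff (j+t)) := by
  rw [legendre, coeff_C_mul, coeff_iterate_derivative, nsmul_eq_mul]

lemma legendre_coeff_ne_zero {t j : ℕ} (hj : j ≤ t) (hpar : Even (j + t)) :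
    (legendre t).coeff j ≠ 0 := by
  obtain ⟨i, hi⟩ := hpar
  have hi2 : j + t = 2 * i := by omega
  have hit : i ≤ t := by omega
  rw [legendre_coeff, hi2, coeff_fpoly_even t i hit]
  have h1 : (0:ℝ) < 2 ^ t * t.factorial := by positivity
  have h2 : ((j+t).descFactorial t : ℝ) ≠ 0 := by
    rw [Nat.cast_ne_zero]
    intro hc
    rw [Nat.descFactorial_eq_zero_iff_lt] at hc
    omega
  have h3 : ((t.choose i : ℝ)) ≠ 0 := by
    rw [Nat.cast_ne_zero]
    exact (Nat.choose_pos hit).ne'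
  have h4 : ((-1:ℝ)^(t-i)) ≠ 0 := by
    apply pow_ne_zero; norm_num
  apply mul_ne_zero
  · positivity
  · rw [hi2] at h2
    exact mul_ne_zero h2 (mul_ne_zero h4 h3)

lemma legendre_coeff_odd {t j : ℕ} (hpar : ¬ Even (j + t)) :
    (legendre t).coeff j = 0 := by
  have hodd : ¬ 2 ∣ (j + t) := by
    intro hc
    exact hpar (even_iff_two_dvd.2 hc)
  rw [legendre_coeff, coeff_fpoly_odd t (j+t) hodd]
  ring

lemma natDegree_fpoly (n : ℕ) : (((X:ℝ[X])^2 - 1)^n).natDegree = 2 * n := by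
  rw [natDegree_pow]
  have : ((X:ℝ[X])^2 - 1) = X^2 - C 1 := by simp
  rw [this, natDegree_X_pow_sub_C]
  ring

lemma natDegree_legendre (t : ℕ) : (legendre t).natDegree = t := by
  apply le_antisymm
  · apply le_trans (natDegree_C_mul_le _ _)
    apply le_trans (natDegree_iterate_derivative _ _)
    rw [natDegree_fpoly]; omega
  · apply le_natDegree_of_ne_zero
    exact legendre_coeff_ne_zero le_rfl ⟨t, by ring⟩

lemma legendre_coeff_high {t j : ℕ} (h : t < j) : (legendre t).coeff j = 0 :=
  coeff_eq_zero_of_natDegree_lt (by rw [natDegree_legendre]; exact h)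

lemma legendre_ne_zero (t : ℕ) : legendre t ≠ 0 := by
  intro hc
  exact legendre_coeff_ne_zero le_rfl ⟨t, by ring⟩ (by rw [hc]; simp)


lemma X_sub_C_dvd_fpoly (n : ℕ) {a : ℝ} (ha : a = 1 ∨ a = -1) :
    (X - C a)^n ∣ ((X:ℝ[X])^2-1)^n := by
  apply pow_dvd_pow_of_dvd
  have hfac : ((X:ℝ[X])^2 - 1) = (X - C 1) * (X - C (-1)) := by
    simp only [map_one, map_neg]
    ring
  rcases ha with rfl | rfl
  · rw [hfac]; exact dvd_mul_right _ _
  · rw [hfac]; exact dvd_mul_left _ _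

lemma dvd_derivative_of_pow_dvd {a : ℝ} {j : ℕ} {p : ℝ[X]} (h : (X - C a)^j ∣ p) :
    (X - C a)^(j-1) ∣ derivative p := by
  cases j with
  | zero => simpa using one_dvd _
  | succ j =>
    obtain ⟨q, rfl⟩ := h
    rw [derivative_mul, derivative_pow]
    simp only [derivative_X_sub_C, mul_one, Nat.add_sub_cancel]
    apply dvd_add
    · exact dvd_mul_of_dvd_left (dvd_mul_left _ _) q
    · apply dvd_mul_of_dvd_left
      exact pow_dvd_pow _ (Nat.le_succ j)

lemma pow_dvd_iterate {a : ℝ} {j : ℕ} {p : ℝ[X]} (h : (X - C a)^j ∣ p) (k : ℕ) :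
    (X - C a)^(j-k) ∣ derivative^[k] p := by
  induction k with
  | zero => simpa using h
  | succ k ih =>
    rw [Function.iterate_succ_apply']
    have := dvd_derivative_of_pow_dvd ih
    rw [show j-(k+1) = (j-k)-1 by omega]
    exact this

lemma eval_endpoint (n k : ℕ) (hk : k < n) {a : ℝ} (ha : a = 1 ∨ a = -1) :
    eval a (derivative^[k] (((X:ℝ[X])^2-1)^n)) = 0 := by
  obtain ⟨q, hq⟩ := pow_dvd_iterate (X_sub_C_dvd_fpoly n ha) k
  rw [hq, eval_mul, eval_pow, eval_sub, eval_X, eval_C, sub_self, zero_pow (by omega), zero_mul]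

lemma rolle_poly (g : ℝ[X]) (a b : ℝ) (hab : a < b) (ha : eval a g = 0) (hb : eval b g = 0) :
    ∃ c, a < c ∧ c < b ∧ eval c (derivative g) = 0 := by
  obtain ⟨c, hc, hc'⟩ := exists_deriv_eq_zero hab
    ((g.continuous_aeval).continuousOn : ContinuousOn (fun x => eval x g) (Set.Icc a b))
    (ha.trans hb.symm)
  refine ⟨c, hc.1, hc.2, ?_⟩
  rw [← Polynomial.deriv]
  exact hc'

lemma rolle_chain (n : ℕ) : ∀ k, k ≤ n → ∃ l : List ℝ, l.Pairwise (· < ·) ∧ l.length = k ∧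
    (∀ x ∈ l, x ∈ Set.Ioo (-1:ℝ) 1) ∧
    (∀ x ∈ l, eval x (derivative^[k] (((X:ℝ[X])^2-1)^n)) = 0) := by
  intro k
  induction k with
  | zero =>
    intro _
    exact ⟨[], by simp⟩
  | succ k ih =>
    intro hk1
    obtain ⟨l, hpw, hlen, hIoo, hroots⟩ := ih (by omega)
    set g := derivative^[k] (((X:ℝ[X])^2-1)^n) with hg
    set big : List ℝ := (-1) :: (l ++ [1]) with hbig
    have hbigIcc : ∀ x ∈ big, -1 ≤ x ∧ x ≤ 1 := by
      intro x hx
      rw [hbig, List.mem_cons, List.mem_append, List.mem_singleton] at hx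
      rcases hx with rfl | hx | rfl
      · constructor <;> norm_num
      · have := hIoo x hx
        constructor <;> [linarith [this.1]; linarith [this.2]]
      · constructor <;> norm_num
    have hbigpw : big.Pairwise (· < ·) := by
      rw [hbig, List.pairwise_cons]
      constructor
      · intro x hx
        rw [List.mem_append, List.mem_singleton] at hx
        rcases hx with hx | rfl
        · exact (hIoo x hx).1
        · norm_num
      · rw [List.pairwise_append]
        refine ⟨hpw, List.pairwise_singleton _ _, ?_⟩
        intro x hx y hy
        rw [List.mem_singleton] at hy
        subst hy
        exact (hIoo x hx).2
    have hbigroots : ∀ x ∈ big, eval x g = 0 := by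
      intro x hx
      rw [hbig, List.mem_cons, List.mem_append, List.mem_singleton] at hx
      rcases hx with rfl | hx | rfl
      · exact eval_endpoint n k (by omega) (Or.inr rfl)
      · exact hroots x hx
      · exact eval_endpoint n k (by omega) (Or.inl rfl)
    have hch := chain'_of_forall big hbigroots
    obtain ⟨l', hpw', hlen', hP', hbtw'⟩ := between_list
      (fun a b hab hrel => rolle_poly g a b hab hrel.1 hrel.2) big hbigpw hch
    have hbigne : big ≠ [] := by rw [hbig]; simp
    rw [if_neg hbigne] at hlen'
    refine ⟨l', hpw', ?_, ?_, ?_⟩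
    · have : big.length = k + 2 := by rw [hbig]; simp [hlen]
      omega
    · intro x hx
      obtain ⟨a, ha, b, hb, h1, h2⟩ := hbtw' x hx
      have h3 := hbigIcc a ha
      have h4 := hbigIcc b hb
      constructor <;> [linarith [h3.1]; linarith [h4.2]]
    · intro x hx
      have := hP' x hx
      rwa [Function.iterate_succ_apply']

lemma legendre_roots_list (n : ℕ) : ∃ l : List ℝ, l.Pairwise (· < ·) ∧ l.length = n ∧
    ∀ x ∈ l, eval x (legendre n) = 0 := by
  obtain ⟨l, hpw, hlen, _, hroots⟩ := rolle_chain n n le_rfl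
  refine ⟨l, hpw, hlen, ?_⟩
  intro x hx
  rw [legendre, eval_mul, eval_C, hroots x hx, mul_zero]

lemma eq_prod_of_roots (p : ℝ[X]) (l : List ℝ) (hpw : l.Pairwise (· < ·))
    (hlen : p.natDegree = l.length) (h0 : p ≠ 0) (hr : ∀ x ∈ l, eval x p = 0) :
    p = C p.leadingCoeff * (((l : Multiset ℝ)).map (fun a => X - C a)).prod := by
  set s : Multiset ℝ := (l : Multiset ℝ) with hs
  set F := (s.map (fun a => X - C a)).prod with hF
  have hmon : F.Monic := monic_multiset_prod_of_monic _ _ (fun a _ => monic_X_sub_C a)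
  have hcards : Multiset.card s = l.length := Multiset.coe_card l
  have hdegF : F.natDegree = l.length := by
    rw [hF, natDegree_multiset_prod_X_sub_C_eq_card]
    exact hcards
  rcases Nat.eq_zero_or_pos l.length with hd0 | hdpos
  · -- empty case
    have hl : l = [] := List.length_eq_zero_iff.1 hd0
    subst hl
    have : p = C (p.coeff 0) := eq_C_of_natDegree_eq_zero (by rw [hlen]; rfl)
    have hF1 : F = 1 := by rw [hF, hs]; simp
    rw [hF1, mul_one]
    conv_lhs => rw [this]
    congr 1
    rw [leadingCoeff, hlen]
    rfl
  set d := l.length with hd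
  set q := p - C p.leadingCoeff * F with hq
  have hq0 : q = 0 := by
    by_contra hne
    have hcq : q.coeff d = 0 := by
      rw [hq, coeff_sub, coeff_C_mul]
      have h1 : p.coeff d = p.leadingCoeff := by rw [leadingCoeff, hlen]
      have h2 : F.coeff d = 1 := by
        have := hmon.coeff_natDegree
        rwa [hdegF] at this
      rw [h1, h2, mul_one, sub_self]
    have hdq : q.natDegree ≤ d := by
      apply le_trans (natDegree_sub_le _ _)
      apply max_le (le_of_eq hlen)
      exact le_trans (natDegree_C_mul_le _ _) (le_of_eq hdegF)
    have hdqlt : q.natDegree < d := by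
      rcases lt_or_eq_of_le hdq with h | h
      · exact h
      · exfalso
        apply hne
        have : q.leadingCoeff = 0 := by rw [leadingCoeff, h]; exact hcq
        exact leadingCoeff_eq_zero.1 this
    have hnd : l.Nodup := hpw.imp ne_of_lt
    have hsub : s ≤ q.roots := by
      rw [Multiset.le_iff_subset (by rwa [hs, Multiset.coe_nodup])]
      intro x hx
      have hxl : x ∈ l := by rwa [hs, Multiset.mem_coe] at hx
      rw [mem_roots hne]
      show eval x q = 0
      have hFx : eval x F = 0 := by
        rw [hF, eval_multiset_prod]
        apply Multiset.prod_eq_zero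
        rw [Multiset.map_map]
        apply Multiset.mem_map.2
        exact ⟨x, hx, by simp⟩
      rw [hq, eval_sub, eval_mul, eval_C, hFx, mul_zero, sub_zero, hr x hxl]
    have : d ≤ Multiset.card q.roots := by
      rw [← hcards]
      exact Multiset.card_le_card hsub
    have := q.card_roots'
    omega
  have := sub_eq_zero.1 hq0
  exact this

lemma eval_prod_list (l : List ℝ) (x : ℝ) :
    eval x ((((l : Multiset ℝ)).map (fun a => X - C a)).prod) = (l.map (fun a => x - a)).prod := by
  rw [eval_multiset_prod, Multiset.map_map]
  have : ((l : Multiset ℝ).map (eval x ∘ fun a => X - C a)) = ((l.map (fun a => x - a) : List ℝ) : Multiset ℝ) := by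
    rw [← Multiset.map_coe]
    apply Multiset.map_congr rfl
    intro a _
    simp
  rw [this, Multiset.prod_coe]

lemma sign_dominate {e r : ℝ} (h : |r| < |e|) : 0 < (e + r) * e := by
  have h1 : |r| * |e| < |e| * |e| := by
    apply mul_lt_mul_of_pos_right h
    calc (0:ℝ) ≤ |r| := abs_nonneg r
      _ < |e| := h
  have h2 : |r * e| = |r| * |e| := abs_mul r e
  have h3 : -(|r| * |e|) ≤ r * e := by rw [← h2]; exact neg_abs_le _
  have h4 : |e| * |e| = e * e := by rw [← abs_mul, abs_mul_self]
  nlinarith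

lemma constr (m n : ℕ) (hmn : m < n) (A : ℝ) :
    ∃ B : ℝ, Hyperbolic (C A * legendre m + (C B * legendre n + legendre (n+1))) := by
  obtain ⟨l, hpw, hlen, hroots⟩ := legendre_roots_list n
  have hfac := eq_prod_of_roots (legendre n) l hpw
    (by rw [natDegree_legendre, hlen]) (legendre_ne_zero n) hroots
  set lc := (legendre n).leadingCoeff with hlc
  have hlc0 : lc ≠ 0 := leadingCoeff_ne_zero.2 (legendre_ne_zero n)
  obtain ⟨u, hu⟩ := exists_lt_list l
  obtain ⟨pts, hppw, hplen, hpub, hpavoid, hphead, hpch⟩ := inter_pts l u hpw hu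
  have hevalform : ∀ x : ℝ, eval x (legendre n) = lc * (l.map (fun a => x - a)).prod := by
    intro x
    conv_lhs => rw [hfac]
    rw [eval_mul, eval_C, eval_prod_list]
  have hsign : ∀ x ∈ pts,
      0 < (-1:ℝ)^(l.countP (fun a => decide (x < a))) * (l.map (fun a => x - a)).prod :=
    fun x hx => sign_list_prod l x (hpavoid x hx)
  have hne : ∀ x ∈ pts, eval x (legendre n) ≠ 0 := by
    intro x hx
    rw [hevalform]
    apply mul_ne_zero hlc0
    intro hc
    have := hsign x hx
    rw [hc, mul_zero] at this
    exact lt_irrefl 0 this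
  have haltern : pts.Chain' (fun x y => eval x (legendre n) * eval y (legendre n) < 0) := by
    apply chain'_imp_mem pts hpch
    intro x hx y hy hcount
    have h1 := hsign x hx
    have h2 := hsign y hy
    rw [hcount] at h1
    set cy := l.countP (fun a => decide (y < a)) with hcy
    set px := (l.map (fun a => x - a)).prod with hpx
    set py := (l.map (fun a => y - a)).prod with hpy
    have h3 : 0 < ((-1:ℝ)^(cy+1) * px) * ((-1:ℝ)^cy * py) := mul_pos h1 h2
    have h4 : ((-1:ℝ)^(cy+1) * px) * ((-1:ℝ)^cy * py) = ((-1:ℝ)^(2*cy+1)) * (px * py) := by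
      rw [show 2*cy+1 = (cy+1)+cy by ring, pow_add]
      ring
    have h5 : ((-1:ℝ)^(2*cy+1)) = -1 := Odd.neg_one_pow ⟨cy, by ring⟩
    rw [h4, h5] at h3
    have hpxy : px * py < 0 := by linarith
    rw [hevalform, hevalform]
    have hlcsq : 0 < lc * lc := by
      rcases lt_or_gt_of_ne hlc0 with h | h
      · nlinarith
      · nlinarith
    nlinarith
  set r : ℝ[X] := C A * legendre m + legendre (n+1) with hrdef
  obtain ⟨δ, hδ0, hδ⟩ := exists_pos_lb_list (fun x => |eval x (legendre n)|) pts
    (fun x hx => abs_pos.2 (hne x hx))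
  obtain ⟨K, hK0, hK⟩ := exists_ub_list (fun x => |eval x r|) pts
  set B := (K + 1)/δ with hB
  have hB0 : 0 < B := by positivity
  refine ⟨B, ?_⟩
  set p := C A * legendre m + (C B * legendre n + legendre (n+1)) with hp
  have hpeval : ∀ x, eval x p = B * eval x (legendre n) + eval x r := by
    intro x
    rw [hp, hrdef]
    simp only [eval_add, eval_mul, eval_C]
    ring
  have hdom : ∀ x ∈ pts, |eval x r| < |B * eval x (legendre n)| := by
    intro x hx
    rw [abs_mul, abs_of_pos hB0]
    calc |eval x r| ≤ K := hK x hx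
      _ < B * δ := by rw [hB]; field_simp; linarith
      _ ≤ B * |eval x (legendre n)| := mul_le_mul_of_nonneg_left (hδ x hx) hB0.le
  have hpalt : pts.Chain' (fun x y => eval x p * eval y p < 0) := by
    apply chain'_imp_mem pts haltern
    intro x hx y hy hxy
    have h1 := sign_dominate (e := B * eval x (legendre n)) (r := eval x r) (hdom x hx)
    have h2 := sign_dominate (e := B * eval y (legendre n)) (r := eval y r) (hdom y hy)
    rw [hpeval x, hpeval y]
    have h3 : (B * eval x (legendre n)) * (B * eval y (legendre n)) < 0 := by
      have he : (B * eval x (legendre n)) * (B * eval y (legendre n))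
          = (B*B) * (eval x (legendre n) * eval y (legendre n)) := by ring
      rw [he]
      exact mul_neg_of_pos_of_neg (mul_pos hB0 hB0) hxy
    nlinarith [mul_pos h1 h2]
  have hIVT : ∀ a b : ℝ, a < b → (eval a p * eval b p < 0) → ∃ c, a < c ∧ c < b ∧ eval c p = 0 := by
    intro a b hab hsgn
    rcases mul_neg_iff.1 hsgn with ⟨ha, hb⟩ | ⟨ha, hb⟩
    · -- eval a p > 0 > eval b p
      have := intermediate_value_Ioo' hab.le (p.continuous.continuousOn :
        ContinuousOn (fun x => eval x p) (Set.Icc a b))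
      have h0 : (0:ℝ) ∈ Set.Ioo (eval b p) (eval a p) := ⟨hb, ha⟩
      obtain ⟨c, hc, hc0⟩ := this h0
      exact ⟨c, hc.1, hc.2, hc0⟩
    · have := intermediate_value_Ioo hab.le (p.continuous.continuousOn :
        ContinuousOn (fun x => eval x p) (Set.Icc a b))
      have h0 : (0:ℝ) ∈ Set.Ioo (eval a p) (eval b p) := ⟨ha, hb⟩
      obtain ⟨c, hc, hc0⟩ := this h0
      exact ⟨c, hc.1, hc.2, hc0⟩
  obtain ⟨rts, hrpw, hrlen, hrroots, _⟩ := between_list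
    (fun a b hab hrel => hIVT a b hab hrel) pts hppw hpalt
  have hptsne : pts ≠ [] := by
    intro hc
    rw [hc] at hplen
    simp at hplen
  rw [if_neg hptsne, hplen, hlen] at hrlen
  -- degree facts
  have hcoefftop : p.coeff (n+1) = (legendre (n+1)).coeff (n+1) := by
    rw [hp, coeff_add, coeff_add, coeff_C_mul, coeff_C_mul,
      legendre_coeff_high (show m < n+1 by omega), legendre_coeff_high (show n < n+1 by omega)]
    ring
  have htopne : p.coeff (n+1) ≠ 0 := by
    rw [hcoefftop]
    exact legendre_coeff_ne_zero le_rfl ⟨n+1, by ring⟩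
  have hpne0 : p ≠ 0 := fun hc => htopne (by rw [hc]; simp)
  have hdeg : p.natDegree ≤ n + 1 := by
    rw [hp]
    apply le_trans (natDegree_add_le _ _)
    apply max_le
    · exact le_trans (natDegree_C_mul_le _ _) (by rw [natDegree_legendre]; omega)
    · apply le_trans (natDegree_add_le _ _)
      apply max_le
      · exact le_trans (natDegree_C_mul_le _ _) (by rw [natDegree_legendre]; omega)
      · rw [natDegree_legendre]
  apply hyp_of_roots_list p hpne0 rts (hrpw.imp ne_of_lt) hrroots
  omega

lemma key_out (γ : ℕ → ℝ) (h : IsLegendreMS γ) {m n : ℕ} (hmn : m < n) (hγn : γ n = 0)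
    (A : ℝ) :
    Hyperbolic (C (γ m * A) * legendre m + C (γ (n+1)) * legendre (n+1)) := by
  obtain ⟨B, hB⟩ := constr m n hmn A
  set a : ℕ → ℝ := fun k => if k = m then A else if k = n then B else if k = n+1 then 1 else 0
    with ha
  have e1 : a m = A := by simp [ha]
  have e2 : a n = B := by simp [ha, show n ≠ m by omega]
  have e3 : a (n+1) = 1 := by simp [ha, show n+1 ≠ m by omega]
  have hsub : ({m, n, n+1} : Finset ℕ) ⊆ Finset.range (n+2) := by
    intro k hk
    simp only [Finset.mem_insert, Finset.mem_singleton] at hk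
    rw [Finset.mem_range]
    omega
  have hin : ∑ k ∈ Finset.range (n+2), C (a k) * legendre k
      = C A * legendre m + (C B * legendre n + legendre (n+1)) := by
    rw [← Finset.sum_subset hsub (by
      intro k _ hknot
      simp only [Finset.mem_insert, Finset.mem_singleton] at hknot
      push_neg at hknot
      have hak : a k = 0 := by
        rw [ha]
        simp only [if_neg hknot.1, if_neg hknot.2.1, if_neg hknot.2.2]
      rw [hak, map_zero, zero_mul])]
    have hm1 : m ∉ ({n, n+1} : Finset ℕ) := by simp; omega
    have hn1 : n ∉ ({n+1} : Finset ℕ) := by simp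
    rw [Finset.sum_insert hm1, Finset.sum_insert hn1, Finset.sum_singleton, e1, e2, e3, C_1,
      one_mul]
  have hsub2 : ({m, n+1} : Finset ℕ) ⊆ Finset.range (n+2) := by
    intro k hk
    simp only [Finset.mem_insert, Finset.mem_singleton] at hk
    rw [Finset.mem_range]
    omega
  have hout : ∑ k ∈ Finset.range (n+2), C (γ k * a k) * legendre k
      = C (γ m * A) * legendre m + C (γ (n+1)) * legendre (n+1) := by
    rw [← Finset.sum_subset hsub2 (by
      intro k _ hknot
      simp only [Finset.mem_insert, Finset.mem_singleton] at hknot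
      push_neg at hknot
      rcases eq_or_ne k n with rfl | hkn
      · rw [hγn, zero_mul, map_zero, zero_mul]
      · have hak : a k = 0 := by
          rw [ha]
          simp only [if_neg hknot.1, if_neg hkn, if_neg hknot.2]
        rw [hak, mul_zero, map_zero, zero_mul])]
    have hm1 : m ∉ ({n+1} : Finset ℕ) := by simp; omega
    rw [Finset.sum_insert hm1, Finset.sum_singleton, e1, e3, mul_one]
  have := h (n+2) a (by rw [hin]; exact hB)
  rwa [hout] at this

lemma step (γ : ℕ → ℝ) (h : IsLegendreMS γ) {m n : ℕ} (hmn : m < n) (hm : γ m ≠ 0)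
    (hn : γ n = 0) : γ (n+1) = 0 := by
  by_contra hne
  have hlamm : (legendre m).coeff m ≠ 0 := legendre_coeff_ne_zero le_rfl ⟨m, by ring⟩
  set g := n + 1 - m with hg
  have hg2 : 2 ≤ g := by omega
  have hmg : m + g = n + 1 := by omega
  set ν : ℕ → ℝ := fun j => (legendre (n+1)).coeff (m+j) with hν
  have hνgne : ν g ≠ 0 := by
    show (legendre (n+1)).coeff (m+g) ≠ 0
    rw [hmg]
    exact legendre_coeff_ne_zero le_rfl ⟨n+1, by ring⟩
  -- for any target coefficient v at position m, a suitable hyperbolic polynomial exists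
  have key2 : ∀ v : ℝ, ∃ q : ℝ[X], Hyperbolic q ∧ q.natDegree ≤ n+1 ∧ q.coeff m = v ∧
      (∀ j, 1 ≤ j → q.coeff (m+j) = γ (n+1) * ν j) := by
    intro v
    set A := (v - γ (n+1) * (legendre (n+1)).coeff m) / (γ m * (legendre m).coeff m) with hA
    refine ⟨C (γ m * A) * legendre m + C (γ (n+1)) * legendre (n+1),
      key_out γ h hmn hn A, ?_, ?_, ?_⟩
    · apply le_trans (natDegree_add_le _ _)
      apply max_le
      · exact le_trans (natDegree_C_mul_le _ _) (by rw [natDegree_legendre]; omega)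
      · exact le_trans (natDegree_C_mul_le _ _) (by rw [natDegree_legendre])
    · rw [coeff_add, coeff_C_mul, coeff_C_mul, hA]
      field_simp
      ring
    · intro j hj
      rw [coeff_add, coeff_C_mul, coeff_C_mul,
        legendre_coeff_high (show m < m + j by omega), mul_zero, zero_add, hν]
  -- coefficients of the m-th derivative
  have hdesc : ∀ j : ℕ, (0:ℝ) < ((j + m).descFactorial m : ℝ) := by
    intro j
    have : 0 < (j + m).descFactorial m := by
      rcases Nat.eq_zero_or_pos ((j + m).descFactorial m) with hc | hc
      · rw [Nat.descFactorial_eq_zero_iff_lt] at hc; omega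
      · exact hc
    exact_mod_cast this
  set M : ℝ := ((0 + m).descFactorial m : ℝ) with hM
  have hM0 : 0 < M := hdesc 0
  have prelude : ∀ v : ℝ, v ≠ 0 → ∃ s : Multiset ℝ, Multiset.card s = g ∧
      (∀ j : ℕ, 1 ≤ j → j ≤ g →
        ((j + m).descFactorial m : ℝ) * (γ (n+1) * ν j) = (M * v) * ((-1:ℝ)^j * s.esymm j)) := by
    intro v hv
    obtain ⟨q, hqhyp, hqdeg, hqm, hqj⟩ := key2 v
    set r := derivative^[m] q with hr
    have hrhyp : Hyperbolic r := hyp_iterate hqhyp m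
    have hrcoeff : ∀ j : ℕ, r.coeff j = ((j + m).descFactorial m : ℝ) * q.coeff (j + m) := by
      intro j
      rw [hr, coeff_iterate_derivative, nsmul_eq_mul]
    have hr0 : r.coeff 0 = M * v := by
      rw [hrcoeff, zero_add, hqm, hM, zero_add]
    have hrg : r.coeff g = ((g + m).descFactorial m : ℝ) * (γ (n+1) * ν g) := by
      rw [hrcoeff, add_comm g m, hqj g (by omega)]
    have hrgne : r.coeff g ≠ 0 := by
      rw [hrg]
      exact mul_ne_zero (hdesc g).ne' (mul_ne_zero hne hνgne)
    have hr0ne : r.coeff 0 ≠ 0 := by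
      rw [hr0]
      exact mul_ne_zero hM0.ne' hv
    have hrdeg : r.natDegree = g := by
      apply le_antisymm
      · apply le_trans (natDegree_iterate_derivative _ _)
        omega
      · exact le_natDegree_of_ne_zero hrgne
    have hrne : r ≠ 0 := fun hc => hr0ne (by rw [hc]; simp)
    set w := r.reverse with hw
    have hwhyp : Hyperbolic w := hyp_reverse hrhyp
    have hwdeg : w.natDegree = g := by
      rw [hw, reverse_natDegree, hrdeg]
      have : r.natTrailingDegree = 0 := natTrailingDegree_eq_zero.2 (Or.inr hr0ne)
      omega
    have hwcoeff : ∀ i : ℕ, i ≤ g → w.coeff i = r.coeff (g - i) := by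
      intro i hi
      rw [hw, coeff_reverse, hrdeg, revAt_le hi]
    have hwlc : w.leadingCoeff = M * v := by
      rw [leadingCoeff, hwdeg, hwcoeff g le_rfl, Nat.sub_self, hr0]
    have hwne : w ≠ 0 := by
      rw [Ne, ← leadingCoeff_eq_zero, hwlc]
      exact mul_ne_zero hM0.ne' hv
    obtain ⟨s, hscard, hsfac⟩ := hyp_factor hwne hwhyp
    rw [hwdeg] at hscard
    refine ⟨s, hscard, ?_⟩
    intro j hj1 hjg
    have hcoeffw : w.coeff (g - j) = (M * v) * ((-1:ℝ)^j * s.esymm j) := by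
      conv_lhs => rw [hsfac]
      rw [coeff_C_mul, Multiset.prod_X_sub_C_coeff s (by rw [hscard]; omega)]
      rw [hscard, show g - (g - j) = j by omega, hwlc]
    rw [← hcoeffw, hwcoeff (g-j) (by omega), show g - (g - j) = j by omega, hrcoeff,
      add_comm j m, hqj j hj1]
  -- now the two parity cases
  rcases Nat.even_or_odd g with hpar | hpar
  · -- even gap: use positions 1 and 2
    have hν1 : ν 1 = 0 := by
      rw [hν]
      apply legendre_coeff_odd
      obtain ⟨c, hc⟩ := hpar
      rw [Nat.even_iff] at *
      omega
    have hν2ne : ν 2 ≠ 0 := by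
      rw [hν]
      apply legendre_coeff_ne_zero (by omega)
      obtain ⟨c, hc⟩ := hpar
      rw [Nat.even_iff]
      omega
    set r2 : ℝ := ((2 + m).descFactorial m : ℝ) * (γ (n+1) * ν 2) with hr2
    have hr2ne : r2 ≠ 0 := mul_ne_zero (hdesc 2).ne' (mul_ne_zero hne hν2ne)
    set v := r2 / M with hvdef
    have hv : v ≠ 0 := div_ne_zero hr2ne hM0.ne'
    obtain ⟨s, hscard, hid⟩ := prelude v hv
    have hMv : M * v = r2 := by
      rw [hvdef]
      field_simp
    have he1 : s.esymm 1 = 0 := by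
      have := hid 1 le_rfl (by omega)
      rw [hν1, mul_zero, mul_zero, hMv] at this
      have h2 : r2 * ((-1:ℝ)^1 * s.esymm 1) = 0 := this.symm
      rcases mul_eq_zero.1 h2 with hc | hc
      · exact absurd hc hr2ne
      · simpa using hc
    have he2 : s.esymm 2 = 1 := by
      have := hid 2 (by omega) (by omega)
      rw [hMv, ← hr2] at this
      have h2 : r2 * ((-1:ℝ)^2 * s.esymm 2) = r2 := this.symm
      rw [show ((-1:ℝ)^2) = 1 by norm_num, one_mul] at h2
      have := mul_left_cancel₀ hr2ne (by rw [h2, mul_one] : r2 * s.esymm 2 = r2 * 1)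
      exact this
    have hnonneg : 0 ≤ (s.esymm 1)^2 - 2 * s.esymm 2 := by
      rw [esymm_sq_identity]
      apply Multiset.sum_nonneg
      intro x hx
      obtain ⟨y, _, rfl⟩ := Multiset.mem_map.1 hx
      positivity
    rw [he1, he2] at hnonneg
    norm_num at hnonneg
  · -- odd gap
    have hg3 : 3 ≤ g := by
      obtain ⟨c, hc⟩ := hpar
      omega
    have hν2 : ν 2 = 0 := by
      rw [hν]
      apply legendre_coeff_odd
      obtain ⟨c, hc⟩ := hpar
      rw [Nat.even_iff] at *
      omega
    have hν3ne : ν 3 ≠ 0 := by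
      rw [hν]
      apply legendre_coeff_ne_zero (by omega)
      obtain ⟨c, hc⟩ := hpar
      rw [Nat.even_iff]
      omega
    set r1 : ℝ := ((1 + m).descFactorial m : ℝ) * (γ (n+1) * ν 1) with hr1
    set r3 : ℝ := ((3 + m).descFactorial m : ℝ) * (γ (n+1) * ν 3) with hr3
    have hr3ne : r3 ≠ 0 := mul_ne_zero (hdesc 3).ne' (mul_ne_zero hne hν3ne)
    set R1 := |r1| with hR1
    set R3 := |r3| with hR3
    have hR30 : 0 < R3 := abs_pos.2 hr3ne
    set Cg : ℝ := ((g.choose 3 : ℕ) : ℝ) with hCg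
    have hCg0 : 0 ≤ Cg := by positivity
    set T : ℝ := (Cg * R1^3 + 1)/R3 + 1 with hT
    have hT1 : 1 ≤ T := by
      rw [hT]
      have : 0 < (Cg * R1^3 + 1)/R3 := by positivity
      linarith
    have hT0 : 0 < T := by linarith
    have hTbig : Cg * R1^3 < T * R3 := by
      rw [hT]
      have : ((Cg * R1^3 + 1)/R3) * R3 = Cg * R1^3 + 1 := by field_simp
      nlinarith
    set v := T / M with hvdef
    have hv : v ≠ 0 := div_ne_zero (by linarith) hM0.ne'
    obtain ⟨s, hscard, hid⟩ := prelude v hv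
    have hMv : M * v = T := by
      rw [hvdef]
      field_simp
    have he1 : s.esymm 1 = -r1 / T := by
      have := hid 1 le_rfl (by omega)
      rw [hMv, ← hr1] at this
      rw [show ((-1:ℝ)^1) = -1 by norm_num] at this
      field_simp at this ⊢
      linarith [this]
    have he2 : s.esymm 2 = 0 := by
      have := hid 2 (by omega) (by omega)
      rw [hν2, mul_zero, mul_zero, hMv] at this
      have h2 : T * ((-1:ℝ)^2 * s.esymm 2) = 0 := this.symm
      rcases mul_eq_zero.1 h2 with hc | hc
      · linarith
      · simpa using hc
    have he3 : s.esymm 3 = -r3 / T := by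
      have := hid 3 (by omega) (by omega)
      rw [hMv, ← hr3] at this
      rw [show ((-1:ℝ)^3) = -1 by norm_num] at this
      field_simp at this ⊢
      linarith [this]
    -- bound the roots
    have hroots_bound : ∀ x ∈ s, |x| ≤ |s.esymm 1| := by
      intro x hx
      have h1 := sq_le_of_mem hx
      rw [he2, mul_zero, sub_zero] at h1
      have h2 : x^2 ≤ |s.esymm 1|^2 := by rwa [sq_abs]
      have := abs_le_of_sq_le_sq' h2 (abs_nonneg _)
      exact abs_le.2 this
    have hbound := abs_esymm_three_le (abs_nonneg (s.esymm 1)) hroots_bound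
    rw [hscard, he3, he1, ← hCg] at hbound
    -- |(-r3)/T| = R3/T , |(-r1)/T| = R1/T
    have habs3 : |(-r3) / T| = R3 / T := by
      rw [abs_div, abs_neg, abs_of_pos hT0, hR3]
    have habs1 : |(-r1) / T| = R1 / T := by
      rw [abs_div, abs_neg, abs_of_pos hT0, hR1]
    rw [habs3, habs1] at hbound
    -- hbound : R3 / T ≤ Cg * (R1 / T)^3
    have hfinal : R3 * T^2 ≤ Cg * R1^3 := by
      have h1 : (R3 / T) * T^3 ≤ (Cg * (R1/T)^3) * T^3 := by
        apply mul_le_mul_of_nonneg_right hbound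
        positivity
      have h2 : (R3 / T) * T^3 = R3 * T^2 := by field_simp
      have h3 : (Cg * (R1/T)^3) * T^3 = Cg * R1^3 := by field_simp
      rw [h2, h3] at h1
      exact h1
    have hpos : 0 < R3 * T := mul_pos hR30 hT0
    have h7 : (R3*T)*T < (R3*T)*1 := by
      calc (R3*T)*T = R3*T^2 := by ring
        _ ≤ Cg * R1^3 := hfinal
        _ < T * R3 := hTbig
        _ = (R3*T)*1 := by ring
    have h6 : T < 1 := lt_of_mul_lt_mul_left h7 hpos.le
    linarith

end HypAux

theorem stmt_1 (γ : ℕ → ℝ) (h : IsLegendreMS γ) (m n : ℕ) (hmn : m < n)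
    (hm : γ m ≠ 0) (hn : γ n = 0) : ∀ k, n ≤ k → γ k = 0 := by
  intro k hk
  induction k, hk using Nat.le_induction with
  | base => exact hn
  | succ k hk ih => exact HypAux.step γ h (by omega : m < k) hm ih
end

section
/- Let (γ_k)_{k=0}^∞ be a Legendre multiplier sequence. Then the terms satisfy Turán's inequality: γ_k² − γ_{k−1}·γ_{k+1} ≥ 0 for all k ≥ 1. -/
open Polynomial

namespace TuranAux

lemma esymm_one' {R : Type*} [CommSemiring R] (s : Multiset R) : s.esymm 1 = s.sum := by
  rw [Multiset.esymm, Multiset.powersetCard_one, Multiset.map_map]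
  simp [Function.comp]

lemma esymm_two_cons {R : Type*} [CommSemiring R] (a : R) (s : Multiset R) :
    (a ::ₘ s).esymm 2 = a * s.sum + s.esymm 2 := by
  rw [Multiset.esymm, show (2:ℕ) = 1 + 1 from rfl, Multiset.powersetCard_cons,
    Multiset.map_add, Multiset.sum_add, Multiset.map_map, Multiset.powersetCard_one,
    Multiset.map_map]
  rw [add_comm, Multiset.esymm]
  congr 1
  simp only [Function.comp, Multiset.prod_cons, Multiset.prod_singleton]
  simpa using Multiset.sum_map_mul_left (s := s) (a := a) (f := id)

lemma sum_sq_eq {R : Type*} [CommRing R] (s : Multiset R) :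
    s.sum ^ 2 = (s.map (· ^ 2)).sum + 2 * s.esymm 2 := by
  induction s using Multiset.induction_on with
  | empty => simp [Multiset.esymm, Multiset.powersetCard_zero_right]
  | cons a s ih =>
    rw [Multiset.sum_cons, esymm_two_cons, Multiset.map_cons, Multiset.sum_cons]
    ring_nf
    ring_nf at ih
    linear_combination ih

lemma cauchy_multiset (s : Multiset ℝ) :
    s.sum ^ 2 ≤ (Multiset.card s : ℝ) * (s.map (· ^ 2)).sum := by
  induction s using Multiset.induction_on with
  | empty => simp
  | cons a s ih =>
    rcases eq_or_ne s 0 with rfl | hs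
    · simp
    have hn : (1:ℝ) ≤ (Multiset.card s : ℝ) := by
      have : 1 ≤ Multiset.card s := Multiset.card_pos.mpr hs
      exact_mod_cast this
    have hQ : (0:ℝ) ≤ (s.map (· ^ 2)).sum :=
      Multiset.sum_nonneg (by intro x hx; obtain ⟨y, _, rfl⟩ := Multiset.mem_map.mp hx; positivity)
    rw [Multiset.sum_cons, Multiset.map_cons, Multiset.sum_cons, Multiset.card_cons]
    push_cast
    nlinarith [sq_nonneg ((Multiset.card s : ℝ) * a - s.sum), ih, hQ, hn]

end TuranAux

namespace TuranAux

lemma esymm_map_hom {R S : Type*} [CommSemiring R] [CommSemiring S] (f : R →+* S)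
    (s : Multiset R) (n : ℕ) : (s.map f).esymm n = f (s.esymm n) := by
  simp only [Multiset.esymm, Multiset.powersetCard_map, Multiset.map_map, map_multiset_sum]
  congr 1
  apply Multiset.map_congr rfl
  intro x _
  simp [Function.comp, map_multiset_prod]

/-- Newton-type inequality for the top three coefficients of a hyperbolic polynomial. -/
lemma newton_top (q : Polynomial ℝ) (n : ℕ) (hq : Hyperbolic q)
    (hdeg : q.natDegree = n + 2) :
    2 * ((n : ℝ) + 2) * (q.coeff (n + 2) * q.coeff n) ≤ ((n : ℝ) + 1) * q.coeff (n + 1) ^ 2 := by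
  have hq0 : q ≠ 0 := fun h => by simp [h] at hdeg
  set f := algebraMap ℝ ℂ
  set qc := q.map f with hqc
  have hqc0 : qc ≠ 0 := Polynomial.map_ne_zero hq0
  have hdc : qc.natDegree = n + 2 := by rw [hqc, Polynomial.natDegree_map]; exact hdeg
  have hsplit : qc.Splits := IsAlgClosed.splits qc
  have hcard : Multiset.card qc.roots = qc.natDegree := Polynomial.splits_iff_card_roots.mp hsplit
  -- the roots, as real numbers
  set t : Multiset ℝ := qc.roots.map Complex.re with ht
  have hroots : qc.roots = t.map (⇑Complex.ofRealHom) := by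
    rw [ht, Multiset.map_map]
    conv_lhs => rw [← Multiset.map_id qc.roots]
    apply Multiset.map_congr rfl
    intro z hz
    exact (Complex.ext (by simp) (by simp [hq z hz])).symm
  have hcardt : (Multiset.card t : ℝ) = (n : ℝ) + 2 := by
    rw [ht, Multiset.card_map]
    rw [hcard, hdc]; push_cast; ring
  have hlead : qc.leadingCoeff = (q.coeff (n + 2) : ℂ) := by
    rw [Polynomial.leadingCoeff, hdc, hqc, Polynomial.coeff_map]; rfl
  have h1 : qc.coeff (n + 1) = qc.leadingCoeff * (-1) ^ 1 * qc.roots.esymm 1 := by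
    have := Polynomial.coeff_eq_esymm_roots_of_card hcard (k := n + 1) (by omega)
    rwa [hdc, show n + 2 - (n + 1) = 1 from by omega] at this
  have h2 : qc.coeff n = qc.leadingCoeff * (-1) ^ 2 * qc.roots.esymm 2 := by
    have := Polynomial.coeff_eq_esymm_roots_of_card hcard (k := n) (by omega)
    rwa [hdc, show n + 2 - n = 2 from by omega] at this
  -- transfer to ℝ
  have e1 : q.coeff (n + 1) = q.coeff (n + 2) * (-1) * t.sum := by
    have : (q.coeff (n+1) : ℂ) = (q.coeff (n+2) : ℂ) * (-1) * (t.sum : ℂ) := by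
      have h1' := h1
      rw [hroots, esymm_map_hom (Complex.ofRealHom) t 1, esymm_one', hlead] at h1'
      calc ((q.coeff (n+1) : ℝ) : ℂ) = qc.coeff (n + 1) := by
            rw [hqc, Polynomial.coeff_map]; rfl
        _ = _ := by rw [h1', Complex.ofRealHom_eq_coe]; push_cast; ring
    exact_mod_cast this
  have e2 : q.coeff n = q.coeff (n + 2) * t.esymm 2 := by
    have : (q.coeff n : ℂ) = (q.coeff (n+2) : ℂ) * ((t.esymm 2 : ℝ) : ℂ) := by
      have h2' := h2
      rw [hroots, esymm_map_hom (Complex.ofRealHom) t 2, hlead] at h2'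
      calc ((q.coeff n : ℝ) : ℂ) = qc.coeff n := by
            rw [hqc, Polynomial.coeff_map]; rfl
        _ = _ := by rw [h2', Complex.ofRealHom_eq_coe]; push_cast; ring
    exact_mod_cast this
  have hcau := cauchy_multiset t
  have hid := sum_sq_eq t
  have hQ : (0:ℝ) ≤ (t.map (· ^ 2)).sum :=
    Multiset.sum_nonneg (by intro x hx; obtain ⟨y, _, rfl⟩ := Multiset.mem_map.mp hx; positivity)
  rw [e1, e2]
  rw [hcardt] at hcau
  set c := q.coeff (n + 2)
  have hkey : c ^ 2 * t.sum ^ 2 ≤ c ^ 2 * (((n:ℝ) + 2) * (t.map (· ^ 2)).sum) :=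
    mul_le_mul_of_nonneg_left hcau (sq_nonneg _)
  have hid2 : 2 * (c ^ 2 * t.esymm 2) = c ^ 2 * t.sum ^ 2 - c ^ 2 * (t.map (· ^ 2)).sum := by
    linear_combination (-(c ^ 2)) * hid
  nlinarith [hkey, hid2]

end TuranAux

namespace TuranAux

lemma base_monic (n : ℕ) : ((X ^ 2 - 1 : ℝ[X]) ^ n).Monic := by
  have h : (X ^ 2 - 1 : ℝ[X]) = X ^ 2 - C 1 := by rw [map_one]
  rw [h]
  exact (monic_X_pow_sub_C (1 : ℝ) two_ne_zero).pow n

lemma base_natDegree (n : ℕ) : ((X ^ 2 - 1 : ℝ[X]) ^ n).natDegree = n * 2 := by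
  have h : (X ^ 2 - 1 : ℝ[X]) = X ^ 2 - C 1 := by rw [map_one]
  rw [h, Polynomial.natDegree_pow, Polynomial.natDegree_X_pow_sub_C]

lemma legendre_natDegree_le (n : ℕ) : (legendre n).natDegree ≤ n := by
  refine (Polynomial.natDegree_C_mul_le _ _).trans ?_
  refine (Polynomial.natDegree_iterate_derivative _ n).trans ?_
  rw [base_natDegree]; omega

lemma legendre_coeff_eq_zero {n t : ℕ} (h : n < t) : (legendre n).coeff t = 0 :=
  Polynomial.coeff_eq_zero_of_natDegree_lt (lt_of_le_of_lt (legendre_natDegree_le n) h)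

lemma legendre_coeff_self (n : ℕ) : (legendre n).coeff n ≠ 0 := by
  rw [legendre, Polynomial.coeff_C_mul, Polynomial.coeff_iterate_derivative]
  have hc : ((X ^ 2 - 1 : ℝ[X]) ^ n).coeff (n + n) = 1 := by
    have h := (base_monic n).coeff_natDegree
    rwa [base_natDegree, show n * 2 = n + n by omega] at h
  rw [hc]
  have h1 : (0:ℝ) < 1 / (2 ^ n * n.factorial : ℝ) := by positivity
  have h2 : (n + n).descFactorial n ≠ 0 := by
    rw [Ne, Nat.descFactorial_eq_zero_iff_lt]; omega
  simp only [nsmul_eq_mul, mul_one]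
  exact mul_ne_zero (ne_of_gt h1) (Nat.cast_ne_zero.mpr h2)

lemma legendre_expand : ∀ (n : ℕ) (q : ℝ[X]), (∀ m, n ≤ m → q.coeff m = 0) →
    ∃ a : ℕ → ℝ, ∑ j ∈ Finset.range n, C (a j) * legendre j = q := by
  intro n
  induction n with
  | zero =>
    intro q hq
    refine ⟨fun _ => 0, ?_⟩
    rw [Finset.range_zero, Finset.sum_empty]
    exact (Polynomial.ext fun m => by simp [hq m (Nat.zero_le m)]).symm
  | succ n ih =>
    intro q hq
    set b := q.coeff n / (legendre n).coeff n with hb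
    have hcoeff : ∀ m, n ≤ m → (q - C b * legendre n).coeff m = 0 := by
      intro m hm
      rcases eq_or_lt_of_le hm with rfl | hlt
      · rw [Polynomial.coeff_sub, Polynomial.coeff_C_mul, hb,
          div_mul_cancel₀ _ (legendre_coeff_self n), sub_self]
      · rw [Polynomial.coeff_sub, Polynomial.coeff_C_mul, hq m (by omega),
          legendre_coeff_eq_zero hlt, mul_zero, sub_zero]
    obtain ⟨a, ha⟩ := ih (q - C b * legendre n) hcoeff
    refine ⟨Function.update a n b, ?_⟩
    rw [Finset.sum_range_succ]
    have h1 : ∑ j ∈ Finset.range n, C (Function.update a n b j) * legendre j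
        = ∑ j ∈ Finset.range n, C (a j) * legendre j := by
      apply Finset.sum_congr rfl
      intro j hj
      rw [Function.update_of_ne (Finset.mem_range.mp hj).ne]
    rw [h1, Function.update_self, ha]
    exact sub_add_cancel q (C b * legendre n)

lemma hyp_pow (r : ℝ) (n : ℕ) : Hyperbolic ((X + C (-r)) ^ n) := by
  intro z hz
  rw [Polynomial.map_pow, Polynomial.map_add, Polynomial.map_X, Polynomial.map_C,
    Polynomial.roots_pow] at hz
  obtain ⟨-, hz⟩ := Multiset.mem_nsmul.mp hz
  have h : (X + C (algebraMap ℝ ℂ (-r)) : ℂ[X]) = X - C ((r : ℂ)) := by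
    rw [map_neg, sub_eq_add_neg, map_neg]
    norm_num [Complex.coe_algebraMap]
  rw [h, Polynomial.roots_X_sub_C, Multiset.mem_singleton] at hz
  rw [hz]
  simp

lemma coeff_sum_legendre (m t : ℕ) (b : ℕ → ℝ) (ht : m ≤ t) :
    (∑ j ∈ Finset.range (m + 3), C (b j) * legendre j).coeff t
      = b m * (legendre m).coeff t + b (m + 1) * (legendre (m + 1)).coeff t
        + b (m + 2) * (legendre (m + 2)).coeff t := by
  rw [Polynomial.finset_sum_coeff]
  simp only [Polynomial.coeff_C_mul]
  rw [show m + 3 = m + 1 + 1 + 1 from rfl, Finset.sum_range_succ, Finset.sum_range_succ,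
    Finset.sum_range_succ]
  have h0 : ∑ j ∈ Finset.range m, b j * (legendre j).coeff t = 0 := by
    apply Finset.sum_eq_zero
    intro j hj
    rw [legendre_coeff_eq_zero (by have := Finset.mem_range.mp hj; omega), mul_zero]
  rw [h0, zero_add]

lemma quad_nonneg {al be ga : ℝ} (h : ∀ r : ℝ, 0 ≤ al * r ^ 2 + be * r + ga) : 0 ≤ al := by
  by_contra hal
  push_neg at hal
  set r := max 1 ((|be| + |ga| + 1) / (-al)) with hr
  have hr1 : 1 ≤ r := le_max_left _ _
  have hr0 : (0:ℝ) ≤ r := by linarith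
  have hr2 : (|be| + |ga| + 1) / (-al) ≤ r := le_max_right _ _
  have h1 : al * r ≤ -(|be| + |ga| + 1) := by
    rw [div_le_iff₀ (by linarith : (0:ℝ) < -al)] at hr2
    nlinarith
  have hb : be * r ≤ |be| * r := mul_le_mul_of_nonneg_right (le_abs_self be) hr0
  have hg : ga ≤ |ga| * r := by nlinarith [le_abs_self ga, abs_nonneg ga]
  have h2 : al * r ^ 2 + |be| * r + |ga| * r ≤ -1 * r := by
    nlinarith [mul_le_mul_of_nonneg_right h1 hr0]
  linarith [h r]

end TuranAux

theorem stmt_3 (γ : ℕ → ℝ) (h : IsLegendreMS γ) :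
    ∀ k : ℕ, 1 ≤ k → γ k ^ 2 - γ (k - 1) * γ (k + 1) ≥ 0 := by
  intro k hk
  obtain ⟨m, rfl⟩ : ∃ m, k = m + 1 := ⟨k - 1, (Nat.succ_pred_eq_of_pos hk).symm⟩
  rw [Nat.add_sub_cancel]
  show γ (m + 1) ^ 2 - γ m * γ (m + 2) ≥ 0
  by_cases hg2 : γ (m + 2) = 0
  · rw [hg2, mul_zero, sub_zero]
    positivity
  have hA0 : (legendre (m + 2)).coeff (m + 2) ≠ 0 := TuranAux.legendre_coeff_self (m + 2)
  have hB0 : (legendre (m + 1)).coeff (m + 1) ≠ 0 := TuranAux.legendre_coeff_self (m + 1)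
  have key : ∀ r : ℝ,
      0 ≤ (((m:ℝ)+1) * γ (m+1) ^ 2 * ((m:ℝ)+2) ^ 2
            - 2 * ((m:ℝ)+2) * γ (m+2) * γ m * (((m + 2).choose m : ℕ) : ℝ)) * r ^ 2
        + (-2 * ((m:ℝ)+1) * γ (m+1) * ((m:ℝ)+2) * (γ (m+2) - γ (m+1))
              * (((legendre (m+2)).coeff (m+2))⁻¹ * (legendre (m+2)).coeff (m+1))
            + 2 * ((m:ℝ)+2) ^ 2 * γ (m+2) * (γ (m+1) - γ m)
              * ((legendre (m+1)).coeff m / (legendre (m+1)).coeff (m+1))) * r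
        + (((m:ℝ)+1) * (γ (m+2) - γ (m+1)) ^ 2
              * (((legendre (m+2)).coeff (m+2))⁻¹ * (legendre (m+2)).coeff (m+1)) ^ 2
            + 2 * ((m:ℝ)+2) * γ (m+2) * (γ (m+1) - γ m)
              * ((legendre (m+1)).coeff m / (legendre (m+1)).coeff (m+1))
              * (((legendre (m+2)).coeff (m+2))⁻¹ * (legendre (m+2)).coeff (m+1))
            - 2 * ((m:ℝ)+2) * γ (m+2) * (γ (m+2) - γ m)
              * (((legendre (m+2)).coeff (m+2))⁻¹ * (legendre (m+2)).coeff m)) := by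
    intro r
    have hpdeg : ((X + C (-r)) ^ (m + 2) : ℝ[X]).natDegree = m + 2 := by
      rw [Polynomial.natDegree_pow, Polynomial.natDegree_X_add_C, mul_one]
    obtain ⟨a, ha⟩ := TuranAux.legendre_expand (m + 3) ((X + C (-r)) ^ (m + 2))
      (fun t htt => Polynomial.coeff_eq_zero_of_natDegree_lt (by rw [hpdeg]; omega))
    have hhyp : Hyperbolic (∑ j ∈ Finset.range (m + 3), C (a j) * legendre j) := by
      rw [ha]; exact TuranAux.hyp_pow r (m + 2)
    have himg := h (m + 3) a hhyp
    have E2 : a (m + 2) * (legendre (m + 2)).coeff (m + 2) = 1 := by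
      have h0 := congrArg (fun q : ℝ[X] => q.coeff (m + 2)) ha
      rw [TuranAux.coeff_sum_legendre m (m + 2) a (by omega),
        TuranAux.legendre_coeff_eq_zero (show m < m + 2 by omega),
        TuranAux.legendre_coeff_eq_zero (show m + 1 < m + 2 by omega),
        Polynomial.coeff_X_add_C_pow] at h0
      simpa using h0
    have E1 : a (m + 1) * (legendre (m + 1)).coeff (m + 1)
        + a (m + 2) * (legendre (m + 2)).coeff (m + 1) = -((m:ℝ) + 2) * r := by
      have h0 := congrArg (fun q : ℝ[X] => q.coeff (m + 1)) ha
      rw [TuranAux.coeff_sum_legendre m (m + 1) a (by omega),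
        TuranAux.legendre_coeff_eq_zero (show m < m + 1 by omega),
        Polynomial.coeff_X_add_C_pow,
        show m + 2 - (m + 1) = 1 by omega,
        show (m + 2).choose (m + 1) = m + 2 from Nat.choose_succ_self_right (m + 1)] at h0
      push_cast at h0
      linear_combination h0
    have E0 : a m * (legendre m).coeff m + a (m + 1) * (legendre (m + 1)).coeff m
        + a (m + 2) * (legendre (m + 2)).coeff m = r ^ 2 * (((m + 2).choose m : ℕ) : ℝ) := by
      have h0 := congrArg (fun q : ℝ[X] => q.coeff m) ha
      rw [TuranAux.coeff_sum_legendre m m a le_rfl, Polynomial.coeff_X_add_C_pow,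
        show m + 2 - m = 2 by omega] at h0
      linear_combination h0
    have ha2 : a (m + 2) = ((legendre (m + 2)).coeff (m + 2))⁻¹ := by
      rw [← one_div]
      exact eq_one_div_of_mul_eq_one_left E2
    have ha1 : a (m + 1) = (-((m:ℝ) + 2) * r
        - ((legendre (m + 2)).coeff (m + 2))⁻¹ * (legendre (m + 2)).coeff (m + 1))
          / (legendre (m + 1)).coeff (m + 1) := by
      rw [eq_div_iff hB0]
      linear_combination E1 - (legendre (m + 2)).coeff (m + 1) * ha2
    have hF2 : (∑ j ∈ Finset.range (m + 3), C (γ j * a j) * legendre j).coeff (m + 2)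
        = γ (m + 2) := by
      rw [TuranAux.coeff_sum_legendre m (m + 2) _ (by omega),
        TuranAux.legendre_coeff_eq_zero (show m < m + 2 by omega),
        TuranAux.legendre_coeff_eq_zero (show m + 1 < m + 2 by omega)]
      linear_combination γ (m + 2) * E2
    have hF1 : (∑ j ∈ Finset.range (m + 3), C (γ j * a j) * legendre j).coeff (m + 1)
        = -γ (m + 1) * ((m:ℝ) + 2) * r + (γ (m + 2) - γ (m + 1))
            * (((legendre (m + 2)).coeff (m + 2))⁻¹ * (legendre (m + 2)).coeff (m + 1)) := by
      rw [TuranAux.coeff_sum_legendre m (m + 1) _ (by omega),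
        TuranAux.legendre_coeff_eq_zero (show m < m + 1 by omega)]
      linear_combination γ (m + 1) * E1 + (γ (m + 2) - γ (m + 1))
        * (legendre (m + 2)).coeff (m + 1) * ha2
    have hF0 : (∑ j ∈ Finset.range (m + 3), C (γ j * a j) * legendre j).coeff m
        = γ m * (((m + 2).choose m : ℕ) : ℝ) * r ^ 2
          + (γ (m + 1) - γ m) * (((legendre (m + 1)).coeff m / (legendre (m + 1)).coeff (m + 1))
              * (-((m:ℝ) + 2) * r
                - ((legendre (m + 2)).coeff (m + 2))⁻¹ * (legendre (m + 2)).coeff (m + 1)))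
          + (γ (m + 2) - γ m)
              * (((legendre (m + 2)).coeff (m + 2))⁻¹ * (legendre (m + 2)).coeff m) := by
      rw [TuranAux.coeff_sum_legendre m m _ le_rfl]
      linear_combination γ m * E0 + (γ (m + 1) - γ m) * (legendre (m + 1)).coeff m * ha1
        + (γ (m + 2) - γ m) * (legendre (m + 2)).coeff m * ha2
    have hQle : (∑ j ∈ Finset.range (m + 3), C (γ j * a j) * legendre j).natDegree ≤ m + 2 := by
      apply Polynomial.natDegree_sum_le_of_forall_le
      intro j hj
      exact (Polynomial.natDegree_C_mul_le _ _).trans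
        ((TuranAux.legendre_natDegree_le j).trans (by have := Finset.mem_range.mp hj; omega))
    have hQdeg : (∑ j ∈ Finset.range (m + 3), C (γ j * a j) * legendre j).natDegree = m + 2 :=
      le_antisymm hQle (Polynomial.le_natDegree_of_ne_zero (by rw [hF2]; exact hg2))
    have hnewt := TuranAux.newton_top _ m himg hQdeg
    rw [hF2, hF1, hF0] at hnewt
    nlinarith [hnewt]
  have hAL := TuranAux.quad_nonneg key
  have hch2 : (((m + 2).choose m : ℕ) : ℝ) * 2 = ((m:ℝ) + 2) * ((m:ℝ) + 1) := by
    have hs : (m + 2).choose m = (m + 2).choose 2 := by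
      have h2 := Nat.choose_symm (show 2 ≤ m + 2 by omega)
      rwa [show m + 2 - 2 = m by omega] at h2
    rw [hs, Nat.cast_choose_two]
    push_cast
    ring
  have hpos : (0:ℝ) < ((m:ℝ) + 1) * ((m:ℝ) + 2) ^ 2 := by positivity
  have hALeq : ((m:ℝ)+1) * γ (m+1) ^ 2 * ((m:ℝ)+2) ^ 2
      - 2 * ((m:ℝ)+2) * γ (m+2) * γ m * (((m + 2).choose m : ℕ) : ℝ)
      = ((m:ℝ)+1) * ((m:ℝ)+2) ^ 2 * (γ (m+1) ^ 2 - γ m * γ (m+2)) := by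
    linear_combination (-((m:ℝ)+2) * γ (m+2) * γ m) * hch2
  rw [hALeq] at hAL
  nlinarith [hAL, hpos]
end

section
/- Let p and q be real polynomials with deg q < deg p. If p is hyperbolic and all of its roots are simple (p has only simple real zeros), then there exists ε > 0 such that for every real b with |b| < ε, the polynomial p + b·q is hyperbolic. -/
open Polynomial

private lemma nodup_le_roots {K : Type*} [Field K] {f : Polynomial K} (hf : f ≠ 0)
    {s : Multiset K} (hs : s.Nodup) (h : ∀ x ∈ s, f.IsRoot x) : s ≤ f.roots := by
  classical
  rw [Multiset.le_iff_count]
  intro a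
  by_cases ha : a ∈ s
  · rw [Multiset.count_eq_one_of_mem hs ha, Polynomial.count_roots]
    exact (Polynomial.rootMultiplicity_pos hf).mpr (h a ha)
  · simp [Multiset.count_eq_zero_of_notMem ha]

private lemma eval_coe_map (f : Polynomial ℝ) (x : ℝ) :
    (f.map (algebraMap ℝ ℂ)).eval (x : ℂ) = ((f.eval x : ℝ) : ℂ) := by
  have hx : (x : ℂ) = algebraMap ℝ ℂ x := rfl
  rw [Polynomial.eval_map, hx, Polynomial.eval₂_at_apply]
  rfl

private lemma hyperbolic_of_real_roots {f : Polynomial ℝ} (hf : f ≠ 0)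
    {s : Multiset ℝ} (hs : s.Nodup) (hcard : Multiset.card s = f.natDegree)
    (h : ∀ x ∈ s, f.IsRoot x) : Hyperbolic f := by
  have hmap0 : f.map (algebraMap ℝ ℂ) ≠ 0 :=
    (Polynomial.map_ne_zero_iff (algebraMap ℝ ℂ).injective).mpr hf
  have hle : s.map ((↑) : ℝ → ℂ) ≤ (f.map (algebraMap ℝ ℂ)).roots := by
    refine nodup_le_roots hmap0 (hs.map Complex.ofReal_injective) ?_
    intro z hz
    obtain ⟨x, hx, rfl⟩ := Multiset.mem_map.mp hz
    have hx0 := h x hx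
    simp only [Polynomial.IsRoot] at hx0 ⊢
    rw [eval_coe_map, hx0, Complex.ofReal_zero]
  have hcard' : Multiset.card (f.map (algebraMap ℝ ℂ)).roots = f.natDegree := by
    rw [Polynomial.splits_iff_card_roots.mp
        (IsAlgClosed.splits (f.map (algebraMap ℝ ℂ))),
      Polynomial.natDegree_map]
  have heq : s.map ((↑) : ℝ → ℂ) = (f.map (algebraMap ℝ ℂ)).roots :=
    Multiset.eq_of_le_of_card_le hle (by rw [hcard', Multiset.card_map, hcard])
  intro z hz
  rw [← heq] at hz
  obtain ⟨x, -, rfl⟩ := Multiset.mem_map.mp hz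
  simp

private lemma sign_aux {x y : ℝ} (h : |x - y| < |y|) : 0 < x * y := by
  rcases abs_cases (x - y) with ⟨h1, h1'⟩ | ⟨h1, h1'⟩ <;>
    rcases abs_cases y with ⟨h2, h2'⟩ | ⟨h2, h2'⟩ <;> nlinarith

theorem stmt_4 (p q : Polynomial ℝ) (hdeg : q.degree < p.degree)
    (hp : Hyperbolic p) (hsimple : (p.map (algebraMap ℝ ℂ)).roots.Nodup) :
    ∃ ε > (0 : ℝ), ∀ b : ℝ, |b| < ε → Hyperbolic (p + C b * q) := by
  classical
  have hpne : p ≠ 0 := by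
    intro h
    rw [h, Polynomial.degree_zero] at hdeg
    exact absurd hdeg (by simp)
  set n := p.natDegree with hn
  by_cases hn0 : n = 0
  · -- degenerate case : p is a nonzero constant, q = 0
    have hq0 : q = 0 := by
      have hd : p.degree = 0 := by
        rw [Polynomial.degree_eq_natDegree hpne, ← hn, hn0]; rfl
      rw [hd] at hdeg
      exact Polynomial.degree_eq_bot.mp (Nat.WithBot.lt_zero_iff.mp hdeg)
    exact ⟨1, one_pos, fun b _ => by simpa [hq0] using hp⟩
  -- main case
  have hmap0 : p.map (algebraMap ℝ ℂ) ≠ 0 :=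
    (Polynomial.map_ne_zero_iff (algebraMap ℝ ℂ).injective).mpr hpne
  have hcardC : Multiset.card (p.map (algebraMap ℝ ℂ)).roots = n := by
    rw [Polynomial.splits_iff_card_roots.mp
        (IsAlgClosed.splits (p.map (algebraMap ℝ ℂ))),
      Polynomial.natDegree_map]
  set S : Multiset ℝ := (p.map (algebraMap ℝ ℂ)).roots.map Complex.re with hS
  have hSmap : S.map ((↑) : ℝ → ℂ) = (p.map (algebraMap ℝ ℂ)).roots := by
    rw [hS, Multiset.map_map]
    refine (Multiset.map_congr rfl ?_).trans (Multiset.map_id _)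
    intro z hz
    have := hp z hz
    simp [Complex.ext_iff, this]
  have hSnodup : S.Nodup := by
    have h1 : (S.map ((↑) : ℝ → ℂ)).Nodup := hSmap ▸ hsimple
    exact h1.of_map _
  have hScard : Multiset.card S = n := by rw [hS, Multiset.card_map, hcardC]
  have hSroot : ∀ x ∈ S, p.IsRoot x := by
    intro x hx
    have hxC : (x : ℂ) ∈ (p.map (algebraMap ℝ ℂ)).roots := by
      rw [← hSmap]; exact Multiset.mem_map_of_mem _ hx
    have hev : (p.map (algebraMap ℝ ℂ)).eval (x : ℂ) = 0 :=
      (Polynomial.mem_roots hmap0).mp hxC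
    rw [eval_coe_map] at hev
    exact_mod_cast hev
  have hrootsS : p.roots = S := by
    refine (Multiset.eq_of_le_of_card_le (nodup_le_roots hpne hSnodup hSroot) ?_).symm
    rw [hScard]
    exact p.card_roots' 
  have hc : p.leadingCoeff ≠ 0 := Polynomial.leadingCoeff_ne_zero.mpr hpne
  set c := p.leadingCoeff with hcdef
  have hsplit : Polynomial.Splits p :=
    Polynomial.splits_iff_card_roots.mpr (by rw [hrootsS, hScard])
  -- sorted list of roots
  set L : List ℝ := p.roots.sort (· ≤ ·) with hL
  have hLcoe : (L : Multiset ℝ) = p.roots := Multiset.sort_eq _ _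
  have hLlen : L.length = n := by
    have := congrArg Multiset.card hLcoe
    simpa [hrootsS, hScard] using this
  have hLnodup : L.Nodup := by
    have : (L : Multiset ℝ).Nodup := by rw [hLcoe, hrootsS]; exact hSnodup
    exact this
  have hLsorted : L.Pairwise (· ≤ ·) := Multiset.pairwise_sort _ _
  set rr : ℕ → ℝ := fun i => L.getD i 0 with hrr
  have hget : ∀ i : Fin L.length, L.get i = rr i.val := by
    intro i
    simp only [hrr, List.get_eq_getElem]
    exact (List.getD_eq_getElem L 0 i.isLt).symm
  have hrlt : ∀ i j : ℕ, i < j → j < n → rr i < rr j := by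
    intro i j hij hjn
    have hi' : i < L.length := by omega
    have hj' : j < L.length := by omega
    have hle : L.get ⟨i, hi'⟩ ≤ L.get ⟨j, hj'⟩ :=
      List.pairwise_iff_get.mp hLsorted ⟨i, hi'⟩ ⟨j, hj'⟩ hij
    have hne : L.get ⟨i, hi'⟩ ≠ L.get ⟨j, hj'⟩ := by
      intro h
      have := List.nodup_iff_injective_get.mp hLnodup h
      simp at this
      omega
    have := lt_of_le_of_ne hle hne
    rwa [hget ⟨i, hi'⟩, hget ⟨j, hj'⟩] at this
  have hrroot : ∀ i, i < n → p.IsRoot (rr i) := by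
    intro i hi
    have hi' : i < L.length := by omega
    have hmem : L.get ⟨i, hi'⟩ ∈ (L : Multiset ℝ) := by
      exact_mod_cast List.get_mem L ⟨i, hi'⟩
    rw [hLcoe] at hmem
    have := (Polynomial.mem_roots hpne).mp hmem
    rwa [hget ⟨i, hi'⟩] at this
  -- interleaving points
  set t : ℕ → ℝ := fun i =>
    if i = 0 then rr 0 - 1 else if i < n then (rr (i - 1) + rr i) / 2
      else rr (n - 1) + 1 + (i - n : ℕ) with ht
  have ht1 : ∀ i, i < n → t i < rr i := by
    intro i hi
    by_cases h0 : i = 0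
    · subst h0; simp only [ht, if_pos rfl]; linarith
    · have h1 : rr (i - 1) < rr i := hrlt _ _ (by omega) hi
      simp only [ht, if_neg h0, if_pos hi]
      linarith
  have ht2 : ∀ i, i < n → rr i < t (i + 1) := by
    intro i hi
    by_cases h1 : i + 1 < n
    · have h2 : rr i < rr (i + 1) := hrlt _ _ (by omega) h1
      simp only [ht, if_neg (Nat.succ_ne_zero i), if_pos h1, Nat.add_sub_cancel]
      linarith
    · have hie : rr i = rr (n - 1) := by rw [(by omega : i = n - 1)]
      have hsub : i + 1 - n = 0 := by omega
      have hteq : t (i + 1) = rr (n - 1) + 1 + ((i + 1 - n : ℕ) : ℝ) := by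
        simp only [ht, if_neg (Nat.succ_ne_zero i), if_neg h1]
      rw [hteq, hsub, hie]
      push_cast
      linarith
  have htmono : StrictMono t := by
    apply strictMono_nat_of_lt_succ
    intro i
    by_cases hi : i < n
    · exact (ht1 i hi).trans (ht2 i hi)
    · have h0 : ¬ i = 0 := by omega
      have h1 : ¬ i + 1 < n := by omega
      have h2 : ¬ i < n := hi
      simp only [ht, if_neg h0, if_neg (Nat.succ_ne_zero i), if_neg h1, if_neg h2]
      have : ((i - n : ℕ) : ℝ) < ((i + 1 - n : ℕ) : ℝ) := by
        exact_mod_cast (by omega : i - n < i + 1 - n)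
      linarith
  -- eval formula
  have peval : ∀ x : ℝ, p.eval x = c * ∏ i ∈ Finset.range n, (x - rr i) := by
    intro x
    conv_lhs => rw [hsplit.eq_prod_roots]
    rw [Polynomial.eval_mul, Polynomial.eval_C, ← hcdef, Polynomial.eval_multiset_prod]
    congr 1
    rw [← hLcoe, Multiset.map_coe, Multiset.map_coe, Multiset.prod_coe]
    conv_lhs => rw [← List.ofFn_get L]
    rw [List.map_ofFn, List.map_ofFn, List.prod_ofFn]
    have hterm : ∀ i : Fin L.length,
        ((fun q' : Polynomial ℝ => Polynomial.eval x q') ∘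
          ((fun a => Polynomial.X - Polynomial.C a) ∘ L.get)) i = x - rr i.val := by
      intro i
      have h := hget i
      rw [List.get_eq_getElem] at h
      simp [h]
    rw [Finset.prod_congr rfl (fun i _ => hterm i)]
    rw [Fin.prod_univ_eq_prod_range (fun k => x - rr k), hLlen]
  -- p does not vanish at the points t i
  have htneR : ∀ i j, i ≤ n → j < n → t i ≠ rr j := by
    intro i j hi hj
    rcases le_or_gt i j with hij | hij
    · exact ne_of_lt (lt_of_le_of_lt (htmono.monotone hij) (ht1 j hj))
    · exact ne_of_gt (lt_of_lt_of_le (ht2 j hj) (htmono.monotone hij))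
  have htne : ∀ i, i ≤ n → p.eval (t i) ≠ 0 := by
    intro i hi
    rw [peval]
    refine mul_ne_zero hc (Finset.prod_ne_zero_iff.mpr ?_)
    intro j hj
    rw [Finset.mem_range] at hj
    exact sub_ne_zero.mpr (htneR i j hi hj)
  -- sign alternation of p at the t i
  have hsign : ∀ i, i < n → p.eval (t i) * p.eval (t (i + 1)) < 0 := by
    intro i hi
    rw [peval, peval]
    have hrw : (c * ∏ j ∈ Finset.range n, (t i - rr j)) *
        (c * ∏ j ∈ Finset.range n, (t (i + 1) - rr j)) =
        c ^ 2 * ∏ j ∈ Finset.range n, ((t i - rr j) * (t (i + 1) - rr j)) := by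
      rw [Finset.prod_mul_distrib]; ring
    rw [hrw]
    have hc2 : 0 < c ^ 2 := lt_of_le_of_ne (sq_nonneg c) (Ne.symm (pow_ne_zero 2 hc))
    refine mul_neg_of_pos_of_neg hc2 ?_
    rw [← Finset.mul_prod_erase _ _ (Finset.mem_range.mpr hi)]
    have hgi : (t i - rr i) * (t (i + 1) - rr i) < 0 :=
      mul_neg_of_neg_of_pos (by linarith [ht1 i hi]) (by linarith [ht2 i hi])
    refine mul_neg_of_neg_of_pos hgi (Finset.prod_pos ?_)
    intro j hj
    obtain ⟨hne, hjn⟩ := Finset.mem_erase.mp hj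
    rw [Finset.mem_range] at hjn
    rcases lt_or_gt_of_ne hne with h | h
    · -- j < i : both points are above rr j
      have h1 : rr j < t i := lt_of_lt_of_le (ht2 j hjn) (htmono.monotone (by omega : j + 1 ≤ i))
      have h2 : rr j < t (i + 1) := h1.trans_le (htmono.monotone (Nat.le_succ i))
      exact mul_pos (by linarith) (by linarith)
    · -- i < j : both points are below rr j
      have h1 : t (i + 1) < rr j :=
        lt_of_le_of_lt (htmono.monotone (by omega : i + 1 ≤ j)) (ht1 j hjn)
      have h2 : t i < rr j := lt_of_le_of_lt (htmono.monotone (Nat.le_succ i)) h1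
      exact mul_pos_of_neg_of_neg (by linarith) (by linarith)
  -- choice of ε
  have hne' : (Finset.range (n + 1)).Nonempty := ⟨0, Finset.mem_range.mpr (by omega)⟩
  set m : ℝ := (Finset.range (n + 1)).inf' hne' (fun i => |p.eval (t i)|) with hm
  have hmpos : 0 < m := by
    rw [hm, Finset.lt_inf'_iff]
    intro i hi
    exact abs_pos.mpr (htne i (by rw [Finset.mem_range] at hi; omega))
  set M : ℝ := (Finset.range (n + 1)).sup' hne' (fun i => |q.eval (t i)|) with hM
  have hM0 : 0 ≤ M :=
    le_trans (abs_nonneg (q.eval (t 0)))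
      (Finset.le_sup' (fun i => |q.eval (t i)|) (Finset.mem_range.mpr (Nat.succ_pos n)))
  refine ⟨m / (M + 1), by positivity, ?_⟩
  intro b hb
  set f : Polynomial ℝ := p + C b * q with hf
  have hdCq : (C b * q).degree < p.degree :=
    lt_of_le_of_lt (le_trans (Polynomial.degree_mul_le _ _)
      (by simpa using add_le_add_left Polynomial.degree_C_le q.degree)) hdeg
  have hfd : f.degree = p.degree := Polynomial.degree_add_eq_left_of_degree_lt hdCq
  have hfne : f ≠ 0 := by
    intro h
    rw [h, Polynomial.degree_zero] at hfd
    exact hpne (Polynomial.degree_eq_bot.mp hfd.symm)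
  have hfnat : f.natDegree = n := Polynomial.natDegree_eq_of_degree_eq hfd
  -- f has the same signs as p at the points t i
  have hbM : |b| * (M + 1) < m := (lt_div_iff₀ (by positivity)).mp hb
  have hclose : ∀ i, i ≤ n → 0 < f.eval (t i) * p.eval (t i) := by
    intro i hi
    apply sign_aux
    have hev : f.eval (t i) - p.eval (t i) = b * q.eval (t i) := by
      simp [hf]
    rw [hev, abs_mul]
    have hq' : |q.eval (t i)| ≤ M :=
      Finset.le_sup' (fun j => |q.eval (t j)|) (Finset.mem_range.mpr (by omega))
    have hp' : m ≤ |p.eval (t i)| :=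
      Finset.inf'_le (fun j => |p.eval (t j)|) (Finset.mem_range.mpr (by omega))
    have h1 : |b| * |q.eval (t i)| ≤ |b| * (M + 1) :=
      mul_le_mul_of_nonneg_left (by linarith) (abs_nonneg b)
    linarith
  have hfsign : ∀ i, i < n → f.eval (t i) * f.eval (t (i + 1)) < 0 := by
    intro i hi
    have h1 := hclose i (by omega)
    have h2 := hclose (i + 1) (by omega)
    have h3 := hsign i hi
    by_contra hcon
    push_neg at hcon
    have h4 := mul_nonpos_of_nonneg_of_nonpos hcon h3.le
    have key : (f.eval (t i) * p.eval (t i)) * (f.eval (t (i + 1)) * p.eval (t (i + 1))) =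
        (f.eval (t i) * f.eval (t (i + 1))) * (p.eval (t i) * p.eval (t (i + 1))) := by ring
    nlinarith [mul_pos h1 h2]
  -- roots of f by the intermediate value theorem
  have hex : ∀ i : Fin n, ∃ s : ℝ,
      s ∈ Set.Ioo (t i.val) (t (i.val + 1)) ∧ f.eval s = 0 := by
    intro i
    have hlt : t i.val < t (i.val + 1) := htmono (Nat.lt_succ_self _)
    have hsg := hfsign i.val i.isLt
    have hcont : ContinuousOn (fun x => f.eval x) (Set.Icc (t i.val) (t (i.val + 1))) :=
      (Polynomial.continuous f).continuousOn
    rcases lt_trichotomy (f.eval (t i.val)) 0 with hneg | hzero | hpos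
    · have hpos' : 0 < f.eval (t (i.val + 1)) := by nlinarith
      obtain ⟨s, hs, hfs⟩ := intermediate_value_Ioo hlt.le hcont ⟨hneg, hpos'⟩
      exact ⟨s, hs, hfs⟩
    · rw [hzero] at hsg; simp at hsg
    · have hneg' : f.eval (t (i.val + 1)) < 0 := by nlinarith
      obtain ⟨s, hs, hfs⟩ := intermediate_value_Ioo' hlt.le hcont ⟨hneg', hpos⟩
      exact ⟨s, hs, hfs⟩
  choose s hs1 hs2 using hex
  have hsmono : StrictMono s := by
    intro i j hij
    calc s i < t (i.val + 1) := (hs1 i).2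
      _ ≤ t j.val := htmono.monotone (by exact_mod_cast Nat.succ_le_of_lt hij)
      _ < s j := (hs1 j).1
  refine hyperbolic_of_real_roots (s := Finset.univ.val.map s) hfne
    (Multiset.Nodup.map hsmono.injective Finset.univ.nodup) ?_ ?_
  · rw [Multiset.card_map, hfnat]
    exact Finset.card_fin n
  · intro x hx
    obtain ⟨i, -, rfl⟩ := Multiset.mem_map.mp hx
    exact hs2 i
end

section
/- For each integer n ≥ 2, define E_n = { b ∈ ℝ : the polynomial Le_n(x) + b·Le_{n−2}(x) is hyperbolic }. Then E_n has a maximum element, and this maximum is a positive real number; that is, there exists β* > 0 with β* ∈ E_n and b ≤ β* for every b ∈ E_n. -/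
open Polynomial

-- ### Auxiliary lemmas ###

lemma q_eq (n : ℕ) : ((X ^ 2 - 1 : ℝ[X]) ^ n) = expand ℝ 2 ((X + C (-1)) ^ n) := by
  rw [map_pow, map_add, expand_X, expand_C]
  norm_num
  ring_nf

lemma q_coeff (n k : ℕ) : ((X ^ 2 - 1 : ℝ[X]) ^ n).coeff k =
    if 2 ∣ k then (-1 : ℝ) ^ (n - k / 2) * n.choose (k / 2) else 0 := by
  rw [q_eq, coeff_expand (by norm_num)]
  split_ifs with h
  · rw [coeff_X_add_C_pow]
  · rfl

lemma q_coeff_top (n : ℕ) : ((X ^ 2 - 1 : ℝ[X]) ^ n).coeff (2 * n) = 1 := by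
  rw [q_coeff]
  simp [Nat.mul_div_cancel_left]

lemma q_natDegree (n : ℕ) : ((X ^ 2 - 1 : ℝ[X]) ^ n).natDegree = 2 * n := by
  have h1 : ((X ^ 2 - 1 : ℝ[X])).natDegree = 2 := by
    simpa using natDegree_X_pow_sub_C (n := 2) (r := (1:ℝ))
  have h2 : ((X ^ 2 - 1 : ℝ[X])).Monic := by
    simpa using monic_X_pow_sub_C (1:ℝ) (n := 2) (by norm_num)
  rw [h2.natDegree_pow, h1, mul_comm]

lemma f_coeff (n k m : ℕ) : (derivative^[k] ((X ^ 2 - 1 : ℝ[X]) ^ n)).coeff m =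
    ((m + k).descFactorial k : ℝ) * ((X ^ 2 - 1 : ℝ[X]) ^ n).coeff (m + k) := by
  rw [coeff_iterate_derivative, nsmul_eq_mul]

lemma f_coeff_n (n : ℕ) : (derivative^[n] ((X ^ 2 - 1 : ℝ[X]) ^ n)).coeff n =
    ((2 * n).descFactorial n : ℝ) := by
  rw [f_coeff, ← two_mul, q_coeff_top, mul_one]

lemma f_natDegree (n : ℕ) : (derivative^[n] ((X ^ 2 - 1 : ℝ[X]) ^ n)).natDegree = n := by
  refine le_antisymm ?_ (le_natDegree_of_ne_zero ?_)
  · calc (derivative^[n] ((X ^ 2 - 1 : ℝ[X]) ^ n)).natDegree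
        ≤ ((X ^ 2 - 1 : ℝ[X]) ^ n).natDegree - n := natDegree_iterate_derivative _ _
    _ = n := by rw [q_natDegree]; omega
  · rw [f_coeff_n]
    have : (2 * n).descFactorial n ≠ 0 := by
      rw [Ne, Nat.descFactorial_eq_zero_iff_lt]; omega
    exact_mod_cast this


lemma cpos (n : ℕ) : (0:ℝ) < 1 / (2 ^ n * n.factorial : ℝ) := by positivity

lemma legendre_coeff (n m : ℕ) : (legendre n).coeff m =
    (1 / (2 ^ n * n.factorial : ℝ)) * (derivative^[n] ((X ^ 2 - 1 : ℝ[X]) ^ n)).coeff m := by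
  rw [legendre, coeff_C_mul]

lemma legendre_natDegree (n : ℕ) : (legendre n).natDegree = n := by
  rw [legendre, natDegree_C_mul (by positivity : (1 / (2 ^ n * n.factorial : ℝ)) ≠ 0), f_natDegree]

lemma legendre_ne_zero (n : ℕ) : legendre n ≠ 0 := by
  intro h
  have := legendre_coeff n n
  rw [h, coeff_zero, f_coeff_n] at this
  have h2 : (2 * n).descFactorial n ≠ 0 := by
    rw [Ne, Nat.descFactorial_eq_zero_iff_lt]; omega
  have h3 : (0:ℝ) < 1 / (2 ^ n * n.factorial : ℝ) := by positivity
  have h4 : ((2 * n).descFactorial n : ℝ) > 0 := by exact_mod_cast Nat.pos_of_ne_zero h2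
  nlinarith

lemma legendre_leadingCoeff_pos (n : ℕ) : 0 < (legendre n).leadingCoeff := by
  rw [leadingCoeff, legendre_natDegree, legendre_coeff, f_coeff_n]
  have h2 : (2 * n).descFactorial n ≠ 0 := by
    rw [Ne, Nat.descFactorial_eq_zero_iff_lt]; omega
  have h4 : ((2 * n).descFactorial n : ℝ) > 0 := by exact_mod_cast Nat.pos_of_ne_zero h2
  positivity

lemma legendre_coeff_sub_one (n : ℕ) (hn : 1 ≤ n) : (legendre n).coeff (n - 1) = 0 := by
  rw [legendre_coeff, f_coeff]
  have : ¬ (2 ∣ (n - 1 + n)) := by omega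
  rw [q_coeff, if_neg this, mul_zero, mul_zero]

lemma legendre_coeff_sub_two_neg (n : ℕ) (hn : 2 ≤ n) : (legendre n).coeff (n - 2) < 0 := by
  rw [legendre_coeff, f_coeff]
  have h2 : 2 ∣ (n - 2 + n) := by omega
  have h3 : (n - 2 + n) / 2 = n - 1 := by omega
  have h4 : n - (n - 1) = 1 := by omega
  rw [q_coeff, if_pos h2, h3, h4, pow_one]
  have h5 : (n - 2 + n).descFactorial n ≠ 0 := by
    rw [Ne, Nat.descFactorial_eq_zero_iff_lt]; omega
  have h6 : ((n - 2 + n).descFactorial n : ℝ) > 0 := by exact_mod_cast Nat.pos_of_ne_zero h5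
  have h7 : (0:ℝ) < n.choose (n-1) := by
    have : n.choose (n-1) ≠ 0 := by
      rw [Ne, Nat.choose_eq_zero_iff]; omega
    exact_mod_cast Nat.pos_of_ne_zero this
  have h8 : (0:ℝ) < 1 / (2 ^ n * n.factorial : ℝ) := by positivity
  have h9 : (-1 : ℝ) * (n.choose (n-1)) < 0 := by nlinarith
  exact mul_neg_of_pos_of_neg h8 (mul_neg_of_pos_of_neg h6 h9)


variable {n : ℕ}

lemma legendre_degree (n : ℕ) : (legendre n).degree = n := by
  rw [degree_eq_natDegree (legendre_ne_zero n), legendre_natDegree]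

lemma deg_lt (b : ℝ) (hn : 2 ≤ n) :
    (C b * legendre (n - 2)).degree < (legendre n).degree := by
  calc (C b * legendre (n - 2)).degree ≤ (legendre (n-2)).degree := by
        calc (C b * legendre (n-2)).degree ≤ (C b).degree + (legendre (n-2)).degree :=
              degree_mul_le _ _
        _ ≤ 0 + (legendre (n-2)).degree := add_le_add_left degree_C_le _
        _ = (legendre (n-2)).degree := zero_add _
  _ < (legendre n).degree := by
        rw [legendre_degree, legendre_degree]
        exact_mod_cast Nat.sub_lt_of_pos_le (by omega) (by omega)

lemma P_natDegree (b : ℝ) (hn : 2 ≤ n) :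
    (legendre n + C b * legendre (n - 2)).natDegree = n := by
  rw [natDegree_eq_of_degree_eq (degree_add_eq_left_of_degree_lt (deg_lt b hn))]
  exact legendre_natDegree n

lemma P_leadingCoeff (b : ℝ) (hn : 2 ≤ n) :
    (legendre n + C b * legendre (n - 2)).leadingCoeff = (legendre n).leadingCoeff := by
  rw [add_comm, leadingCoeff_add_of_degree_lt (deg_lt b hn)]

lemma P_ne_zero (b : ℝ) (hn : 2 ≤ n) : legendre n + C b * legendre (n - 2) ≠ 0 := by
  intro h
  have := P_leadingCoeff b hn
  rw [h, leadingCoeff_zero] at this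
  exact (legendre_leadingCoeff_pos n).ne this

lemma P_coeff (b : ℝ) (m : ℕ) : (legendre n + C b * legendre (n - 2)).coeff m
    = (legendre n).coeff m + b * (legendre (n-2)).coeff m := by
  rw [coeff_add, coeff_C_mul]


lemma poly_rolle (p : ℝ[X]) (a b : ℝ) (hab : a < b) (ha : p.eval a = 0) (hb : p.eval b = 0) :
    ∃ c ∈ Set.Ioo a b, p.derivative.eval c = 0 := by
  obtain ⟨c, hc, hc'⟩ := exists_deriv_eq_zero hab
      ((p.continuous).continuousOn) (by rw [ha, hb])
  exact ⟨c, hc, by rwa [Polynomial.deriv] at hc'⟩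

lemma f_eval_pm_one (n k : ℕ) (hk : k < n) (x : ℝ) (hx : x ^ 2 - 1 = 0) :
    (derivative^[k] ((X ^ 2 - 1 : ℝ[X]) ^ n)).eval x = 0 := by
  obtain ⟨r, hr⟩ := pow_sub_dvd_iterate_derivative_pow (X ^ 2 - 1 : ℝ[X]) n k
  rw [hr, eval_mul, eval_pow]
  have : (X ^ 2 - 1 : ℝ[X]).eval x = 0 := by simp [hx]
  rw [this, zero_pow (by omega), zero_mul]

lemma exists_roots (n : ℕ) : ∀ k, k ≤ n → ∃ x : Fin k → ℝ, StrictMono x ∧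
    (∀ i, x i ∈ Set.Ioo (-1:ℝ) 1) ∧
    ∀ i, (derivative^[k] ((X ^ 2 - 1 : ℝ[X]) ^ n)).eval (x i) = 0 := by
  intro k
  induction k with
  | zero => intro _; exact ⟨fun i => i.elim0, fun i => i.elim0, fun i => i.elim0, fun i => i.elim0⟩
  | succ k ih =>
    intro hk
    obtain ⟨x, hmono, hIoo, hroot⟩ := ih (by omega)
    -- the chain of k+2 points: -1, x 0, ..., x (k-1), 1
    set w : ℕ → ℝ := fun i => if h0 : i = 0 then -1 else if h : i ≤ k then x ⟨i-1, by omega⟩ else 1 with hw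
    have hw0 : w 0 = -1 := by simp [hw]
    have hwlast : w (k+1) = 1 := by simp [hw]
    have hwx : ∀ i (h : 1 ≤ i) (h2 : i ≤ k), w i = x ⟨i-1, by omega⟩ := by
      intro i h h2
      have hne : i ≠ 0 := by omega
      simp only [hw]
      rw [dif_neg hne, dif_pos h2]
    have hadj : ∀ i, i ≤ k → w i < w (i+1) := by
      intro i hi
      rcases Nat.eq_zero_or_pos i with rfl | hpos
      · rcases Nat.eq_zero_or_pos k with rfl | hkpos
        · rw [hw0, hwlast]; norm_num
        · rw [hw0, hwx 1 le_rfl hkpos]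
          exact (hIoo _).1
      · rcases eq_or_lt_of_le hi with rfl | hlt
        · rw [hwx i hpos le_rfl, hwlast]
          exact (hIoo _).2
        · rw [hwx i hpos hi, hwx (i+1) (by omega) (by omega)]
          exact hmono (by simp; omega)
    have hwmono : ∀ j, j ≤ k + 1 → ∀ i, i < j → w i < w j := by
      intro j
      induction j with
      | zero => omega
      | succ j ihj =>
        intro hj i hi
        rcases eq_or_lt_of_le (Nat.lt_succ_iff.mp hi) with rfl | hlt
        · exact hadj i (by omega)
        · exact (ihj (by omega) i hlt).trans (hadj j (by omega))
    have hwroot : ∀ i, i ≤ k + 1 → (derivative^[k] ((X ^ 2 - 1 : ℝ[X]) ^ n)).eval (w i) = 0 := by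
      intro i hi
      rcases Nat.eq_zero_or_pos i with rfl | hpos
      · rw [hw0]; exact f_eval_pm_one n k (by omega) _ (by norm_num)
      · rcases eq_or_lt_of_le hi with rfl | hlt
        · rw [hwlast]; exact f_eval_pm_one n k (by omega) _ (by norm_num)
        · rw [hwx i hpos (by omega)]; exact hroot _
    have key : ∀ i : Fin (k+1), ∃ c ∈ Set.Ioo (w i) (w (i+1)),
        (derivative^[k+1] ((X ^ 2 - 1 : ℝ[X]) ^ n)).eval c = 0 := by
      intro i
      rw [Function.iterate_succ_apply']
      exact poly_rolle _ _ _ (hadj i (by omega)) (hwroot i (by omega)) (hwroot (i+1) (by omega))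
    choose z hz hzr using key
    refine ⟨z, ?_, ?_, hzr⟩
    · intro i j hij
      have h1 : z i < w (i+1) := (hz i).2
      have h2 : w (j : ℕ) < z j := (hz j).1
      have hij' : (i:ℕ) < (j:ℕ) := hij
      have : w ((i : ℕ)+1) ≤ w (j : ℕ) := by
        rcases Nat.lt_or_ge ((i:ℕ)+1) (j:ℕ) with h | h
        · exact le_of_lt (hwmono _ (by omega) _ h)
        · have he : (i:ℕ)+1 = (j:ℕ) := by omega
          rw [he]
      linarith
    · intro i
      have h1 : w (i : ℕ) < z i := (hz i).1
      have h2 : z i < w ((i:ℕ)+1) := (hz i).2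
      constructor
      · have : w 0 ≤ w (i : ℕ) := by
          rcases Nat.eq_zero_or_pos (i:ℕ) with h | h
          · rw [h]
          · exact le_of_lt (hwmono _ (by omega) _ h)
        rw [hw0] at this; linarith
      · have : w ((i:ℕ)+1) ≤ w (k+1) := by
          rcases Nat.lt_or_ge ((i:ℕ)+1) (k+1) with h | h
          · exact le_of_lt (hwmono _ le_rfl _ h)
          · have he : (i:ℕ)+1 = k+1 := by omega
            rw [he]
        rw [hwlast] at this; linarith


lemma map_ne_zero' {p : ℝ[X]} (hp : p ≠ 0) : p.map (algebraMap ℝ ℂ) ≠ 0 :=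
  (Polynomial.map_ne_zero_iff (algebraMap ℝ ℂ).injective).mpr hp

lemma natDegree_map' (p : ℝ[X]) : (p.map (algebraMap ℝ ℂ)).natDegree = p.natDegree :=
  natDegree_map_eq_of_injective (algebraMap ℝ ℂ).injective p

lemma hyperbolic_of_distinct_real_roots' (p : ℝ[X]) (hp : p ≠ 0) {d : ℕ}
    (hd : p.natDegree = d) (x : Fin d → ℝ) (hinj : Function.Injective x)
    (hroot : ∀ i, p.eval (x i) = 0) : Hyperbolic p := by
  classical
  set P := p.map (algebraMap ℝ ℂ) with hP
  have hPne : P ≠ 0 := map_ne_zero' hp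
  have hPd : P.natDegree = p.natDegree := natDegree_map' p
  set T : Finset ℂ := Finset.image (fun i => ((x i : ℝ) : ℂ)) Finset.univ with hT
  have hTcard : T.card = d := by
    rw [hT, Finset.card_image_of_injective _
      (fun i j hij => hinj (Complex.ofReal_injective hij))]
    simp
  have hTsub : T ⊆ P.roots.toFinset := by
    intro z hz
    rw [hT, Finset.mem_image] at hz
    obtain ⟨i, _, rfl⟩ := hz
    rw [Multiset.mem_toFinset, mem_roots hPne]
    show P.eval _ = 0
    rw [hP, eval_map]
    have hcast : ((x i : ℝ) : ℂ) = algebraMap ℝ ℂ (x i) := rfl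
    rw [hcast, eval₂_at_apply, hroot i, map_zero]
  have hcard : P.roots.toFinset.card ≤ p.natDegree := by
    calc P.roots.toFinset.card ≤ Multiset.card P.roots := Multiset.toFinset_card_le _
    _ ≤ P.natDegree := P.card_roots'
    _ = p.natDegree := hPd
  have hTeq : T = P.roots.toFinset :=
    Finset.eq_of_subset_of_card_le hTsub (by omega)
  intro z hz
  have : z ∈ T := by rw [hTeq, Multiset.mem_toFinset]; exact hz
  rw [hT, Finset.mem_image] at this
  obtain ⟨i, _, rfl⟩ := this
  simp

lemma pow_le_prod_of_le (c : ℝ) (hc : 0 ≤ c) (s : Multiset ℝ) (h : ∀ y ∈ s, c ≤ y) :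
    c ^ (Multiset.card s) ≤ s.prod := by
  induction s using Multiset.induction_on with
  | empty => simp
  | cons a s ih =>
    rw [Multiset.prod_cons, Multiset.card_cons, pow_succ, mul_comm]
    have ha := h a (Multiset.mem_cons_self a s)
    have hs := ih (fun y hy => h y (Multiset.mem_cons_of_mem hy))
    have : (0:ℝ) ≤ c ^ Multiset.card s := pow_nonneg hc _
    exact mul_le_mul ha hs this (le_trans hc ha)

lemma hyperbolic_iff (p : ℝ[X]) (hp : p ≠ 0) : Hyperbolic p ↔
    ∀ z : ℂ, |p.leadingCoeff| * |z.im| ^ p.natDegree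
      ≤ ‖(p.map (algebraMap ℝ ℂ)).eval z‖ := by
  constructor
  · intro hyp z
    set P := p.map (algebraMap ℝ ℂ) with hPdef
    have hPne : P ≠ 0 := map_ne_zero' hp
    have hsplit : P.Splits := IsAlgClosed.splits P
    have hcard : Multiset.card P.roots = P.natDegree := splits_iff_card_roots.mp hsplit
    have hfac := C_leadingCoeff_mul_prod_multiset_X_sub_C (p := P) hcard
    have heval : P.eval z = P.leadingCoeff * (P.roots.map (fun r => z - r)).prod := by
      conv_lhs => rw [← hfac]
      rw [eval_mul, eval_C, eval_multiset_prod, Multiset.map_map]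
      refine congrArg _ (congrArg Multiset.prod (Multiset.map_congr rfl ?_))
      intro r _
      simp
    rw [heval, norm_mul]
    have hlc : ‖P.leadingCoeff‖ = |p.leadingCoeff| := by
      rw [hPdef, leadingCoeff_map_of_leadingCoeff_ne_zero]
      · exact (Complex.norm_real _).trans (Real.norm_eq_abs _)
      · simpa using leadingCoeff_ne_zero.mpr hp
    rw [hlc]
    have habs : ‖(P.roots.map (fun r => z - r)).prod‖
        = ((P.roots.map (fun r => ‖z - r‖)).prod) := by
      exact (map_multiset_prod (normHom (α := ℂ)) _).trans (by rw [Multiset.map_map]; rfl)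
    rw [habs]
    apply mul_le_mul_of_nonneg_left _ (abs_nonneg _)
    have : p.natDegree = Multiset.card (P.roots.map (fun r => ‖z - r‖)) := by
      rw [Multiset.card_map, hcard, natDegree_map' p]
    rw [this]
    apply pow_le_prod_of_le _ (abs_nonneg _)
    intro y hy
    rw [Multiset.mem_map] at hy
    obtain ⟨r, hr, rfl⟩ := hy
    have him : (z - r).im = z.im := by
      have := hyp r hr
      simp [Complex.sub_im, this]
    calc |z.im| = |(z - r).im| := by rw [him]
    _ ≤ ‖z - r‖ := Complex.abs_im_le_norm _
  · intro h z hz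
    have hev : (p.map (algebraMap ℝ ℂ)).eval z = 0 := by
      exact (mem_roots (map_ne_zero' hp)).mp hz
    have := h z
    rw [hev, norm_zero] at this
    have hlc : |p.leadingCoeff| > 0 := abs_pos.mpr (leadingCoeff_ne_zero.mpr hp)
    by_contra him
    have : (0:ℝ) < |p.leadingCoeff| * |z.im| ^ p.natDegree := by
      have : |z.im| > 0 := abs_pos.mpr him
      positivity
    linarith


section esymm
variable {R S : Type*} [CommRing R] [CommRing S]

section esymm
variable {R S : Type*} [CommRing R] [CommRing S]

lemma esymm_cons (a : R) (s : Multiset R) (k : ℕ) :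
    (a ::ₘ s).esymm (k+1) = a * s.esymm k + s.esymm (k+1) := by
  rw [Multiset.esymm, Multiset.powersetCard_cons, Multiset.map_add, Multiset.sum_add,
    Multiset.esymm, Multiset.map_map, Multiset.esymm]
  rw [add_comm]
  congr 1
  rw [← Multiset.sum_map_mul_left]
  apply congrArg Multiset.sum
  apply Multiset.map_congr rfl
  intro t _
  simp [Multiset.prod_cons]

lemma esymm_one' (s : Multiset R) : s.esymm 1 = s.sum := by
  rw [Multiset.esymm, Multiset.powersetCard_one, Multiset.map_map]
  have : Multiset.map (Multiset.prod ∘ singleton) s = Multiset.map id s :=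
    Multiset.map_congr rfl (by intro a _; simp)
  rw [this, Multiset.map_id]

lemma newton2 (s : Multiset R) : s.sum ^ 2 = (s.map (· ^ 2)).sum + 2 * s.esymm 2 := by
  induction s using Multiset.induction_on with
  | empty => simp [Multiset.esymm, Multiset.powersetCard_zero_right]
  | cons a s ih =>
    rw [Multiset.sum_cons, Multiset.map_cons, Multiset.sum_cons, esymm_cons, esymm_one']
    ring_nf
    ring_nf at ih
    linear_combination ih

lemma esymm_map_hom (f : R →+* S) (s : Multiset R) (k : ℕ) :
    (s.map f).esymm k = f (s.esymm k) := by
  rw [Multiset.esymm, Multiset.esymm, Multiset.powersetCard_map, Multiset.map_map]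
  rw [map_multiset_sum, Multiset.map_map]
  apply congrArg Multiset.sum
  apply Multiset.map_congr rfl
  intro t _
  simp [map_multiset_prod]
end esymm

lemma coeff_nonpos_of_hyperbolic (p : ℝ[X]) (hp : p ≠ 0) (hlc : 0 < p.leadingCoeff)
    (hdeg : 2 ≤ p.natDegree) (h1 : p.coeff (p.natDegree - 1) = 0) (hyp : Hyperbolic p) :
    p.coeff (p.natDegree - 2) ≤ 0 := by
  set P := p.map (algebraMap ℝ ℂ) with hPdef
  have hPne : P ≠ 0 := map_ne_zero' hp
  have hPd : P.natDegree = p.natDegree := natDegree_map' p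
  have hsplit : P.Splits := IsAlgClosed.splits P
  have hcard : Multiset.card P.roots = P.natDegree := splits_iff_card_roots.mp hsplit
  set t : Multiset ℝ := P.roots.map Complex.re with ht
  have hst : P.roots = t.map (algebraMap ℝ ℂ) := by
    rw [ht, Multiset.map_map]
    symm
    refine (Multiset.map_congr rfl ?_).trans (Multiset.map_id _)
    intro z hz
    refine Complex.ext (by simp) ?_
    simpa using (hyp z hz).symm
  have hlcP : P.leadingCoeff = (p.leadingCoeff : ℂ) := by
    rw [hPdef, leadingCoeff_map_of_leadingCoeff_ne_zero]
    · exact congrFun Complex.coe_algebraMap _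
    · exact (map_ne_zero_iff _ (algebraMap ℝ ℂ).injective).mpr
        (leadingCoeff_ne_zero.mpr hp)
  -- coefficient n-1
  have hc1 := Polynomial.coeff_eq_esymm_roots_of_card hcard
    (k := P.natDegree - 1) (by omega)
  have he1 : P.natDegree - (P.natDegree - 1) = 1 := by omega
  rw [he1] at hc1
  have hcoeff1 : P.coeff (P.natDegree - 1) = ((p.coeff (p.natDegree - 1) : ℂ)) := by
    rw [hPdef, coeff_map, hPd]
    exact congrFun Complex.coe_algebraMap _
  rw [hcoeff1, h1, Complex.ofReal_zero] at hc1
  have hsum : t.sum = 0 := by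
    have : P.roots.esymm 1 = 0 := by
      have hlcne : P.leadingCoeff ≠ 0 := leadingCoeff_ne_zero.mpr hPne
      field_simp at hc1
      rcases mul_eq_zero.mp (neg_eq_zero.mp hc1.symm) with h | h
      · exact absurd h hlcne
      · exact h
    rw [hst, esymm_map_hom (algebraMap ℝ ℂ), esymm_one',
      Complex.coe_algebraMap] at this
    exact_mod_cast this
  -- coefficient n-2
  have hc2 := Polynomial.coeff_eq_esymm_roots_of_card hcard
    (k := P.natDegree - 2) (by omega)
  have he2 : P.natDegree - (P.natDegree - 2) = 2 := by omega
  rw [he2] at hc2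
  have hcoeff2 : P.coeff (P.natDegree - 2) = ((p.coeff (p.natDegree - 2) : ℂ)) := by
    rw [hPdef, coeff_map, hPd]
    exact congrFun Complex.coe_algebraMap _
  have hesymm2 : P.roots.esymm 2 = ((t.esymm 2 : ℝ) : ℂ) := by
    rw [hst, esymm_map_hom (algebraMap ℝ ℂ)]
    exact congrFun Complex.coe_algebraMap _
  rw [hcoeff2, hesymm2, hlcP] at hc2
  have hreal : p.coeff (p.natDegree - 2) = p.leadingCoeff * t.esymm 2 := by
    have := hc2
    rw [show ((-1 : ℂ)) ^ 2 = 1 by norm_num, mul_one] at this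
    exact_mod_cast this
  have hn2 : t.esymm 2 ≤ 0 := by
    have hnewton := newton2 t
    rw [hsum] at hnewton
    have hsq : (0:ℝ) ≤ (t.map (· ^ 2)).sum := by
      apply Multiset.sum_nonneg
      intro y hy
      rw [Multiset.mem_map] at hy
      obtain ⟨r, _, rfl⟩ := hy
      positivity
    nlinarith
  exact mul_nonpos_of_nonneg_of_nonpos (le_of_lt hlc) hn2 |>.trans_eq' hreal.symm


lemma factorization_of_roots (p : ℝ[X]) (hp : p ≠ 0) {d : ℕ}
    (hd : p.natDegree = d) (x : Fin d → ℝ) (hinj : Function.Injective x)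
    (hroot : ∀ i, p.eval (x i) = 0) :
    p = C p.leadingCoeff * ∏ i : Fin d, (X - C (x i)) := by
  classical
  have hm : (Finset.univ.val.map x).Nodup :=
    Multiset.Nodup.map hinj Finset.univ.nodup
  have hsub : (Finset.univ.val.map x) ⊆ p.roots := by
    intro r hr
    rw [Multiset.mem_map] at hr
    obtain ⟨i, _, rfl⟩ := hr
    rw [mem_roots hp]
    exact hroot i
  have hle : (Finset.univ.val.map x) ≤ p.roots :=
    (Multiset.le_iff_subset hm).mpr hsub
  have hcard : Multiset.card p.roots ≤ d := hd ▸ p.card_roots'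
  have heq : p.roots = Finset.univ.val.map x := by
    symm
    apply Multiset.eq_of_le_of_card_le hle
    rw [Multiset.card_map]
    simpa using hcard
  have hcard' : Multiset.card p.roots = p.natDegree := by
    rw [heq, Multiset.card_map, hd]; simp
  conv_lhs => rw [← C_leadingCoeff_mul_prod_multiset_X_sub_C hcard']
  congr 1
  rw [heq, Multiset.map_map]
  rfl

lemma ivt_root (p : ℝ[X]) (a b : ℝ) (hab : a < b) (h : p.eval a * p.eval b < 0) :
    ∃ c ∈ Set.Ioo a b, p.eval c = 0 := by
  rcases mul_neg_iff.mp h with ⟨ha, hb⟩ | ⟨ha, hb⟩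
  · obtain ⟨c, hc, hc'⟩ := intermediate_value_Ioo' (le_of_lt hab)
      (p.continuous.continuousOn) (Set.mem_Ioo.mpr ⟨hb, ha⟩)
    exact ⟨c, hc, hc'⟩
  · obtain ⟨c, hc, hc'⟩ := intermediate_value_Ioo (le_of_lt hab)
      (p.continuous.continuousOn) (Set.mem_Ioo.mpr ⟨ha, hb⟩)
    exact ⟨c, hc, hc'⟩

lemma exists_pos_hyperbolic {n : ℕ} (hn : 2 ≤ n) :
    ∃ b : ℝ, 0 < b ∧ Hyperbolic (legendre n + C b * legendre (n - 2)) := by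
  classical
  obtain ⟨x, hmono, _, hroot0⟩ := exists_roots n n le_rfl
  have hinj : Function.Injective x := hmono.injective
  set p := legendre n with hpdef
  have hd : p.natDegree = n := legendre_natDegree n
  have hroot : ∀ i, p.eval (x i) = 0 := by
    intro i
    rw [hpdef, legendre, eval_mul, hroot0 i, mul_zero]
  have hfac := factorization_of_roots p (legendre_ne_zero n) hd x hinj hroot
  -- minimal gap
  set S : Finset (Fin n × Fin n) := Finset.univ.filter (fun pr => pr.1 ≠ pr.2) with hS
  have hSne : S.Nonempty := by
    refine ⟨(⟨0, by omega⟩, ⟨1, by omega⟩), ?_⟩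
    rw [hS, Finset.mem_filter]
    refine ⟨Finset.mem_univ _, ?_⟩
    intro h
    have : (0:ℕ) = 1 := congrArg Fin.val h
    omega
  set δ : ℝ := (S.inf' hSne fun pr => |x pr.1 - x pr.2|) / 2 with hδdef
  have hδpos : 0 < δ := by
    rw [hδdef]
    have : 0 < S.inf' hSne fun pr => |x pr.1 - x pr.2| := by
      rw [Finset.lt_inf'_iff]
      intro pr hpr
      rw [hS, Finset.mem_filter] at hpr
      exact abs_pos.mpr (sub_ne_zero.mpr (fun h => hpr.2 (hinj h)))
    linarith
  have hgap : ∀ i j : Fin n, i ≠ j → 2 * δ ≤ |x i - x j| := by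
    intro i j hij
    have : (S.inf' hSne fun pr => |x pr.1 - x pr.2|) ≤ |x i - x j| :=
      Finset.inf'_le (b := (i, j)) _
        (by rw [hS, Finset.mem_filter]; exact ⟨Finset.mem_univ _, hij⟩)
    rw [hδdef]; linarith
  -- sign change of p on the small intervals
  have hsign : ∀ i : Fin n, p.eval (x i - δ) * p.eval (x i + δ) < 0 := by
    intro i
    have he1 : p.eval (x i - δ) = p.leadingCoeff * ∏ j : Fin n, (x i - δ - x j) := by
      conv_lhs => rw [hfac]
      rw [eval_mul, eval_C, eval_prod]
      simp
    have he2 : p.eval (x i + δ) = p.leadingCoeff * ∏ j : Fin n, (x i + δ - x j) := by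
      conv_lhs => rw [hfac]
      rw [eval_mul, eval_C, eval_prod]
      simp
    rw [he1, he2]
    have hprod : (∏ j : Fin n, (x i - δ - x j)) * (∏ j : Fin n, (x i + δ - x j))
        = ∏ j : Fin n, ((x i - x j) ^ 2 - δ ^ 2) := by
      rw [← Finset.prod_mul_distrib]
      apply Finset.prod_congr rfl
      intro j _
      ring
    have hneg : (∏ j : Fin n, ((x i - x j) ^ 2 - δ ^ 2)) < 0 := by
      rw [← Finset.mul_prod_erase Finset.univ _ (Finset.mem_univ i)]
      have h1 : (x i - x i) ^ 2 - δ ^ 2 < 0 := by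
        simp
        positivity
      have h2 : 0 < ∏ j ∈ Finset.univ.erase i, ((x i - x j) ^ 2 - δ ^ 2) := by
        apply Finset.prod_pos
        intro j hj
        have hji : i ≠ j := fun h => (Finset.mem_erase.mp hj).1 h.symm
        have := hgap i j hji
        have habs : |x i - x j| ^ 2 = (x i - x j) ^ 2 := sq_abs _
        nlinarith
      exact mul_neg_of_neg_of_pos h1 h2
    have hlc := legendre_leadingCoeff_pos n
    calc p.leadingCoeff * (∏ j : Fin n, (x i - δ - x j))
          * (p.leadingCoeff * ∏ j : Fin n, (x i + δ - x j))
        = p.leadingCoeff ^ 2 * ((∏ j : Fin n, (x i - δ - x j))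
          * (∏ j : Fin n, (x i + δ - x j))) := by ring
      _ = p.leadingCoeff ^ 2 * ∏ j : Fin n, ((x i - x j) ^ 2 - δ ^ 2) := by rw [hprod]
      _ < 0 := mul_neg_of_pos_of_neg (by positivity) hneg
  -- openness argument in b
  set L := legendre (n - 2) with hL
  set F : Fin n → ℝ → ℝ := fun i b =>
    (p.eval (x i - δ) + b * L.eval (x i - δ)) * (p.eval (x i + δ) + b * L.eval (x i + δ))
    with hF
  have hFcont : ∀ i, Continuous (F i) := by
    intro i
    apply Continuous.mul <;> exact (continuous_const.add (continuous_id.mul continuous_const))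
  have hO : IsOpen (⋂ i : Fin n, {b : ℝ | F i b < 0}) :=
    isOpen_iInter_of_finite (fun i => isOpen_lt (hFcont i) continuous_const)
  have h0 : (0:ℝ) ∈ ⋂ i : Fin n, {b : ℝ | F i b < 0} := by
    rw [Set.mem_iInter]
    intro i
    simp only [Set.mem_setOf_eq, hF, zero_mul, add_zero]
    exact hsign i
  obtain ⟨ε, hεpos, hball⟩ := Metric.isOpen_iff.mp hO 0 h0
  refine ⟨ε / 2, by linarith, ?_⟩
  have hmem : (ε/2) ∈ ⋂ i : Fin n, {b : ℝ | F i b < 0} := by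
    apply hball
    rw [Metric.mem_ball, Real.dist_eq]
    rw [abs_of_pos (by linarith : (0:ℝ) < ε/2 - 0) ]
    linarith
  set b := ε / 2 with hb
  have hFb : ∀ i, F i b < 0 := by
    intro i
    exact Set.mem_iInter.mp hmem i
  -- roots of the perturbed polynomial
  set q := legendre n + C b * L with hq
  have hqF : ∀ i : Fin n, q.eval (x i - δ) * q.eval (x i + δ) < 0 := by
    intro i
    have : ∀ y : ℝ, q.eval y = p.eval y + b * L.eval y := by
      intro y
      rw [hq, eval_add, eval_mul, eval_C, hpdef]
    rw [this, this]
    exact hFb i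
  have key : ∀ i : Fin n, ∃ c ∈ Set.Ioo (x i - δ) (x i + δ), q.eval c = 0 := by
    intro i
    exact ivt_root q _ _ (by linarith) (hqF i)
  choose z hz hzr using key
  have hzinj : Function.Injective z := by
    intro i j hij
    by_contra hne
    have h2δ := hgap i j hne
    have hi1 := (hz i).1
    have hi2 := (hz i).2
    have hj1 := (hz j).1
    have hj2 := (hz j).2
    rw [hij] at hi1 hi2
    cases abs_cases (x i - x j) with
    | inl h => rw [h.1] at h2δ; linarith
    | inr h => rw [h.1] at h2δ; linarith
  exact hyperbolic_of_distinct_real_roots' q (P_ne_zero b hn) (P_natDegree b hn) z hzinj hzr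


lemma isClosed_E {n : ℕ} (hn : 2 ≤ n) :
    IsClosed {b : ℝ | Hyperbolic (legendre n + C b * legendre (n - 2))} := by
  have hset : {b : ℝ | Hyperbolic (legendre n + C b * legendre (n - 2))} =
      ⋂ z : ℂ, {b : ℝ | |(legendre n).leadingCoeff| * |z.im| ^ n ≤
        ‖((legendre n).map (algebraMap ℝ ℂ)).eval z
          + (b : ℂ) * ((legendre (n-2)).map (algebraMap ℝ ℂ)).eval z‖} := by
    ext b
    rw [Set.mem_setOf_eq, hyperbolic_iff _ (P_ne_zero b hn), Set.mem_iInter]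
    have hrw : ∀ z : ℂ, ((legendre n + C b * legendre (n - 2)).map
        (algebraMap ℝ ℂ)).eval z = ((legendre n).map (algebraMap ℝ ℂ)).eval z
          + (b : ℂ) * ((legendre (n-2)).map (algebraMap ℝ ℂ)).eval z := by
      intro z
      rw [Polynomial.map_add, Polynomial.map_mul, map_C, eval_add, eval_mul, eval_C]
      norm_num
    constructor
    · intro h z
      rw [Set.mem_setOf_eq, ← hrw z]
      have := h z
      rwa [P_leadingCoeff b hn, P_natDegree b hn] at this
    · intro h z
      rw [P_leadingCoeff b hn, P_natDegree b hn, hrw z]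
      exact h z
  rw [hset]
  apply isClosed_iInter
  intro z
  apply isClosed_le continuous_const
  apply Continuous.comp continuous_norm
  exact continuous_const.add ((Complex.continuous_ofReal).mul continuous_const)

theorem stmt_6 (n : ℕ) (hn : 2 ≤ n) :
    ∃ β : ℝ, 0 < β ∧ Hyperbolic (legendre n + C β * legendre (n - 2)) ∧
      ∀ b : ℝ, Hyperbolic (legendre n + C b * legendre (n - 2)) → b ≤ β := by
  set E := {b : ℝ | Hyperbolic (legendre n + C b * legendre (n - 2))} with hE
  obtain ⟨b0, hb0pos, hb0⟩ := exists_pos_hyperbolic hn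
  have hne : E.Nonempty := ⟨b0, hb0⟩
  have hbdd : BddAbove E := by
    refine ⟨-(legendre n).coeff (n-2) / (legendre (n-2)).leadingCoeff, ?_⟩
    intro b hb
    have hlcL : 0 < (legendre (n-2)).leadingCoeff := legendre_leadingCoeff_pos (n-2)
    have hL : (legendre (n-2)).coeff (n-2) = (legendre (n-2)).leadingCoeff := by
      rw [leadingCoeff, legendre_natDegree]
    have h1 : (legendre n + C b * legendre (n - 2)).coeff (n - 1) = 0 := by
      rw [P_coeff, legendre_coeff_sub_one n (by omega),
        coeff_eq_zero_of_natDegree_lt (by rw [legendre_natDegree]; omega), mul_zero, add_zero]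
    have h2 := coeff_nonpos_of_hyperbolic _ (P_ne_zero b hn)
      (by rw [P_leadingCoeff b hn]; exact legendre_leadingCoeff_pos n)
      (by rw [P_natDegree b hn]; omega)
      (by rwa [P_natDegree b hn]) hb
    rw [P_natDegree b hn, P_coeff, hL] at h2
    rw [le_div_iff₀ hlcL]
    linarith
  set β := sSup E with hβ
  have hβmem : β ∈ E := (isClosed_E hn).csSup_mem hne hbdd
  refine ⟨β, ?_, hβmem, ?_⟩
  · exact lt_of_lt_of_le hb0pos (le_csSup hbdd hb0)
  · intro b hb
    exact le_csSup hbdd hb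
end esymm
end

section
/- For every real number α, the sequence (k + α)_{k=0}^∞ is not a Legendre multiplier sequence. -/
open Polynomial

/-! ### Auxiliary lemmas -/

lemma legendre_zero' : legendre 0 = 1 := by simp [legendre]

lemma legendre_one' : legendre 1 = X := by
  simp [legendre, ← mul_assoc, ← C_mul]
  rw [show (1:ℝ[X]) + 1 = C 2 by rw [← C_1, ← C_add]; norm_num, ← C_mul]; norm_num

lemma legendre_two' : legendre 2 = C (3/2) * X^2 - C (1/2) := by
  have h : ((X:ℝ[X])^2 - 1)^2 = X^4 - C 2 * X^2 + 1 := by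
    simp only [map_ofNat]; ring
  have h1 : derivative ((X:ℝ[X])^4 - C 2 * X^2 + 1) = C 4 * X^3 - C 4 * X := by
    simp [derivative_X_pow]
    simp only [map_ofNat]
    ring
  have h2 : derivative (C (4:ℝ) * X^3 - C 4 * X) = C 12 * X^2 - C 4 := by
    simp [derivative_X_pow]
    simp only [map_ofNat]
    ring
  rw [legendre, h, show (derivative^[2] : ℝ[X] → ℝ[X]) = derivative^[1+1] from rfl, Function.iterate_succ_apply',
    Function.iterate_succ_apply', Function.iterate_zero_apply, h1, h2]
  rw [mul_sub, ← mul_assoc, ← C_mul, ← C_mul]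
  norm_num

lemma legendre_three' : legendre 3 = C (5/2) * X^3 - C (3/2) * X := by
  have h : ((X:ℝ[X])^2 - 1)^3 = X^6 - C 3 * X^4 + C 3 * X^2 - 1 := by
    simp only [map_ofNat]; ring
  have h1 : derivative ((X:ℝ[X])^6 - C 3 * X^4 + C 3 * X^2 - 1)
      = C 6 * X^5 - C 12 * X^3 + C 6 * X := by
    simp [derivative_X_pow]; simp only [map_ofNat]; ring
  have h2 : derivative (C (6:ℝ) * X^5 - C 12 * X^3 + C 6 * X)
      = C 30 * X^4 - C 36 * X^2 + C 6 := by
    simp [derivative_X_pow]; simp only [map_ofNat]; ring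
  have h3 : derivative (C (30:ℝ) * X^4 - C 36 * X^2 + C 6)
      = C 120 * X^3 - C 72 * X := by
    simp [derivative_X_pow]; simp only [map_ofNat]; ring
  have hit : derivative^[3] (((X:ℝ[X])^2 - 1)^3) = C 120 * X^3 - C 72 * X := by
    rw [h, show (3:ℕ) = 2 + 1 from rfl, Function.iterate_succ_apply',
      show (derivative^[2] : ℝ[X] → ℝ[X]) = derivative^[1+1] from rfl, Function.iterate_succ_apply',
      Function.iterate_one, h1, h2, h3]
  rw [legendre, hit]
  rw [mul_sub, ← mul_assoc, ← mul_assoc, ← C_mul, ← C_mul]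
  norm_num [Nat.factorial, ← C_mul]

/-- A real cubic with negative discriminant is not hyperbolic. -/
lemma not_hyp_cubic (A B Cc D : ℝ) (hA : A ≠ 0)
    (hd : 18*A*B*Cc*D - 4*B^3*D + B^2*Cc^2 - 4*A*Cc^3 - 27*A^2*D^2 < 0) :
    ¬ Hyperbolic (C A * X^3 + C B * X^2 + C Cc * X + C D) := by
  intro h
  set q : ℝ[X] := C A * X^3 + C B * X^2 + C Cc * X + C D with hq
  set Q : ℂ[X] := q.map (algebraMap ℝ ℂ) with hQ
  have hmap : Q = C (A:ℂ) * X^3 + C (B:ℂ) * X^2 + C (Cc:ℂ) * X + C (D:ℂ) := by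
    simp [hQ, hq, Polynomial.map_add, Polynomial.map_mul, Polynomial.map_pow]
  have hdeg : Q.natDegree = 3 := by
    rw [hmap]; exact natDegree_cubic (by exact_mod_cast hA)
  have hcard : Multiset.card Q.roots = Q.natDegree :=
    splits_iff_card_roots.mp (IsAlgClosed.splits Q)
  have hprod := C_leadingCoeff_mul_prod_multiset_X_sub_C hcard
  have hlead : Q.leadingCoeff = (A:ℂ) := by
    rw [hmap]; exact leadingCoeff_cubic (by exact_mod_cast hA)
  obtain ⟨z1, z2, z3, hz⟩ := Multiset.card_eq_three.mp (hcard.trans hdeg)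
  have h1 : z1.im = 0 := h z1 (by rw [← hQ, hz]; simp)
  have h2 : z2.im = 0 := h z2 (by rw [← hQ, hz]; simp)
  have h3 : z3.im = 0 := h z3 (by rw [← hQ, hz]; simp)
  set r1 := z1.re; set r2 := z2.re; set r3 := z3.re
  have e1 : z1 = (r1:ℂ) := Complex.ext rfl h1
  have e2 : z2 = (r2:ℂ) := Complex.ext rfl h2
  have e3 : z3 = (r3:ℂ) := Complex.ext rfl h3
  have hfac2 : Q = C (A:ℂ) * ((X - C (r1:ℂ)) * (X - C (r2:ℂ)) * (X - C (r3:ℂ))) := by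
    rw [← hprod, hz, hlead, e1, e2, e3]
    simp only [Multiset.insert_eq_cons, Multiset.map_cons, Multiset.map_singleton,
      Multiset.prod_cons, Multiset.prod_singleton]
    ring
  have hfac : Q = (C A * ((X - C r1) * (X - C r2) * (X - C r3))).map (algebraMap ℝ ℂ) := by
    rw [hfac2]; simp [Polynomial.map_mul, Polynomial.map_sub]
  have hinj : Function.Injective (Polynomial.map (algebraMap ℝ ℂ)) :=
    Polynomial.map_injective _ (algebraMap ℝ ℂ).injective
  have hfacR : q = C A * ((X - C r1) * (X - C r2) * (X - C r3)) := hinj (hQ ▸ hfac)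
  have hexp : C A * ((X - C r1) * (X - C r2) * (X - C r3))
      = C A * X^3 + C (-A*(r1+r2+r3)) * X^2 + C (A*(r1*r2+r1*r3+r2*r3)) * X
        + C (-A*(r1*r2*r3)) := by
    simp only [map_mul, map_add, map_neg]
    ring
  rw [hexp, hq] at hfacR
  have cB : B = -A*(r1+r2+r3) := by
    have := congrArg (fun p => Polynomial.coeff p 2) hfacR
    simp only [coeff_add, coeff_C_mul, coeff_X_pow, coeff_X, coeff_C] at this
    norm_num at this; linarith
  have cC : Cc = A*(r1*r2+r1*r3+r2*r3) := by
    have := congrArg (fun p => Polynomial.coeff p 1) hfacR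
    simp only [coeff_add, coeff_C_mul, coeff_X_pow, coeff_X, coeff_C] at this
    norm_num at this; linarith
  have cD : D = -A*(r1*r2*r3) := by
    have := congrArg (fun p => Polynomial.coeff p 0) hfacR
    simp only [coeff_add, coeff_C_mul, coeff_X_pow, coeff_X, coeff_C] at this
    norm_num at this; linarith
  have key : 18*A*B*Cc*D - 4*B^3*D + B^2*Cc^2 - 4*A*Cc^3 - 27*A^2*D^2
      = (A^2*(r1-r2)*(r1-r3)*(r2-r3))^2 := by
    rw [cB, cC, cD]; ring
  nlinarith [sq_nonneg (A^2*(r1-r2)*(r1-r3)*(r2-r3))]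

/-- A real quadratic with negative discriminant is not hyperbolic. -/
lemma not_hyp_quad (B Cc D : ℝ) (hB : B ≠ 0) (hd : Cc^2 - 4*B*D < 0) :
    ¬ Hyperbolic (C B * X^2 + C Cc * X + C D) := by
  intro h
  set q : ℝ[X] := C B * X^2 + C Cc * X + C D with hq
  set Q : ℂ[X] := q.map (algebraMap ℝ ℂ) with hQ
  have hmap : Q = C (B:ℂ) * X^2 + C (Cc:ℂ) * X + C (D:ℂ) := by
    simp [hQ, hq, Polynomial.map_add, Polynomial.map_mul, Polynomial.map_pow]
  have hdeg : Q.natDegree = 2 := by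
    rw [hmap]; exact natDegree_quadratic (by exact_mod_cast hB)
  have hcard : Multiset.card Q.roots = Q.natDegree :=
    splits_iff_card_roots.mp (IsAlgClosed.splits Q)
  have hprod := C_leadingCoeff_mul_prod_multiset_X_sub_C hcard
  have hlead : Q.leadingCoeff = (B:ℂ) := by
    rw [hmap]; exact leadingCoeff_quadratic (by exact_mod_cast hB)
  obtain ⟨z1, z2, hz⟩ := Multiset.card_eq_two.mp (hcard.trans hdeg)
  have h1 : z1.im = 0 := h z1 (by rw [← hQ, hz]; simp)
  have h2 : z2.im = 0 := h z2 (by rw [← hQ, hz]; simp)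
  set r1 := z1.re; set r2 := z2.re
  have e1 : z1 = (r1:ℂ) := Complex.ext rfl h1
  have e2 : z2 = (r2:ℂ) := Complex.ext rfl h2
  have hfac2 : Q = C (B:ℂ) * ((X - C (r1:ℂ)) * (X - C (r2:ℂ))) := by
    rw [← hprod, hz, hlead, e1, e2]
    simp only [Multiset.insert_eq_cons, Multiset.map_cons, Multiset.map_singleton,
      Multiset.prod_cons, Multiset.prod_singleton]
  have hfac : Q = (C B * ((X - C r1) * (X - C r2))).map (algebraMap ℝ ℂ) := by
    rw [hfac2]; simp [Polynomial.map_mul, Polynomial.map_sub]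
  have hinj : Function.Injective (Polynomial.map (algebraMap ℝ ℂ)) :=
    Polynomial.map_injective _ (algebraMap ℝ ℂ).injective
  have hfacR : q = C B * ((X - C r1) * (X - C r2)) := hinj (hQ ▸ hfac)
  have hexp : C B * ((X - C r1) * (X - C r2))
      = C B * X^2 + C (-B*(r1+r2)) * X + C (B*(r1*r2)) := by
    simp only [map_mul, map_add, map_neg]
    ring
  rw [hexp, hq] at hfacR
  have cC : Cc = -B*(r1+r2) := by
    have := congrArg (fun p => Polynomial.coeff p 1) hfacR
    simp only [coeff_add, coeff_C_mul, coeff_X_pow, coeff_X, coeff_C] at this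
    norm_num at this; linarith
  have cD : D = B*(r1*r2) := by
    have := congrArg (fun p => Polynomial.coeff p 0) hfacR
    simp only [coeff_add, coeff_C_mul, coeff_X_pow, coeff_X, coeff_C] at this
    norm_num at this; linarith
  have key : Cc^2 - 4*B*D = (B*(r1-r2))^2 := by rw [cC, cD]; ring
  nlinarith [sq_nonneg (B*(r1-r2))]

/-- The coefficient family expanding `5(x+1)³` in the Legendre basis. -/
noncomputable def srcCoeff : ℕ → ℝ :=
  fun k => if k = 0 then 10 else if k = 1 then 18 else if k = 2 then 10 else 2

lemma src_sum_eq : (∑ k ∈ Finset.range 4, C (srcCoeff k) * legendre k) = C 5 * (1 + X)^3 := by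
  rw [Finset.sum_range_succ, Finset.sum_range_succ, Finset.sum_range_succ,
    Finset.sum_range_succ, Finset.sum_range_zero, legendre_zero', legendre_one',
    legendre_two', legendre_three']
  apply Polynomial.funext
  intro x
  simp [srcCoeff]
  ring

lemma img_sum_eq (α : ℝ) :
    (∑ k ∈ Finset.range 4, C (((k:ℝ) + α) * srcCoeff k) * legendre k)
    = C (5*(3+α)) * X^3 + C (15*(2+α)) * X^2 + C (9+15*α) * X + C (5*α-10) := by
  rw [Finset.sum_range_succ, Finset.sum_range_succ, Finset.sum_range_succ,
    Finset.sum_range_succ, Finset.sum_range_zero, legendre_zero', legendre_one',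
    legendre_two', legendre_three']
  apply Polynomial.funext
  intro x
  simp [srcCoeff]
  ring

lemma src_hyperbolic : Hyperbolic (C (5:ℝ) * (1 + X)^3) := by
  intro z hz
  rw [Polynomial.map_mul, Polynomial.map_pow, Polynomial.map_add, map_C,
    Polynomial.map_one, Polynomial.map_X] at hz
  have hr := isRoot_of_mem_roots hz
  simp only [IsRoot, eval_mul, eval_pow, eval_add, eval_C, eval_one, eval_X] at hr
  have h5 : (algebraMap ℝ ℂ) 5 ≠ 0 := by norm_num
  have h3 : (1 + z)^3 = 0 := by
    rcases mul_eq_zero.mp hr with h | h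
    · exact absurd h h5
    · exact h
  have h1 : 1 + z = 0 := pow_eq_zero_iff (by norm_num) |>.mp h3
  have : z = -1 := by linear_combination h1
  rw [this]; simp

theorem stmt_11 (α : ℝ) : ¬ IsLegendreMS (fun k => (k : ℝ) + α) := by
  intro h
  have himg := h 4 srcCoeff (src_sum_eq ▸ src_hyperbolic)
  rw [img_sum_eq α] at himg
  by_cases hα : α = -3
  · subst hα
    have heq : C (5*(3+(-3:ℝ))) * X^3 + C (15*(2+(-3:ℝ))) * X^2 + C (9+15*(-3:ℝ)) * X
        + C (5*(-3:ℝ)-10) = C (-15:ℝ) * X^2 + C (-36:ℝ) * X + C (-25:ℝ) := by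
      norm_num
    rw [heq] at himg
    exact not_hyp_quad (-15) (-36) (-25) (by norm_num) (by norm_num) himg
  · refine not_hyp_cubic (5*(3+α)) (15*(2+α)) (9+15*α) (5*α-10) ?_ ?_ himg
    · intro hc
      apply hα
      linarith [hc]
    · nlinarith [sq_nonneg (α + 43/10), sq_nonneg α]
end
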